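/- arXiv:2412.18184 — 6 statements merged into one kernel-verified Lean document; each statement's English description precedes it below -/
import Mathlib

section
/- If A and B are n×n positive semi-definite matrices with A ⪯ B (i.e., B − A is positive semi-definite), then the centered Gaussian N(0, A) is less than N(0, B) in the convex order. -/
open MeasureTheory ProbabilityTheory Real

noncomputable section

/-- Convex order between two laws on `Fin n → ℝ`. -/
def ConvexOrder {n : ℕ} (μ ν : Measure (Fin n → ℝ)) : Prop :=
  ∀ f : (Fin n → ℝ) → ℝ, ConvexOn ℝ Set.univ f →
    Integrable f μ → Integrable f ν →
    ∫ x, f x ∂μ ≤ ∫ x, f x ∂ν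

/-- Standard Gaussian on `Fin n → ℝ` (iid standard normal coordinates). -/
def stdGaussianPi (n : ℕ) : Measure (Fin n → ℝ) :=
  Measure.pi fun _ => gaussianReal 0 1

/-- The Gaussian `N(m, A Aᵀ)` on `ℝⁿ`, realized as the law of `m + A g` with `g`
standard Gaussian. -/
def gaussianVec {n : ℕ} (m : Fin n → ℝ) (A : Matrix (Fin n) (Fin n) ℝ) :
    Measure (Fin n → ℝ) :=
  (stdGaussianPi n).map fun x => m + A.mulVec x

section Aux

open Matrix
open scoped ENNReal NNReal


lemma lintegral_fin_pi_prod {n : ℕ} {E : Fin n → Type*} [∀ i, MeasurableSpace (E i)]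
    (μ : ∀ i, Measure (E i)) [∀ i, SigmaFinite (μ i)]
    (g : ∀ i, E i → ℝ≥0∞) (hg : ∀ i, Measurable (g i)) :
    ∫⁻ x, ∏ i, g i (x i) ∂Measure.pi μ = ∏ i, ∫⁻ t, g i t ∂μ i := by
  induction n with
  | zero => simp
  | succ n ih =>
    have mp := measurePreserving_piFinSuccAbove μ 0
    have hG : Measurable fun z : E 0 × (∀ i : Fin n, E ((0 : Fin (n+1)).succAbove i)) =>
        g 0 z.1 * ∏ i, g ((0 : Fin (n+1)).succAbove i) (z.2 i) := by
      exact ((hg 0).comp measurable_fst).mul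
        (Finset.measurable_prod _ fun i _ => (hg _).comp ((measurable_pi_apply i).comp measurable_snd))
    calc ∫⁻ x, ∏ i, g i (x i) ∂Measure.pi μ
        = ∫⁻ z, g 0 z.1 * ∏ i, g ((0:Fin (n+1)).succAbove i) (z.2 i)
            ∂((μ 0).prod (Measure.pi fun i => μ ((0:Fin (n+1)).succAbove i))) := by
          rw [← mp.lintegral_comp hG]
          congr 1
          ext x
          rw [Fin.prod_univ_succAbove (fun i => g i (x i)) 0]
          rfl
      _ = (∫⁻ t, g 0 t ∂μ 0) * ∏ i : Fin n, ∫⁻ t, g ((0:Fin (n+1)).succAbove i) t ∂μ _ := by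
          rw [lintegral_prod_mul (f := g 0)
            (g := fun y : (∀ i : Fin n, E ((0:Fin (n+1)).succAbove i)) =>
              ∏ i, g ((0:Fin (n+1)).succAbove i) (y i)) (hg 0).aemeasurable
            (Finset.measurable_prod _ fun i _ => (hg _).comp (measurable_pi_apply i)).aemeasurable]
          rw [ih _ _ (fun i => hg _)]
      _ = ∏ i, ∫⁻ t, g i t ∂μ i := (Fin.prod_univ_succAbove (fun i => ∫⁻ t, g i t ∂μ i) 0).symm

lemma lintegral_pi_prod {ι : Type*} [Fintype ι] {E : Type*} [MeasurableSpace E]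
    (μ : ι → Measure E) [∀ i, SigmaFinite (μ i)]
    (g : ι → E → ℝ≥0∞) (hg : ∀ i, Measurable (g i)) :
    ∫⁻ x, ∏ i, g i (x i) ∂Measure.pi μ = ∏ i, ∫⁻ t, g i t ∂μ i := by
  classical
  let e := (Fintype.equivFin ι).symm
  have mp := measurePreserving_piCongrLeft μ e
  have hG : Measurable fun x : ι → E => ∏ i, g i (x i) :=
    Finset.measurable_prod _ fun i _ => (hg i).comp (measurable_pi_apply i)
  rw [← mp.lintegral_comp hG]
  have : ∀ y : (i : Fin (Fintype.card ι)) → E,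
      (∏ i, g i ((MeasurableEquiv.piCongrLeft (fun _ => E) e) y i)) = ∏ j, g (e j) (y j) := by
    intro y
    rw [← e.prod_comp]
    refine Finset.prod_congr rfl fun j _ => ?_
    rw [MeasurableEquiv.coe_piCongrLeft, Equiv.piCongrLeft_apply_apply]
  simp_rw [this]
  rw [lintegral_fin_pi_prod _ _ (fun j => hg (e j)), ← e.prod_comp]

open scoped NNReal

lemma stdGaussian_eq_withDensity (ι : Type*) [Fintype ι] :
    (Measure.pi fun _ : ι => gaussianReal 0 1) =
      (volume : Measure (ι → ℝ)).withDensity fun x => ∏ i, gaussianPDF 0 1 (x i) := by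
  refine Measure.pi_eq fun s hs => ?_
  rw [withDensity_apply _ (MeasurableSet.univ_pi hs)]
  rw [show ((volume : Measure (ι → ℝ)).restrict (Set.pi Set.univ s))
      = Measure.pi (fun i : ι => volume.restrict (s i)) by
    rw [volume_pi]
    refine (Measure.pi_eq fun t ht => ?_).symm
    rw [Measure.restrict_apply (MeasurableSet.univ_pi ht), ← Set.pi_inter_distrib,
      Measure.pi_pi]
    exact Finset.prod_congr rfl fun i _ =>
      (Measure.restrict_apply (ht i)).symm]
  rw [lintegral_pi_prod (fun i : ι => volume.restrict (s i))
    (fun _ => gaussianPDF 0 1) (fun i => measurable_gaussianPDF 0 1)]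
  exact Finset.prod_congr rfl fun i _ => (gaussianReal_apply 0 one_ne_zero (s i)).symm

lemma sum_sq_mulVec {ι : Type*} [Fintype ι] [DecidableEq ι] (U : Matrix ι ι ℝ) (h : Uᵀ * U = 1) (x : ι → ℝ) :
    ∑ i, (U.mulVec x i)^2 = ∑ i, (x i)^2 := by
  have h1 : ∀ v : ι → ℝ, ∑ i, (v i)^2 = dotProduct v v := by
    intro v; simp [dotProduct, sq]
  rw [h1, h1, dotProduct_mulVec]
  have : Matrix.vecMul (U.mulVec x) U = x := by
    rw [show U.mulVec x = Matrix.vecMul x Uᵀ by rw [← Matrix.mulVec_transpose, Matrix.transpose_transpose],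
      Matrix.vecMul_vecMul, h, Matrix.vecMul_one]
  rw [this]

lemma prod_gaussianPDF_eq {ι : Type*} [Fintype ι] (y : ι → ℝ) :
    (∏ i, gaussianPDF 0 1 (y i)) =
      ENNReal.ofReal ((Real.sqrt (2*π))⁻¹ ^ (Fintype.card ι) * rexp (-(∑ i, (y i)^2)/2)) := by
  simp_rw [gaussianPDF]
  rw [← ENNReal.ofReal_prod_of_nonneg (fun i _ => gaussianPDFReal_nonneg 0 1 (y i))]
  congr 1
  simp only [gaussianPDFReal, NNReal.coe_one, mul_one, sub_zero]
  rw [Finset.prod_mul_distrib, Finset.prod_const, ← Real.exp_sum, Finset.card_univ]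
  congr 1
  rw [neg_div, ← Finset.sum_div]
  simp [neg_div]

lemma map_mulVec_orth {ι : Type*} [Fintype ι] [DecidableEq ι] (U : Matrix ι ι ℝ)
    (h : Uᵀ * U = 1) :
    (Measure.pi fun _ : ι => gaussianReal 0 1).map U.mulVec
      = Measure.pi fun _ : ι => gaussianReal 0 1 := by
  have hU2 : U * Uᵀ = 1 := mul_eq_one_comm.mp h
  have hdet : U.det ≠ 0 := by
    have hd := congrArg Matrix.det h
    rw [Matrix.det_mul, Matrix.det_transpose, Matrix.det_one] at hd
    intro h0; rw [h0, mul_zero] at hd; exact one_ne_zero hd.symm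
  have hcont : ∀ M : Matrix ι ι ℝ, Measurable (M.mulVec) := fun M =>
    (Matrix.mulVecLin M).continuous_of_finiteDimensional.measurable
  set ρ : (ι → ℝ) → ℝ≥0∞ := fun x => ∏ i, gaussianPDF 0 1 (x i) with hρdef
  have hρ : Measurable ρ :=
    Finset.measurable_prod _ fun i _ => (measurable_gaussianPDF 0 1).comp (measurable_pi_apply i)
  have hinv : ∀ x, ρ (U.mulVec x) = ρ x := by
    intro x
    rw [hρdef]
    simp only [prod_gaussianPDF_eq]
    rw [sum_sq_mulVec U h x]
  have hvol : (volume : Measure (ι → ℝ)).map U.mulVec = volume := by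
    have hd1 : LinearMap.det (Matrix.toLin' U) = U.det := LinearMap.det_toLin' U
    have := Real.map_linearMap_volume_pi_eq_smul_volume_pi (f := Matrix.toLin' U)
      (by rw [hd1]; exact hdet)
    have habs : |U.det⁻¹| = |U.det|⁻¹ := abs_inv _
    have hdetabs : |U.det| = 1 := by
      have hd := congrArg Matrix.det h
      rw [Matrix.det_mul, Matrix.det_transpose, Matrix.det_one] at hd
      rcases mul_self_eq_one_iff.mp hd with h1 | h1 <;> rw [h1] <;> norm_num
    rw [hd1, habs, hdetabs] at this
    simpa [show ⇑(Matrix.toLin' U) = U.mulVec from funext (Matrix.toLin'_apply U)] using this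
  calc (Measure.pi fun _ : ι => gaussianReal 0 1).map U.mulVec
      = ((volume : Measure (ι → ℝ)).withDensity ρ).map U.mulVec := by
        rw [stdGaussian_eq_withDensity]
    _ = ((volume : Measure (ι → ℝ)).map U.mulVec).withDensity ρ := by
        ext s hs
        rw [Measure.map_apply (hcont U) hs, withDensity_apply _ ((hcont U) hs),
          withDensity_apply _ hs, setLIntegral_map hs hρ (hcont U)]
        refine setLIntegral_congr_fun ((hcont U) hs) (fun x _ => ?_)
        exact (hinv x).symm
    _ = (volume : Measure (ι → ℝ)).withDensity ρ := by rw [hvol]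
    _ = Measure.pi fun _ : ι => gaussianReal 0 1 := (stdGaussian_eq_withDensity ι).symm

lemma dot_toEuclideanLin {n : ℕ} {ι : Type*} [Fintype ι] [DecidableEq ι]
    (P : Matrix (Fin n) ι ℝ) (x y : EuclideanSpace ℝ (Fin n)) :
    (inner ℝ (Matrix.toEuclideanLin Pᵀ x) (Matrix.toEuclideanLin Pᵀ y) : ℝ)
      = dotProduct (WithLp.equiv 2 _ x) ((P * Pᵀ).mulVec (WithLp.equiv 2 _ y)) := by
  simp only [PiLp.inner_apply, RCLike.inner_apply, conj_trivial,
    Matrix.ofLp_toEuclideanLin_apply]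
  rw [← Matrix.mulVec_mulVec, dotProduct_mulVec, ← Matrix.mulVec_transpose]
  exact dotProduct_comm _ _

lemma exists_orthogonal_of_mul_transpose_eq {n : ℕ} {ι : Type*} [Fintype ι] [DecidableEq ι]
    (M N : Matrix (Fin n) ι ℝ) (h : M * Mᵀ = N * Nᵀ) :
    ∃ U : Matrix ι ι ℝ, Uᵀ * U = 1 ∧ M = N * U := by
  classical
  set f : EuclideanSpace ℝ (Fin n) →ₗ[ℝ] EuclideanSpace ℝ ι := Matrix.toEuclideanLin Mᵀ with hf
  set g : EuclideanSpace ℝ (Fin n) →ₗ[ℝ] EuclideanSpace ℝ ι := Matrix.toEuclideanLin Nᵀ with hg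
  have hinner : ∀ x y, (inner ℝ (f x) (f y) : ℝ) = inner ℝ (g x) (g y) := by
    intro x y
    rw [hf, hg, dot_toEuclideanLin, dot_toEuclideanLin, h]
  have hnorm : ∀ x, ‖f x‖ = ‖g x‖ := by
    intro x
    have h2 : ‖f x‖ ^ 2 = ‖g x‖ ^ 2 := by
      rw [← real_inner_self_eq_norm_sq, ← real_inner_self_eq_norm_sq, hinner]
    nlinarith [norm_nonneg (f x), norm_nonneg (g x)]
  have hker : LinearMap.ker f ≤ LinearMap.ker g := by
    intro x hx
    rw [LinearMap.mem_ker] at hx ⊢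
    have := hnorm x
    rw [hx, norm_zero] at this
    exact norm_eq_zero.mp this.symm
  set q : (EuclideanSpace ℝ (Fin n) ⧸ LinearMap.ker f) →ₗ[ℝ] EuclideanSpace ℝ ι :=
    (LinearMap.ker f).liftQ g hker with hq
  set φ₀ : LinearMap.range f →ₗ[ℝ] EuclideanSpace ℝ ι :=
    q.comp f.quotKerEquivRange.symm.toLinearMap with hφ₀def
  have hφ₀ : ∀ x : EuclideanSpace ℝ (Fin n),
      φ₀ ⟨f x, LinearMap.mem_range_self f x⟩ = g x := by
    intro x
    have h1 : f.quotKerEquivRange (Submodule.Quotient.mk x)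
        = ⟨f x, LinearMap.mem_range_self f x⟩ := Subtype.ext (f.quotKerEquivRange_apply_mk x)
    have h2 : f.quotKerEquivRange.symm ⟨f x, LinearMap.mem_range_self f x⟩
        = Submodule.Quotient.mk x := by
      rw [← h1, LinearEquiv.symm_apply_apply]
    rw [hφ₀def, LinearMap.comp_apply, LinearEquiv.coe_toLinearMap, h2, hq,
      Submodule.liftQ_apply]
  have hφn : ∀ v : LinearMap.range f, ‖φ₀ v‖ = ‖v‖ := by
    rintro ⟨v, x, rfl⟩
    have : (⟨f x, ⟨x, rfl⟩⟩ : LinearMap.range f) = ⟨f x, LinearMap.mem_range_self f x⟩ := rfl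
    rw [this, hφ₀ x, Submodule.coe_norm]
    exact (hnorm x).symm
  set φ : LinearMap.range f →ₗᵢ[ℝ] EuclideanSpace ℝ ι := ⟨φ₀, hφn⟩ with hφdef
  set Ψ := φ.extend with hΨdef
  have hΨ : ∀ x, Ψ (f x) = g x := by
    intro x
    have h1 := LinearIsometry.extend_apply φ ⟨f x, LinearMap.mem_range_self f x⟩
    exact h1.trans (hφ₀ x)
  set U : Matrix ι ι ℝ := Matrix.toEuclideanLin.symm Ψ.toLinearMap with hUdef
  have hU : Matrix.toEuclideanLin U = Ψ.toLinearMap := by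
    rw [hUdef]; exact (Matrix.toEuclideanLin (𝕜 := ℝ)).apply_symm_apply _
  have hcomp : U * Mᵀ = Nᵀ := by
    apply Matrix.toEuclideanLin.injective
    rw [Matrix.toEuclideanLin_eq_toLin, Matrix.toLin_mul _ (PiLp.basisFun 2 ℝ ι) _]
    apply LinearMap.ext
    intro x
    have : (Matrix.toLin (PiLp.basisFun 2 ℝ ι) (PiLp.basisFun 2 ℝ ι) U) ((Matrix.toLin
        (PiLp.basisFun 2 ℝ (Fin n)) (PiLp.basisFun 2 ℝ ι) Mᵀ) x) = Ψ (f x) := by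
      rw [hf, Matrix.toEuclideanLin_eq_toLin, ← Matrix.toEuclideanLin_eq_toLin, hU]
      rfl
    rw [LinearMap.comp_apply, this, hΨ, hg, Matrix.toEuclideanLin_eq_toLin]
  have happ : ∀ (i k : ι), (Ψ (EuclideanSpace.single i (1:ℝ))) k = U k i := by
    intro i k
    have : Ψ (EuclideanSpace.single i (1:ℝ))
        = Matrix.toEuclideanLin U (EuclideanSpace.single i (1:ℝ)) := by rw [hU]; rfl
    rw [this]
    show (U.mulVec (WithLp.equiv 2 _ (EuclideanSpace.single i (1:ℝ)))) k = U k i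
    have : (WithLp.equiv 2 (ι → ℝ)) (EuclideanSpace.single i (1:ℝ)) = Pi.single i 1 := rfl
    rw [this, Matrix.mulVec_single]
    simp
  have horth : Uᵀ * U = 1 := by
    ext i j
    have hi := Ψ.inner_map_map (EuclideanSpace.single i (1:ℝ)) (EuclideanSpace.single j 1)
    simp only [PiLp.inner_apply, RCLike.inner_apply, conj_trivial, happ,
      EuclideanSpace.single_apply] at hi
    rw [Matrix.mul_apply, Matrix.one_apply]
    simp only [Matrix.transpose_apply]
    rw [Finset.sum_congr rfl fun x _ => mul_comm (U x i) (U x j), hi]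
    simp [eq_comm]
  refine ⟨U, horth, ?_⟩
  have hMU : M * Uᵀ = N := by
    have := congrArg Matrix.transpose hcomp
    rwa [Matrix.transpose_mul, Matrix.transpose_transpose] at this
  rw [← hMU, Matrix.mul_assoc, horth, Matrix.mul_one]

lemma measurable_mulVec' {a b : Type*} [Fintype a] [Fintype b] (M : Matrix a b ℝ) :
    Measurable (M.mulVec) :=
  (Matrix.mulVecLin M).continuous_of_finiteDimensional.measurable

lemma map_mulVec_eq_of_cov {n : ℕ} {ι : Type*} [Fintype ι] [DecidableEq ι]
    (M N : Matrix (Fin n) ι ℝ) (h : M * Mᵀ = N * Nᵀ) :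
    (Measure.pi fun _ : ι => gaussianReal 0 1).map M.mulVec
      = (Measure.pi fun _ : ι => gaussianReal 0 1).map N.mulVec := by
  obtain ⟨U, hU, hMN⟩ := exists_orthogonal_of_mul_transpose_eq M N h
  have hcomp : M.mulVec = N.mulVec ∘ U.mulVec := by
    funext x
    rw [hMN, Function.comp_apply, ← Matrix.mulVec_mulVec]
  rw [hcomp, ← Measure.map_map (measurable_mulVec' N) (measurable_mulVec' U),
    map_mulVec_orth U hU]

end Aux

/-- If `A ⪯ B` are positive semidefinite `n × n` matrices, then `N(0, A) ≺_cx N(0, B)`.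
(The Gaussians are presented via square-root factorizations `A = R Rᵀ`, `B = S Sᵀ`.) -/
theorem gaussian_convexOrder_of_posSemidef_le {n : ℕ}
    (A B R S : Matrix (Fin n) (Fin n) ℝ)
    (hA : A.PosSemidef) (hB : B.PosSemidef) (hAB : (B - A).PosSemidef)
    (hR : R * R.transpose = A) (hS : S * S.transpose = B) :
    ConvexOrder (gaussianVec 0 R) (gaussianVec 0 S) := by
  classical
  intro f hconv hμint hνint
  set gp : Measure (Fin n → ℝ) := Measure.pi fun _ : Fin n => gaussianReal 0 1 with hgp
  have hgpprob : IsProbabilityMeasure gp := by rw [hgp]; infer_instance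
  have hfc : Continuous f := continuousOn_univ.mp (hconv.continuousOn isOpen_univ)
  have hmap0 : ∀ P : Matrix (Fin n) (Fin n) ℝ, gaussianVec 0 P = gp.map P.mulVec := by
    intro P
    show (Measure.pi fun _ : Fin n => gaussianReal 0 1).map (fun x => 0 + P.mulVec x) = _
    congr 1
    funext x
    exact zero_add _
  obtain ⟨T, hTsym, hTT⟩ : ∃ T : Matrix (Fin n) (Fin n) ℝ,
      T.transpose = T ∧ T * T.transpose = B - A := by
    open scoped MatrixOrder in
    have h0 : (0 : Matrix (Fin n) (Fin n) ℝ) ≤ B - A := Matrix.nonneg_iff_posSemidef.mpr hAB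
    open scoped MatrixOrder in
    have hsa : star (CFC.sqrt (B - A)) = CFC.sqrt (B - A) := (CFC.sqrt_nonneg (B - A)).isSelfAdjoint
    open scoped MatrixOrder in
    have hmul : CFC.sqrt (B - A) * CFC.sqrt (B - A) = B - A := CFC.sqrt_mul_sqrt_self (B - A) h0
    have hsym : (CFC.sqrt (B - A)).transpose = CFC.sqrt (B - A) := by
      rw [← Matrix.conjTranspose_eq_transpose_of_trivial]; exact hsa
    exact ⟨CFC.sqrt (B - A), hsym, by rw [hsym]; exact hmul⟩
  set M : Matrix (Fin n) (Fin n ⊕ Fin n) ℝ := Matrix.fromCols R T with hMdef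
  set N : Matrix (Fin n) (Fin n ⊕ Fin n) ℝ := Matrix.fromCols S 0 with hNdef
  have hMM : M * M.transpose = N * N.transpose := by
    rw [hMdef, hNdef, Matrix.transpose_fromCols, Matrix.fromCols_mul_fromRows,
      Matrix.transpose_fromCols, Matrix.fromCols_mul_fromRows, hR, hTT, hS,
      Matrix.transpose_zero, Matrix.mul_zero]
    abel
  set gpi2 : Measure ((Fin n ⊕ Fin n) → ℝ) := Measure.pi fun _ => gaussianReal 0 1 with hgpi2
  set e : ((Fin n ⊕ Fin n) → ℝ) ≃ᵐ ((Fin n → ℝ) × (Fin n → ℝ)) :=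
    MeasurableEquiv.sumPiEquivProdPi fun _ : Fin n ⊕ Fin n => ℝ with hedef
  have mpe : MeasurePreserving e gpi2 (gp.prod gp) :=
    measurePreserving_sumPiEquivProdPi fun _ : Fin n ⊕ Fin n => gaussianReal 0 1
  set h₁ : (Fin n → ℝ) × (Fin n → ℝ) → (Fin n → ℝ) :=
    fun p => R.mulVec p.1 + T.mulVec p.2 with hh₁def
  set h₂ : (Fin n → ℝ) × (Fin n → ℝ) → (Fin n → ℝ) := fun p => S.mulVec p.1 with hh₂def
  have hh₁meas : Measurable h₁ :=
    ((measurable_mulVec' R).comp measurable_fst).add ((measurable_mulVec' T).comp measurable_snd)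
  have hh₂meas : Measurable h₂ := (measurable_mulVec' S).comp measurable_fst
  have hcomp1 : h₁ ∘ e = M.mulVec := by
    funext z
    show R.mulVec (fun i => z (Sum.inl i)) + T.mulVec (fun i => z (Sum.inr i)) = M.mulVec z
    conv_rhs => rw [← Sum.elim_comp_inl_inr z]
    rw [hMdef, Matrix.fromCols_mulVec_sumElim]
    rfl
  have hcomp2 : h₂ ∘ e = N.mulVec := by
    funext z
    show S.mulVec (fun i => z (Sum.inl i)) = N.mulVec z
    conv_rhs => rw [← Sum.elim_comp_inl_inr z]
    rw [hNdef, Matrix.fromCols_mulVec_sumElim, Matrix.zero_mulVec, add_zero]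
    rfl
  have hlaw : gp.map S.mulVec = (gp.prod gp).map h₁ := by
    calc gp.map S.mulVec = ((gp.prod gp).map Prod.fst).map S.mulVec := by
          rw [Measure.map_fst_prod, measure_univ, one_smul]
      _ = (gp.prod gp).map h₂ := by
          rw [Measure.map_map (measurable_mulVec' S) measurable_fst]; rfl
      _ = ((gpi2.map e).map h₂) := by rw [mpe.map_eq]
      _ = gpi2.map N.mulVec := by rw [Measure.map_map hh₂meas e.measurable, hcomp2]
      _ = gpi2.map M.mulVec := (map_mulVec_eq_of_cov M N hMM).symm
      _ = (gpi2.map e).map h₁ := by rw [Measure.map_map hh₁meas e.measurable, hcomp1]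
      _ = (gp.prod gp).map h₁ := by rw [mpe.map_eq]
  have hν' : gaussianVec 0 S = (gp.prod gp).map h₁ := by rw [hmap0 S, hlaw]
  have hint1 : Integrable (fun x => f (R.mulVec x)) gp := by
    have := (integrable_map_measure hfc.aestronglyMeasurable
      (measurable_mulVec' R).aemeasurable).mp (by rw [← hmap0 R]; exact hμint)
    exact this
  have hintp : Integrable (fun p => f (h₁ p)) (gp.prod gp) := by
    have := (integrable_map_measure hfc.aestronglyMeasurable hh₁meas.aemeasurable).mp
      (by rw [← hν']; exact hνint)
    exact this
  have hneg : gp.map (fun y : Fin n → ℝ => -y) = gp := by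
    have h2 : (-1 : Matrix (Fin n) (Fin n) ℝ).mulVec = fun y : Fin n → ℝ => -y := by
      funext y
      rw [Matrix.neg_mulVec, Matrix.one_mulVec]
    have h1 := map_mulVec_orth (-1 : Matrix (Fin n) (Fin n) ℝ)
      (by rw [Matrix.transpose_neg, Matrix.transpose_one]; simp)
    rw [h2] at h1
    exact h1
  have hkey : ∀ x : Fin n → ℝ, Integrable (fun y => f (R.mulVec x + T.mulVec y)) gp →
      f (R.mulVec x) ≤ ∫ y, f (R.mulVec x + T.mulVec y) ∂gp := by
    intro x hx
    have hcont2 : Continuous fun y : Fin n → ℝ => f (R.mulVec x + T.mulVec y) :=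
      hfc.comp (continuous_const.add (Matrix.mulVecLin T).continuous_of_finiteDimensional)
    have hsub : ∫ y, f (R.mulVec x - T.mulVec y) ∂gp = ∫ y, f (R.mulVec x + T.mulVec y) ∂gp := by
      conv_rhs => rw [← hneg]
      rw [integral_map measurable_neg.aemeasurable
        (by rw [hneg]; exact hcont2.aestronglyMeasurable)]
      congr 1
      funext y
      rw [Matrix.mulVec_neg, ← sub_eq_add_neg]
    have hxneg : Integrable (fun y => f (R.mulVec x - T.mulVec y)) gp := by
      have h3 : Integrable (fun y => f (R.mulVec x + T.mulVec y))
          (gp.map (fun y : Fin n → ℝ => -y)) := by rw [hneg]; exact hx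
      have h4 := (integrable_map_measure
        (by rw [hneg]; exact hcont2.aestronglyMeasurable)
        measurable_neg.aemeasurable).mp h3
      refine h4.congr (Filter.Eventually.of_forall fun y => ?_)
      show f (R.mulVec x + T.mulVec (-y)) = f (R.mulVec x - T.mulVec y)
      rw [Matrix.mulVec_neg, ← sub_eq_add_neg]
    have hpt : ∀ y, f (R.mulVec x)
        ≤ 2⁻¹ * f (R.mulVec x + T.mulVec y) + 2⁻¹ * f (R.mulVec x - T.mulVec y) := by
      intro y
      have h5 := hconv.2 (Set.mem_univ (R.mulVec x + T.mulVec y))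
        (Set.mem_univ (R.mulVec x - T.mulVec y)) (by norm_num : (0:ℝ) ≤ 2⁻¹)
        (by norm_num : (0:ℝ) ≤ 2⁻¹) (by norm_num : (2⁻¹:ℝ) + 2⁻¹ = 1)
      have h6 : (2⁻¹:ℝ) • (R.mulVec x + T.mulVec y) + (2⁻¹:ℝ) • (R.mulVec x - T.mulVec y)
          = R.mulVec x := by
        funext i
        simp only [Pi.add_apply, Pi.smul_apply, Pi.sub_apply, smul_eq_mul]
        ring
      rw [h6] at h5
      simpa [smul_eq_mul] using h5
    calc f (R.mulVec x) = ∫ _, f (R.mulVec x) ∂gp := by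
          rw [integral_const, probReal_univ]
          simp
      _ ≤ ∫ y, 2⁻¹ * f (R.mulVec x + T.mulVec y)
            + 2⁻¹ * f (R.mulVec x - T.mulVec y) ∂gp :=
          integral_mono (integrable_const _) ((hx.const_mul _).add (hxneg.const_mul _)) hpt
      _ = 2⁻¹ * (∫ y, f (R.mulVec x + T.mulVec y) ∂gp)
            + 2⁻¹ * ∫ y, f (R.mulVec x - T.mulVec y) ∂gp := by
          rw [integral_add (hx.const_mul _) (hxneg.const_mul _), integral_const_mul,
            integral_const_mul]
      _ = ∫ y, f (R.mulVec x + T.mulVec y) ∂gp := by rw [hsub]; ring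
  calc ∫ x, f x ∂gaussianVec 0 R = ∫ x, f (R.mulVec x) ∂gp := by
        rw [hmap0 R, integral_map (measurable_mulVec' R).aemeasurable hfc.aestronglyMeasurable]
    _ ≤ ∫ x, ∫ y, f (R.mulVec x + T.mulVec y) ∂gp ∂gp := by
        refine integral_mono_ae hint1 hintp.integral_prod_left ?_
        filter_upwards [hintp.prod_right_ae] with x hx using hkey x hx
    _ = ∫ p, f (h₁ p) ∂(gp.prod gp) := (integral_prod _ hintp).symm
    _ = ∫ x, f x ∂gaussianVec 0 S := by
        rw [hν', integral_map hh₁meas.aemeasurable hfc.aestronglyMeasurable]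
end
end

section
/- Let X be a real-valued random variable with E[X] = 0 and |X| ≤ C almost surely. Then X ≺_cx N(0, πC²/2), i.e., for every convex function f : ℝ → ℝ for which the expectations exist, E[f(X)] ≤ E[f(G)] where G ∼ N(0, πC²/2). -/
open MeasureTheory ProbabilityTheory Real

noncomputable section

/-- Convex order between two laws on `ℝ`. -/
def ConvexOrderReal (μ ν : Measure ℝ) : Prop :=
  ∀ f : ℝ → ℝ, ConvexOn ℝ Set.univ f →
    Integrable f μ → Integrable f ν →
    ∫ x, f x ∂μ ≤ ∫ x, f x ∂ν

open Set Filter Topology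
open scoped NNReal ENNReal

/-- `∫ x in (0,∞), x * exp (-b x²) = (2b)⁻¹`, real version. -/
lemma aux_integral_mul_exp_neg_mul_sq {b : ℝ} (hb : 0 < b) :
    ∫ x in Ioi (0:ℝ), x * rexp (-b * x ^ 2) = (2 * b)⁻¹ := by
  have hb' : b ≠ 0 := hb.ne'
  have A : ∀ x : ℝ, HasDerivAt (fun x : ℝ => -(2 * b)⁻¹ * rexp (-b * x ^ 2))
      (x * rexp (-b * x ^ 2)) x := by
    intro x
    convert ((hasDerivAt_pow 2 x).const_mul (-b)).exp.const_mul (-(2 * b)⁻¹) using 1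
    case e'_9 => field_simp; ring
    all_goals rfl
  have B : Tendsto (fun y : ℝ => -(2 * b)⁻¹ * rexp (-b * y ^ 2)) atTop
      (𝓝 (-(2 * b)⁻¹ * 0)) := by
    refine Tendsto.const_mul _ ?_
    refine tendsto_exp_atBot.comp ?_
    exact (tendsto_pow_atTop two_ne_zero).const_mul_atTop_of_neg (neg_lt_zero.2 hb)
  have := integral_Ioi_of_hasDerivAt_of_tendsto' (a := 0) (fun x _ => A x)
    (integrable_mul_exp_neg_mul_sq hb).integrableOn B
  rw [this]
  simp [Real.exp_zero]

/-- If `X` is a real random variable with `E[X] = 0` and `|X| ≤ C` a.s., then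
`X ≺_cx N(0, πC²/2)`. -/
theorem convexOrder_gaussian_of_bounded {Ω : Type*} [MeasurableSpace Ω]
    (μ : Measure Ω) [IsProbabilityMeasure μ] (X : Ω → ℝ) (hX : Measurable X)
    (C : ℝ) (hC : 0 < C)
    (hmean : ∫ ω, X ω ∂μ = 0)
    (hbdd : ∀ᵐ ω ∂μ, |X ω| ≤ C) :
    ConvexOrderReal (μ.map X) (gaussianReal 0 (Real.toNNReal (π * C ^ 2 / 2))) := by
  intro f hf hfμ hfν
  set v : ℝ≥0 := Real.toNNReal (π * C ^ 2 / 2) with hv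
  have hvR : (v : ℝ) = π * C ^ 2 / 2 := Real.coe_toNNReal _ (by positivity)
  have hvpos : (0:ℝ) < (v : ℝ) := by rw [hvR]; positivity
  have hv0 : v ≠ 0 := by
    intro h
    rw [h] at hvR
    simp at hvR
    nlinarith [mul_pos pi_pos (pow_pos hC 2)]
  set ν := gaussianReal 0 v with hνdef
  set b : ℝ := (2 * (v:ℝ))⁻¹ with hbdef
  have hb : 0 < b := by positivity
  set κ : ℝ := (√(2 * π * (v:ℝ)))⁻¹ with hκdef
  have hsq : √(2 * π * (v:ℝ)) = π * C := by
    rw [hvR, show 2 * π * (π * C ^ 2 / 2) = (π * C) ^ 2 by ring]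
    exact Real.sqrt_sq (by positivity)
  have hκ : κ = (π * C)⁻¹ := by rw [hκdef, hsq]
  have hκpos : 0 < κ := by rw [hκ]; positivity
  -- pdf formula
  have hpdf : ∀ x : ℝ, gaussianPDFReal 0 v x = κ * rexp (-b * x ^ 2) := by
    intro x
    rw [gaussianPDFReal, sub_zero, hκdef, hbdef]
    congr 1
    rw [neg_div, div_eq_mul_inv, mul_comm, neg_mul]
  have hf_cont : Continuous f := by
    rw [← continuousOn_univ]
    exact hf.continuousOn isOpen_univ
  -- conversion of set integrals
  have hconv : ∀ (s : Set ℝ), MeasurableSet s → ∀ g : ℝ → ℝ,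
      ∫ x in s, g x ∂ν = ∫ x in s, gaussianPDFReal 0 v x * g x := by
    intro s hs g
    rw [hνdef, gaussianReal_of_var_ne_zero _ hv0,
      show gaussianPDF 0 v = fun x => (((gaussianPDFReal 0 v x).toNNReal : ℝ≥0) : ℝ≥0∞) from rfl,
      setIntegral_withDensity_eq_setIntegral_smul
        ((measurable_gaussianPDFReal 0 v).real_toNNReal) g hs]
    refine setIntegral_congr_fun hs fun x _ => ?_
    rw [NNReal.smul_def, smul_eq_mul, Real.coe_toNNReal _ (gaussianPDFReal_nonneg 0 v x)]
  -- measure of half lines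
  have hIci : ν (Ici 0) = 2⁻¹ := by
    rw [hνdef, gaussianReal_apply_eq_integral 0 hv0]
    have : ∫ x in Ici (0:ℝ), gaussianPDFReal 0 v x = 2⁻¹ := by
      rw [integral_Ici_eq_integral_Ioi]
      simp_rw [hpdf]
      rw [integral_const_mul, integral_gaussian_Ioi]
      have : π / b = 2 * π * (v:ℝ) := by
        rw [hbdef]; field_simp
      rw [this, hsq, hκ]
      field_simp
    rw [this, ENNReal.ofReal_inv_of_pos two_pos]
    norm_num
  have hIio : ν (Iio 0) = 2⁻¹ := by
    have hcompl : Iio (0:ℝ) = (Ici 0)ᶜ := by simp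
    rw [hcompl, measure_compl measurableSet_Ici (measure_ne_top _ _), measure_univ, hIci,
      ENNReal.one_sub_inv_two]
  -- half means
  have hmean_pos : ∫ x in Ici (0:ℝ), x ∂ν = C / 2 := by
    rw [hconv (Ici 0) measurableSet_Ici, integral_Ici_eq_integral_Ioi]
    have heq : ∀ x : ℝ, gaussianPDFReal 0 v x * x = κ * (x * rexp (-b * x ^ 2)) := by
      intro x; rw [hpdf]; ring
    simp_rw [heq]
    rw [integral_const_mul, aux_integral_mul_exp_neg_mul_sq hb, hκ, hbdef, hvR]
    have hπC : π * C ≠ 0 := by positivity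
    rw [show (2 * (2 * (π * C ^ 2 / 2))⁻¹)⁻¹ = π * C ^ 2 / 2 by
      rw [show (2:ℝ) * (π * C ^ 2 / 2) = π * C ^ 2 by ring] at *
      field_simp]
    field_simp
  have hpdf_even : ∀ x : ℝ, gaussianPDFReal 0 v (-x) = gaussianPDFReal 0 v x := by
    intro x; rw [hpdf, hpdf]; ring_nf
  have hmean_neg : ∫ x in Iio (0:ℝ), x ∂ν = -(C / 2) := by
    rw [hconv (Iio 0) measurableSet_Iio]
    have h1 : ∫ x in Iio (0:ℝ), gaussianPDFReal 0 v x * x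
        = ∫ x in Iic (0:ℝ), gaussianPDFReal 0 v x * x := (integral_Iic_eq_integral_Iio).symm
    have h2 := integral_comp_neg_Iic (0:ℝ) (fun y => gaussianPDFReal 0 v y * (-y))
    simp only [neg_neg, neg_zero, hpdf_even] at h2
    rw [h1, h2]
    simp_rw [mul_neg]
    rw [integral_neg]
    have h3 : ∫ x in Ioi (0:ℝ), gaussianPDFReal 0 v x * x = C / 2 := by
      rw [← integral_Ici_eq_integral_Ioi, ← hconv (Ici 0) measurableSet_Ici, hmean_pos]
    rw [h3]
  -- integrability of the identity w.r.t. ν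
  have hid : Integrable (fun x => x) ν := by
    rw [hνdef, gaussianReal_of_var_ne_zero _ hv0,
      show gaussianPDF 0 v = fun x => (((gaussianPDFReal 0 v x).toNNReal : ℝ≥0) : ℝ≥0∞) from rfl,
      integrable_withDensity_iff_integrable_smul
        ((measurable_gaussianPDFReal 0 v).real_toNNReal)]
    have : (fun x : ℝ => (gaussianPDFReal 0 v x).toNNReal • x)
        = fun x : ℝ => κ * (x * rexp (-b * x ^ 2)) := by
      funext x
      rw [NNReal.smul_def, smul_eq_mul, Real.coe_toNNReal _ (gaussianPDFReal_nonneg 0 v x), hpdf]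
      ring
    rw [this]
    exact (integrable_mul_exp_neg_mul_sq hb).const_mul κ
  -- Jensen on each half line
  have jensen : ∀ (s : Set ℝ), MeasurableSet s → ν s = 2⁻¹ → ∀ m : ℝ,
      (∫ x in s, x ∂ν = m) → f (2 * m) ≤ 2 * ∫ x in s, f x ∂ν := by
    intro s hs hνs m hm
    set P : Measure ℝ := (2 : ℝ≥0∞) • ν.restrict s with hP
    haveI : IsProbabilityMeasure P := by
      constructor
      rw [hP, Measure.smul_apply, Measure.restrict_apply_univ, hνs, smul_eq_mul,
        ENNReal.mul_inv_cancel two_ne_zero ENNReal.ofNat_ne_top]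
    have hint_id : Integrable (fun x => x) P :=
      (hid.restrict).smul_measure ENNReal.ofNat_ne_top
    have hint_f : Integrable f P := (hfν.restrict).smul_measure ENNReal.ofNat_ne_top
    have hJ := hf.map_integral_le (f := fun x : ℝ => x) (μ := P)
      (hf_cont.continuousOn) isClosed_univ
      (Filter.Eventually.of_forall fun x => Set.mem_univ _) hint_id hint_f
    have hPint : ∀ g : ℝ → ℝ, ∫ x, g x ∂P = 2 * ∫ x in s, g x ∂ν := by
      intro g
      rw [hP, integral_smul_measure]
      norm_num
    rw [hPint (fun x => x), hPint f, hm] at hJ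
    exact hJ
  have hpos : f C ≤ 2 * ∫ x in Ici (0:ℝ), f x ∂ν := by
    have := jensen (Ici 0) measurableSet_Ici hIci (C / 2) hmean_pos
    rwa [show (2:ℝ) * (C / 2) = C by ring] at this
  have hneg : f (-C) ≤ 2 * ∫ x in Iio (0:ℝ), f x ∂ν := by
    have := jensen (Iio 0) measurableSet_Iio hIio (-(C / 2)) hmean_neg
    rwa [show (2:ℝ) * (-(C / 2)) = -C by ring] at this
  have hsplit : ∫ x, f x ∂ν = (∫ x in Ici (0:ℝ), f x ∂ν) + ∫ x in Iio (0:ℝ), f x ∂ν := by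
    rw [← integral_add_compl measurableSet_Ici hfν, compl_Ici]
  -- Step 1 : bound E[f(X)] by (f C + f (-C)) / 2
  set A : ℝ := (f C + f (-C)) / 2 with hA
  set B : ℝ := (f C - f (-C)) / (2 * C) with hB
  have hub : ∀ x : ℝ, |x| ≤ C → f x ≤ A + B * x := by
    intro x hx
    rw [abs_le] at hx
    obtain ⟨hx1, hx2⟩ := hx
    have h2C : (0:ℝ) < 2 * C := by linarith
    have ha : (0:ℝ) ≤ (C - x) / (2 * C) := div_nonneg (by linarith) h2C.le
    have hb2 : (0:ℝ) ≤ (x + C) / (2 * C) := div_nonneg (by linarith) h2C.le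
    have hab : (C - x) / (2 * C) + (x + C) / (2 * C) = 1 := by
      rw [← add_div, show C - x + (x + C) = 2 * C by ring, div_self h2C.ne']
    have hcomb := hf.2 (Set.mem_univ (-C)) (Set.mem_univ C) ha hb2 hab
    have hpt : ((C - x) / (2 * C)) • (-C) + ((x + C) / (2 * C)) • C = x := by
      rw [smul_eq_mul, smul_eq_mul,
        show (C - x) / (2 * C) * (-C) + (x + C) / (2 * C) * C = x * (2 * C) / (2 * C) by ring,
        mul_div_cancel_right₀ _ h2C.ne']
    rw [hpt] at hcomb
    refine hcomb.trans_eq ?_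
    rw [smul_eq_mul, smul_eq_mul, hA, hB]
    have h2C' : (2:ℝ) * C ≠ 0 := h2C.ne'
    field_simp
    ring
  have hmap : ∫ x, f x ∂(μ.map X) = ∫ ω, f (X ω) ∂μ :=
    integral_map hX.aemeasurable hf_cont.aestronglyMeasurable
  have hfX : Integrable (fun ω => f (X ω)) μ := by
    have := (integrable_map_measure hf_cont.aestronglyMeasurable hX.aemeasurable).mp hfμ
    exact this
  have hXint : Integrable X μ := by
    refine (integrable_const C).mono' hX.aestronglyMeasurable ?_
    filter_upwards [hbdd] with ω hω
    simpa [Real.norm_eq_abs] using hω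
  have hrhs_int : Integrable (fun ω => A + B * X ω) μ :=
    (integrable_const A).add (hXint.const_mul B)
  have hle : ∫ ω, f (X ω) ∂μ ≤ ∫ ω, A + B * X ω ∂μ := by
    refine integral_mono_ae hfX hrhs_int ?_
    filter_upwards [hbdd] with ω hω
    exact hub _ hω
  have hval : ∫ ω, A + B * X ω ∂μ = A := by
    rw [integral_add (integrable_const A) (hXint.const_mul B), integral_const,
      integral_const_mul, hmean]
    simp
  rw [hmap]
  have h1 : ∫ ω, f (X ω) ∂μ ≤ A := hval ▸ hle
  have h2 : A ≤ ∫ x, f x ∂ν := by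
    rw [hsplit, hA]
    linarith
  exact h1.trans h2
end
end

section
/- Fix C ≥ 1, M > 0, and vectors X₁,…,X_N ∈ ℝᵐ (all nonzero). Define β₀ = 0 and, for t ≥ 1, β_t = (CπM²/2)·max_{1≤i≤t}‖X_i‖². Define Σ₀ = 0 and recursively Σ_t = (I − P_{X_t}/C) Σ_{t−1} (I − P_{X_t}/C) + (πM²/2) X_t X_tᵀ, where P_{X_t} = X_t X_tᵀ/‖X_t‖² is the orthogonal projection onto span(X_t). Then Σ_t ⪯ β_t I for all 0 ≤ t ≤ N. -/
open MeasureTheory ProbabilityTheory Real Matrix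

noncomputable section

lemma myPSD.add {n : Type*} [Fintype n] {A B : Matrix n n ℝ} (hA : A.PosSemidef)
    (hB : B.PosSemidef) : (A + B).PosSemidef :=
  hA.add hB

lemma myPSD.smul {n : Type*} [Fintype n] {A : Matrix n n ℝ} {c : ℝ} (hc : 0 ≤ c)
    (hA : A.PosSemidef) : (c • A).PosSemidef :=
  hA.smul hc

lemma myPSD.vecMulVec {n : Type*} [Fintype n] (v : n → ℝ) :
    (Matrix.vecMulVec v v).PosSemidef := by
  rw [Matrix.vecMulVec_eq Unit]
  have : (Matrix.replicateCol Unit v) = (Matrix.replicateRow Unit v)ᴴ := by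
    rw [Matrix.conjTranspose_replicateRow]; simp
  rw [this]
  exact Matrix.posSemidef_conjTranspose_mul_self _

lemma myMulSub {n : Type*} [Fintype n] [DecidableEq n] (Q S : Matrix n n ℝ) (a : ℝ) :
    Q * (a • 1 - S) * Q = a • (Q * Q) - Q * S * Q := by
  rw [Matrix.mul_sub, Matrix.sub_mul, Matrix.mul_smul, Matrix.smul_mul, Matrix.mul_one]

lemma myVV {n : Type*} [Fintype n] (v : n → ℝ) :
    Matrix.vecMulVec v v * Matrix.vecMulVec v v
      = (∑ j, v j ^ 2) • Matrix.vecMulVec v v := by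
  ext i j
  simp [Matrix.mul_apply, Matrix.vecMulVec_apply, Finset.mul_sum, Finset.sum_mul]
  congr 1; ext k; ring

/-- Covariance recursion bound: with `β_t = (CπM²/2)·max_{1≤i≤t}‖X_i‖²` and
`Σ_t = (I − P_{X_t}/C) Σ_{t−1} (I − P_{X_t}/C) + (πM²/2) X_t X_tᵀ` (where
`P_{X_t} = X_t X_tᵀ/‖X_t‖²`), we have `Σ_t ⪯ β_t I` for all `0 ≤ t ≤ N`. -/
theorem covariance_recursion_bound {d N : ℕ} (C M : ℝ) (hC : 1 ≤ C) (hM : 0 < M)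
    (X : ℕ → Fin d → ℝ) (hX : ∀ t, 1 ≤ t → t ≤ N → X t ≠ 0)
    (β : ℕ → ℝ) (hβ0 : β 0 = 0)
    (hβ : ∀ t (ht : 1 ≤ t), t ≤ N →
      β t = C * π * M ^ 2 / 2 *
        (Finset.Icc 1 t).sup' (Finset.nonempty_Icc.mpr ht) (fun i => ∑ j, X i j ^ 2))
    (P : ℕ → Matrix (Fin d) (Fin d) ℝ)
    (hP : ∀ t, P t = (∑ j, X t j ^ 2)⁻¹ • Matrix.vecMulVec (X t) (X t))
    (Sig : ℕ → Matrix (Fin d) (Fin d) ℝ) (hSig0 : Sig 0 = 0)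
    (hSig : ∀ t, 1 ≤ t → t ≤ N →
      Sig t = (1 - C⁻¹ • P t) * Sig (t - 1) * (1 - C⁻¹ • P t)
        + (π * M ^ 2 / 2) • Matrix.vecMulVec (X t) (X t)) :
    ∀ t ≤ N, (β t • (1 : Matrix (Fin d) (Fin d) ℝ) - Sig t).PosSemidef := by
  intro t
  induction t with
  | zero =>
    intro _
    rw [hβ0, hSig0]
    simpa using Matrix.PosSemidef.zero
  | succ t ih =>
    intro htN
    have htN' : t ≤ N := Nat.le_of_succ_le htN
    have ihP := ih htN'
    have ht1 : 1 ≤ t + 1 := Nat.succ_le_succ (Nat.zero_le t)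
    have hC0 : (0:ℝ) < C := lt_of_lt_of_le one_pos hC
    have hπ : (0:ℝ) < π := Real.pi_pos
    set v := X (t+1) with hv
    set n := ∑ j, v j ^ 2 with hn
    have hvne : v ≠ 0 := hX (t+1) ht1 htN
    have hnpos : 0 < n := by
      obtain ⟨j, hj⟩ := Function.ne_iff.mp hvne
      exact Finset.sum_pos' (fun i _ => sq_nonneg _)
        ⟨j, Finset.mem_univ j, by have hj2 : v j ≠ 0 := hj; positivity⟩
    set c0 : ℝ := π * M ^ 2 / 2 with hc0
    have hc0pos : 0 < c0 := by positivity
    have hb' := hβ (t+1) ht1 htN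
    have hsup_ge : n ≤ (Finset.Icc 1 (t+1)).sup' (Finset.nonempty_Icc.mpr ht1)
        (fun i => ∑ j, X i j ^ 2) :=
      Finset.le_sup' (fun i => ∑ j, X i j ^ 2) (Finset.mem_Icc.mpr ⟨ht1, le_refl _⟩)
    have hbn : C * c0 * n ≤ β (t+1) := by
      rw [hb']
      have h1 : C * π * M ^ 2 / 2 = C * c0 := by rw [hc0]; ring
      rw [h1]
      exact mul_le_mul_of_nonneg_left hsup_ge (by positivity)
    have hβpos : 0 ≤ β (t+1) := le_trans (by positivity) hbn
    have ha : β t ≤ β (t+1) := by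
      rcases Nat.eq_zero_or_pos t with h0 | h1
      · have hb0 : β t = 0 := by rw [h0, hβ0]
        rw [hb0]; exact hβpos
      · rw [hβ t h1 htN', hb']
        refine mul_le_mul_of_nonneg_left ?_ (by positivity)
        exact Finset.sup'_le _ _ fun i hi =>
          Finset.le_sup' (fun i => ∑ j, X i j ^ 2)
            (Finset.Icc_subset_Icc_right (Nat.le_succ t) hi)
    -- matrices
    set Pm := P (t+1) with hPmd
    have hPdef : Pm = n⁻¹ • Matrix.vecMulVec v v := hP (t+1)
    set V := Matrix.vecMulVec v v with hVdef
    have hVpsd : V.PosSemidef := myPSD.vecMulVec v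
    have hVsym : Vᴴ = V := hVpsd.1
    have hPsym : Pmᴴ = Pm := by
      rw [hPdef, Matrix.conjTranspose_smul, star_trivial, hVsym]
    have hVV : V * V = n • V := myVV v
    have hPP : Pm * Pm = Pm := by
      rw [hPdef, Matrix.smul_mul, Matrix.mul_smul, hVV, smul_smul, smul_smul,
        mul_assoc, inv_mul_cancel₀ hnpos.ne', mul_one]
    have hVP : V = n • Pm := by
      rw [hPdef, smul_smul, mul_inv_cancel₀ hnpos.ne', one_smul]
    have hPpsd : Pm.PosSemidef := by
      rw [hPdef]; exact myPSD.smul (inv_nonneg.mpr hnpos.le) hVpsd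
    set Q : Matrix (Fin d) (Fin d) ℝ := 1 - C⁻¹ • Pm with hQd
    have hQsym : Qᴴ = Q := by
      rw [hQd, Matrix.conjTranspose_sub, Matrix.conjTranspose_smul, star_trivial,
        Matrix.conjTranspose_one, hPsym]
    have hQQ : Q * Q = 1 - (2 * C⁻¹ - C⁻¹ * C⁻¹) • Pm := by
      simp only [hQd, Matrix.sub_mul, Matrix.mul_sub, Matrix.smul_mul,
        Matrix.mul_smul, Matrix.one_mul, Matrix.mul_one, hPP, smul_smul]
      module
    have h1Ppsd : (1 - Pm).PosSemidef := by
      have hherm : (1 - Pm)ᴴ = 1 - Pm := by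
        rw [Matrix.conjTranspose_sub, Matrix.conjTranspose_one, hPsym]
      have hid : (1 - Pm) = (1 - Pm)ᴴ * (1 - Pm) := by
        rw [hherm]
        simp only [Matrix.sub_mul, Matrix.mul_sub, Matrix.one_mul, Matrix.mul_one, hPP]
        abel
      rw [hid]
      exact Matrix.posSemidef_conjTranspose_mul_self _
    set e : ℝ := β (t+1) - β t + β t * (2 * C⁻¹ - C⁻¹ * C⁻¹) - c0 * n with he
    have key : β (t+1) • (1 : Matrix (Fin d) (Fin d) ℝ) - Sig (t+1)
        = Q * (β t • 1 - Sig t) * Q + ((β (t+1) - β t) • (1 - Pm) + e • Pm) := by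
      rw [hSig (t+1) ht1 htN]
      simp only [Nat.add_sub_cancel, ← hv, ← hVdef, ← hPmd, ← hQd]
      rw [myMulSub, hQQ, hVP, he]
      module
    rw [key]
    refine myPSD.add ?_ (myPSD.add (myPSD.smul (sub_nonneg.mpr ha) h1Ppsd)
      (myPSD.smul ?_ hPpsd))
    · have := ihP.mul_mul_conjTranspose_same Q
      rwa [hQsym] at this
    · -- 0 ≤ e
      have hcn : c0 * n = C⁻¹ * (C * c0 * n) := by
        field_simp
      have hu1 : C⁻¹ ≤ 1 := inv_le_one_of_one_le₀ hC
      have hu0 : (0:ℝ) < C⁻¹ := inv_pos.mpr hC0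
      rw [he]
      nlinarith [mul_le_mul_of_nonneg_right ha (sq_nonneg (1 - C⁻¹)),
        mul_le_mul_of_nonneg_left hbn hu0.le,
        mul_nonneg (mul_nonneg hβpos hu0.le) (sub_nonneg.mpr hu1),
        sq_nonneg (1 - C⁻¹)]
end
end

section
/- (Single-neuron one-bit quantization error bound.) Let C ≥ 1, p ≥ 1, K > 0, w ∈ ℝ^{N₀} with ‖w‖_∞ < K, and X ∈ ℝ^{m×N₀} with nonzero columns X₁,…,X_{N₀}. Run the stochastic path-following algorithm with the 4K-grid stochastic quantizer Q (unbiased, |Q(v) − v| ≤ 4K) to produce q ∈ ℝ^{N₀}: u₀ = 0, q_t = Q(w_t + ⟨u_{t−1}, X_t⟩/(C‖X_t‖²)), u_t = u_{t−1} + (w_t − q_t) X_t. Then with probability at least 1 − Σ_{t=2}^{N₀} √2·exp(−C‖X_t‖²/(32π·max_{1≤i≤t−1}‖X_i‖²)) − √2·m·N₀^{−p}, both ‖Xw − Xq‖_∞ ≤ 4K√(2πCp log N₀)·max_{1≤i≤N₀}‖X_i‖ and ‖q‖_∞ ≤ 2K hold. -/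
open MeasureTheory ProbabilityTheory Real

noncomputable section




lemma my_int_of_bdd {Ω : Type*} {mΩ : MeasurableSpace Ω} {μ : Measure Ω} [IsProbabilityMeasure μ]
    {f : Ω → ℝ} (hf : AEStronglyMeasurable f μ) {c : ℝ} (h : ∀ᵐ ω ∂μ, |f ω| ≤ c) :
    Integrable f μ :=
  (integrable_const c).mono' hf (by simpa [Real.norm_eq_abs] using h)

/-- chord bound for exp -/
lemma my_exp_chord {y c l : ℝ} (hc : 0 < c) (hy : |y| ≤ c) :
    exp (l * y) ≤ Real.cosh (l * c) + (y / c) * Real.sinh (l * c) := by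
  rw [abs_le] at hy
  have h1 : 0 ≤ (c + y) / (2 * c) := by
    apply div_nonneg <;> linarith
  have h2 : 0 ≤ (c - y) / (2 * c) := by
    apply div_nonneg <;> linarith
  have hab : (c - y) / (2 * c) + (c + y) / (2 * c) = 1 := by
    field_simp; ring
  have hcv := convexOn_exp.2 (Set.mem_univ (-(l * c))) (Set.mem_univ (l * c)) h2 h1 hab
  simp only [smul_eq_mul] at hcv
  have harg : (c - y) / (2 * c) * -(l * c) + (c + y) / (2 * c) * (l * c) = l * y := by
    field_simp; ring
  rw [harg] at hcv
  calc exp (l * y) ≤ (c - y) / (2 * c) * exp (-(l * c)) + (c + y) / (2 * c) * exp (l * c) := hcv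
    _ = Real.cosh (l * c) + (y / c) * Real.sinh (l * c) := by
        rw [Real.cosh_eq, Real.sinh_eq]; field_simp; ring

lemma cond_hoeffding {Ω : Type*} [m0 : MeasurableSpace Ω] {μ : Measure Ω} [IsProbabilityMeasure μ]
    {m : MeasurableSpace Ω} (hm : m ≤ m0) {Y : Ω → ℝ} (hYm : AEStronglyMeasurable[m0] Y μ)
    {c : ℝ} (hc : 0 < c) (hbdd : ∀ᵐ ω ∂μ, |Y ω| ≤ c)
    (hmean : μ[Y|m] =ᵐ[μ] 0) (l : ℝ) :
    μ[fun ω => exp (l * Y ω)|m] ≤ᵐ[μ] fun _ => exp (l ^ 2 * c ^ 2 / 2) := by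
  have hYint : Integrable Y μ := my_int_of_bdd hYm hbdd
  have hexpm : AEStronglyMeasurable[m0] (fun ω => exp (l * Y ω)) μ :=
    (Real.continuous_exp.comp_aestronglyMeasurable (hYm.const_mul l))
  have hexpint : Integrable (fun ω => exp (l * Y ω)) μ := by
    refine my_int_of_bdd hexpm (c := exp (|l| * c)) ?_
    filter_upwards [hbdd] with ω hω
    rw [abs_of_pos (exp_pos _), exp_le_exp]
    calc l * Y ω ≤ |l * Y ω| := le_abs_self _
      _ = |l| * |Y ω| := abs_mul _ _
      _ ≤ |l| * c := by gcongr
  set g : Ω → ℝ := fun ω => Real.cosh (l * c) + (Real.sinh (l * c) / c) * Y ω with hg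
  have hgint : Integrable g μ := (integrable_const _).add (hYint.const_mul _)
  have hle : (fun ω => exp (l * Y ω)) ≤ᵐ[μ] g := by
    filter_upwards [hbdd] with ω hω
    have := my_exp_chord hc hω (l := l)
    calc exp (l * Y ω) ≤ Real.cosh (l * c) + (Y ω / c) * Real.sinh (l * c) := this
      _ = g ω := by rw [hg]; ring
  calc μ[fun ω => exp (l * Y ω)|m] ≤ᵐ[μ] μ[g|m] := condExp_mono hexpint hgint hle
    _ =ᵐ[μ] fun _ => Real.cosh (l * c) := by
        have h1 : μ[g|m] =ᵐ[μ] μ[fun _ => Real.cosh (l * c)|m] +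
            μ[fun ω => (Real.sinh (l * c) / c) * Y ω|m] :=
          condExp_add (integrable_const _) (hYint.const_mul _) m
        have h2 : μ[fun ω => (Real.sinh (l * c) / c) * Y ω|m]
            =ᵐ[μ] (Real.sinh (l * c) / c) • μ[Y|m] := condExp_smul (Real.sinh (l * c) / c) Y m
        filter_upwards [h1, h2, hmean] with ω hω1 hω2 hω3
        simp only [hω1, Pi.add_apply, hω2, Pi.smul_apply, hω3, condExp_const hm,
          Pi.zero_apply, smul_eq_mul, mul_zero, add_zero]
    _ ≤ᵐ[μ] fun _ => exp (l ^ 2 * c ^ 2 / 2) := by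
        refine Filter.Eventually.of_forall fun ω => ?_
        calc Real.cosh (l * c) ≤ exp ((l * c) ^ 2 / 2) := Real.cosh_le_exp_half_sq _
          _ = exp (l ^ 2 * c ^ 2 / 2) := by ring_nf

lemma my_int_of_bdd' {Ω : Type*} {mΩ : MeasurableSpace Ω} {μ : Measure Ω} [IsProbabilityMeasure μ]
    {f : Ω → ℝ} (hf : AEStronglyMeasurable f μ) {c : ℝ} (h : ∀ᵐ ω ∂μ, |f ω| ≤ c) :
    Integrable f μ :=
  (integrable_const c).mono' hf (by simpa [Real.norm_eq_abs] using h)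

lemma my_sqrt_two_eq : Real.sqrt 2 = exp (Real.log 2 / 2) := by
  rw [← Real.exp_log (show (0:ℝ) < Real.sqrt 2 by positivity), Real.log_sqrt (by norm_num)]

lemma chernoff_abs {Ω : Type*} {mΩ : MeasurableSpace Ω} {μ : Measure Ω} [IsProbabilityMeasure μ]
    {Z : Ω → ℝ} (hZ : AEStronglyMeasurable Z μ) {R : ℝ} (hR : ∀ᵐ ω ∂μ, |Z ω| ≤ R)
    {σ2 : ℝ} (hσ : 0 < σ2) {lam : ℝ} (hlam : 0 ≤ lam)
    (hmgf : ∀ θ : ℝ, ∫ ω, exp (θ * Z ω) ∂μ ≤ exp (θ ^ 2 * σ2 / 2)) :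
    (μ {ω | lam < |Z ω|}).toReal ≤ Real.sqrt 2 * exp (-lam ^ 2 / (4 * σ2)) := by
  set x : ℝ := lam ^ 2 / (2 * σ2) with hx
  have hx0 : 0 ≤ x := by positivity
  have htarget : -lam ^ 2 / (4 * σ2) = -(x / 2) := by rw [hx]; ring
  rw [htarget]
  rcases le_or_gt (Real.log 2) x with hcase | hcase
  · -- Chernoff case
    set θ : ℝ := lam / σ2 with hθ
    have hθ0 : 0 ≤ θ := by positivity
    have hint : ∀ t : ℝ, Integrable (fun ω => exp (t * Z ω)) μ := by
      intro t
      refine my_int_of_bdd' (Real.continuous_exp.comp_aestronglyMeasurable (hZ.const_mul t))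
        (c := exp (|t| * R)) ?_
      filter_upwards [hR] with ω hω
      rw [abs_of_pos (exp_pos _), exp_le_exp]
      calc t * Z ω ≤ |t * Z ω| := le_abs_self _
        _ = |t| * |Z ω| := abs_mul _ _
        _ ≤ |t| * R := by gcongr
    have hbound : ∀ W : Ω → ℝ, Integrable (fun ω => exp (θ * W ω)) μ →
        (∫ ω, exp (θ * W ω) ∂μ ≤ exp (θ ^ 2 * σ2 / 2)) →
        (μ {ω | lam ≤ W ω}).toReal ≤ exp (-x) := by
      intro W hWi hWb
      calc (μ {ω | lam ≤ W ω}).toReal ≤ exp (-θ * lam) * mgf W μ θ :=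
            measure_ge_le_exp_mul_mgf lam hθ0 hWi
        _ ≤ exp (-θ * lam) * exp (θ ^ 2 * σ2 / 2) := by
            have : mgf W μ θ = ∫ ω, exp (θ * W ω) ∂μ := rfl
            rw [this]; exact mul_le_mul_of_nonneg_left hWb (exp_pos _).le
        _ = exp (-θ * lam + θ ^ 2 * σ2 / 2) := (Real.exp_add _ _).symm
        _ = exp (-x) := by
            congr 1
            rw [hθ, hx]
            field_simp
            ring
    have hsub : {ω | lam < |Z ω|} ⊆ {ω | lam ≤ Z ω} ∪ {ω | lam ≤ -Z ω} := by
      intro ω hω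
      simp only [Set.mem_setOf_eq] at hω ⊢
      rcases abs_cases (Z ω) with ⟨h1, _⟩ | ⟨h1, _⟩
      · left; simp only [Set.mem_setOf_eq]; linarith
      · right; simp only [Set.mem_setOf_eq]; linarith
    have hneg : ∫ ω, exp (θ * (-Z) ω) ∂μ ≤ exp (θ ^ 2 * σ2 / 2) := by
      have := hmgf (-θ)
      simpa [neg_mul, mul_neg, neg_sq] using this
    have hnegi : Integrable (fun ω => exp (θ * (-Z) ω)) μ := by
      have := hint (-θ); simpa [neg_mul, mul_neg] using this
    calc (μ {ω | lam < |Z ω|}).toReal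
        ≤ (μ ({ω | lam ≤ Z ω} ∪ {ω | lam ≤ -Z ω})).toReal := by
          apply ENNReal.toReal_mono (measure_ne_top μ _) (measure_mono hsub)
      _ ≤ ((μ {ω | lam ≤ Z ω}) + μ {ω | lam ≤ -Z ω}).toReal :=
          ENNReal.toReal_mono (by finiteness) (measure_union_le _ _)
      _ = (μ {ω | lam ≤ Z ω}).toReal + (μ {ω | lam ≤ (-Z) ω}).toReal :=
          ENNReal.toReal_add (measure_ne_top μ _) (measure_ne_top μ _)
      _ ≤ exp (-x) + exp (-x) := by
          gcongr
          · exact hbound Z (hint θ) (hmgf θ)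
          · exact hbound (-Z) hnegi hneg
      _ ≤ Real.sqrt 2 * exp (-(x / 2)) := by
          have he : exp (-x) = exp (-(x/2)) * exp (-(x/2)) := by
            rw [← Real.exp_add]; ring_nf
          have h2 : exp (-(x/2)) ≤ exp (-(Real.log 2 / 2)) := by
            rw [exp_le_exp]; linarith
          have h3 : exp (-(Real.log 2 / 2)) = (Real.sqrt 2)⁻¹ := by
            rw [my_sqrt_two_eq, ← Real.exp_neg]
          have hs2 : (0:ℝ) < Real.sqrt 2 := by positivity
          calc exp (-x) + exp (-x) = 2 * (exp (-(x/2)) * exp (-(x/2))) := by rw [← he]; ring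
            _ ≤ 2 * ((Real.sqrt 2)⁻¹ * exp (-(x/2))) := by
                gcongr 2 * (?_ * _)
                rw [← h3]; exact h2
            _ = Real.sqrt 2 * exp (-(x/2)) := by
                have hss : Real.sqrt 2 * Real.sqrt 2 = 2 := Real.mul_self_sqrt (by norm_num)
                have h6 : (2:ℝ) * (Real.sqrt 2)⁻¹ = Real.sqrt 2 := by
                  field_simp
                  rw [Real.sq_sqrt (by norm_num)]
                calc 2 * ((Real.sqrt 2)⁻¹ * exp (-(x/2)))
                    = (2 * (Real.sqrt 2)⁻¹) * exp (-(x/2)) := by ring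
                  _ = Real.sqrt 2 * exp (-(x/2)) := by rw [h6]
      -- done
  · -- trivial case
    have h1 : (μ {ω | lam < |Z ω|}).toReal ≤ 1 := by
      rw [← ENNReal.toReal_one]
      exact ENNReal.toReal_mono (by simp) prob_le_one
    have h2 : (1:ℝ) ≤ Real.sqrt 2 * exp (-(x / 2)) := by
      have h3 : exp (-(Real.log 2 / 2)) ≤ exp (-(x/2)) := by
        rw [exp_le_exp]; linarith
      have h4 : Real.sqrt 2 * exp (-(Real.log 2 / 2)) = 1 := by
        rw [my_sqrt_two_eq, ← Real.exp_add]
        simp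
      calc (1:ℝ) = Real.sqrt 2 * exp (-(Real.log 2 / 2)) := h4.symm
        _ ≤ Real.sqrt 2 * exp (-(x/2)) := by gcongr
    linarith


lemma my_key_arith {C K pr n A s d Br Bt : ℝ} (hC : 1 ≤ C) (hK : 0 < K) (hpr : 3 < pr)
    (hn : 0 < n) (hs : d * (C * n) = s)
    (hA'0 : 0 ≤ A - 2 * d * s + d ^ 2 * n) (hBrt : Br ≤ Bt)
    (hBtn : 8 * C * pr * K ^ 2 * n ≤ Bt) :
    Br * (A - 2 * d * s + d ^ 2 * n) / 2 + (-s) ^ 2 * (4 * K) ^ 2 / 2 ≤ Bt * A / 2 := by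
  subst hs
  have hstep1 := mul_le_mul_of_nonneg_right hBrt hA'0
  have h2C : (0:ℝ) ≤ 2 * C - 1 := by linarith
  have hP3 : (0:ℝ) ≤ pr * (2 * C - 1) - 2 * C := by
    have := mul_le_mul_of_nonneg_right (le_of_lt hpr) h2C
    linarith
  have hP4 : 0 ≤ (pr * (2 * C - 1) - 2 * C) * (4 * C * K ^ 2 * n ^ 2 * d ^ 2) := by
    apply mul_nonneg hP3 (by positivity)
  have hP2 := mul_le_mul_of_nonneg_right hBtn
    (div_nonneg (mul_nonneg (mul_nonneg (sq_nonneg d) hn.le) h2C) (by norm_num : (0:ℝ) ≤ 2))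
  nlinarith [hstep1, hP2, hP4]

set_option maxHeartbeats 1000000 in
/-- Single-neuron one-bit quantization error bound. Running the stochastic
path-following algorithm (`u₀ = 0`, `q_t = Q(v_t)` where
`v_t = w_t + ⟨u_{t−1}, X_t⟩/(C‖X_t‖²)`, `u_t = u_{t−1} + (w_t − q_t) X_t`) with the
stochastic quantizer `Q` taking values in the alphabet `{4Kk ± 2K : k ∈ ℤ}`,
unbiased conditionally on the past and satisfying `|Q(v) − v| ≤ 4K` a.s., we have,
with probability at least
`1 − Σ_{t=2}^{N₀} √2·exp(−C‖X_t‖²/(32π·max_{1≤i≤t−1}‖X_i‖²)) − √2·m·N₀^{−p}`,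
both `‖Xw − Xq‖_∞ = ‖u_{N₀}‖_∞ ≤ 4K√(2πCp log N₀)·max_{1≤i≤N₀}‖X_i‖` and
`‖q‖_∞ ≤ 2K`. -/
theorem one_bit_quantization_error_bound {m N₀ : ℕ} {Ω : Type*} [MeasurableSpace Ω]
    (μ : Measure Ω) [IsProbabilityMeasure μ]
    (hN₀ : 1 ≤ N₀) (C p K : ℝ) (hC : 1 ≤ C) (hp : 1 ≤ p) (hK : 0 < K)
    (w : ℕ → ℝ) (hw : ∀ t, 1 ≤ t → t ≤ N₀ → |w t| < K)
    (X : ℕ → Fin m → ℝ) (hX : ∀ t, 1 ≤ t → t ≤ N₀ → X t ≠ 0)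
    (q : ℕ → Ω → ℝ) (hq : ∀ t, Measurable (q t))
    (u : ℕ → Ω → Fin m → ℝ) (hu0 : u 0 = 0)
    (v : ℕ → Ω → ℝ)
    (hv : ∀ t ω, v t ω =
      w t + (∑ j, u (t - 1) ω j * X t j) / (C * ∑ j, X t j ^ 2))
    (hu : ∀ t, 1 ≤ t → u t = fun ω => u (t - 1) ω + (w t - q t ω) • X t)
    -- the quantizer takes values in the alphabet `{…, −6K, −2K, 2K, 6K, …}`
    (hgrid : ∀ t, 1 ≤ t → t ≤ N₀ → ∀ᵐ ω ∂μ, ∃ k : ℤ,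
      q t ω = 4 * K * k + 2 * K ∨ q t ω = 4 * K * k - 2 * K)
    -- it stochastically rounds to an adjacent alphabet element: error at most `4K`
    (hbdd : ∀ t, 1 ≤ t → t ≤ N₀ → ∀ᵐ ω ∂μ, |q t ω - v t ω| ≤ 4 * K)
    -- and is conditionally unbiased given the past randomness
    (past : ℕ → MeasurableSpace Ω)
    (hpast : ∀ t, past t = ⨆ s ∈ Set.Ico 1 t,
      MeasurableSpace.comap (q s) (inferInstance : MeasurableSpace ℝ))
    (hmean : ∀ t, 1 ≤ t → t ≤ N₀ →
      μ[(fun ω => q t ω - v t ω) | past t] =ᵐ[μ] 0)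
    -- running maximum of the squared column norms
    (Mx : ℕ → ℝ)
    (hMx : ∀ t (ht : 1 ≤ t), Mx t =
      (Finset.Icc 1 t).sup' (Finset.nonempty_Icc.mpr ht) (fun i => ∑ j, X i j ^ 2)) :
    1 - (∑ t ∈ Finset.Icc 2 N₀,
          Real.sqrt 2 * Real.exp (-(C * ∑ j, X t j ^ 2) / (32 * π * Mx (t - 1))))
      - Real.sqrt 2 * m * (N₀ : ℝ) ^ (-p) ≤
    (μ {ω | ‖u N₀ ω‖ ≤ 4 * K * Real.sqrt (2 * π * C * p * Real.log N₀) *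
              Real.sqrt (Mx N₀) ∧
            ∀ t, 1 ≤ t → t ≤ N₀ → |q t ω| ≤ 2 * K}).toReal := by
  have hπ : (3:ℝ) < π := Real.pi_gt_three
  have hπ0 : (0:ℝ) < π := by linarith
  have hC0 : (0:ℝ) < C := by linarith
  have hN₀R : (0:ℝ) < (N₀:ℝ) := by exact_mod_cast hN₀
  have hlog0 : 0 ≤ Real.log N₀ := Real.log_nonneg (by exact_mod_cast hN₀)
  -- positivity of column norms
  have hn2 : ∀ t, 1 ≤ t → t ≤ N₀ → 0 < ∑ j, X t j ^ 2 := by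
    intro t h1 h2
    obtain ⟨j, hj⟩ := Function.ne_iff.mp (hX t h1 h2)
    refine Finset.sum_pos' (fun i _ => sq_nonneg _) ⟨j, Finset.mem_univ j, ?_⟩
    exact lt_of_le_of_ne (sq_nonneg _) (Ne.symm (pow_ne_zero 2 hj))
  -- facts about Mx
  have hMxmem : ∀ t i, 1 ≤ i → i ≤ t → (∑ j, X i j ^ 2) ≤ Mx t := by
    intro t i h1 h2
    rw [hMx t (h1.trans h2)]
    exact Finset.le_sup' (fun i => ∑ j, X i j ^ 2) (Finset.mem_Icc.mpr ⟨h1, h2⟩)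
  have hMxpos : ∀ t, 1 ≤ t → t ≤ N₀ → 0 < Mx t := fun t h1 h2 =>
    lt_of_lt_of_le (hn2 t h1 h2) (hMxmem t t h1 le_rfl)
  have hMxmono : ∀ s t, 1 ≤ s → s ≤ t → Mx s ≤ Mx t := by
    intro s t h1 h2
    rw [hMx s h1, hMx t (h1.trans h2)]
    refine Finset.sup'_le _ (fun i => ∑ j, X i j ^ 2) fun i hi => ?_
    rw [Finset.mem_Icc] at hi
    exact Finset.le_sup' (fun i => ∑ j, X i j ^ 2) (Finset.mem_Icc.mpr ⟨hi.1, hi.2.trans h2⟩)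
  -- the variance proxy
  set Bc : ℕ → ℝ := fun t => if t = 0 then 0 else 8 * C * π * K ^ 2 * Mx t with hBcdef
  have hBc0 : Bc 0 = 0 := by simp [hBcdef]
  have hBceq : ∀ t, 1 ≤ t → Bc t = 8 * C * π * K ^ 2 * Mx t := by
    intro t ht; simp [hBcdef, (show t ≠ 0 by omega)]
  have hBcpos : ∀ t, 1 ≤ t → t ≤ N₀ → 0 < Bc t := by
    intro t h1 h2
    rw [hBceq t h1]
    have := hMxpos t h1 h2
    positivity
  have hBcmono : ∀ r t, r ≤ t → 1 ≤ t → t ≤ N₀ → Bc r ≤ Bc t := by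
    intro r t hrt h1 h2
    rcases Nat.eq_zero_or_pos r with hr | hr
    · rw [hr, hBc0]; exact (hBcpos t h1 h2).le
    · rw [hBceq r hr, hBceq t h1]
      have := hMxmono r t hr hrt
      have hpos : (0:ℝ) < 8 * C * π * K ^ 2 := by positivity
      nlinarith
  have hBcge : ∀ t, 1 ≤ t → t ≤ N₀ → 8 * C * π * K ^ 2 * (∑ j, X t j ^ 2) ≤ Bc t := by
    intro t h1 h2
    rw [hBceq t h1]
    have := hMxmem t t h1 le_rfl
    have hpos : (0:ℝ) < 8 * C * π * K ^ 2 := by positivity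
    nlinarith
  -- measurability of u
  have hum : ∀ r j, Measurable fun ω => u r ω j := by
    intro r
    induction r with
    | zero => intro j; simp only [hu0, Pi.zero_apply]; exact measurable_const
    | succ r ih =>
      intro j
      simp only [hu (r + 1) (by omega), Nat.add_sub_cancel, Pi.add_apply, Pi.smul_apply,
        smul_eq_mul]
      exact (ih j).add ((measurable_const.sub (hq (r + 1))).mul measurable_const)
  -- past σ-algebras
  have hpast_le : ∀ t, past t ≤ ‹MeasurableSpace Ω› := by
    intro t; rw [hpast t]
    exact iSup_le fun s => iSup_le fun _ => (hq s).comap_le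
  have hqpast : ∀ s t, 1 ≤ s → s < t → Measurable[past t] (q s) := by
    intro s t h1 h2
    rw [measurable_iff_comap_le, hpast t]
    exact le_biSup (f := fun s => MeasurableSpace.comap (q s) inferInstance)
      (Set.mem_Ico.mpr ⟨h1, h2⟩)
  have humpast : ∀ r, ∀ t, r < t → ∀ j, Measurable[past t] fun ω => u r ω j := by
    intro r
    induction r with
    | zero => intro t _ j; simp only [hu0, Pi.zero_apply]; exact measurable_const
    | succ r ih =>
      intro t hrt j
      simp only [hu (r + 1) (by omega), Nat.add_sub_cancel, Pi.add_apply, Pi.smul_apply,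
        smul_eq_mul]
      exact (ih t (by omega) j).add
        ((measurable_const.sub (hqpast (r + 1) t (by omega) hrt)).mul measurable_const)
  -- a.e. boundedness of u
  have hbdd_u : ∀ r, r ≤ N₀ → ∃ R : ℝ, ∀ᵐ ω ∂μ, ∀ j, |u r ω j| ≤ R := by
    intro r
    induction r with
    | zero =>
      intro _
      exact ⟨0, Filter.Eventually.of_forall fun ω j => by simp [hu0]⟩
    | succ r ih =>
      intro hr
      obtain ⟨R, hR⟩ := ih (by omega)
      have h1t : 1 ≤ r + 1 := by omega
      have htN : r + 1 ≤ N₀ := hr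
      have hn := hn2 (r + 1) h1t htN
      refine ⟨R + (R * (∑ i, |X (r + 1) i|) / (C * ∑ i, X (r + 1) i ^ 2) + 4 * K) *
        (∑ i, |X (r + 1) i|), ?_⟩
      filter_upwards [hR, hbdd (r + 1) h1t htN] with ω hω hqv
      intro j
      have hust : u (r + 1) ω j = u r ω j + (w (r + 1) - q (r + 1) ω) * X (r + 1) j := by
        rw [hu (r + 1) h1t]
        simp [Nat.add_sub_cancel]
      have hZ : |∑ i, u r ω i * X (r + 1) i| ≤ R * ∑ i, |X (r + 1) i| := by
        calc |∑ i, u r ω i * X (r + 1) i| ≤ ∑ i, |u r ω i * X (r + 1) i| :=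
              Finset.abs_sum_le_sum_abs _ _
          _ ≤ ∑ i, R * |X (r + 1) i| := Finset.sum_le_sum fun i _ => by
              rw [abs_mul]; exact mul_le_mul_of_nonneg_right (hω i) (abs_nonneg _)
          _ = R * ∑ i, |X (r + 1) i| := by rw [Finset.mul_sum]
      have hCn : (0:ℝ) < C * ∑ i, X (r + 1) i ^ 2 := by positivity
      have hwv : |w (r + 1) - v (r + 1) ω| ≤
          R * (∑ i, |X (r + 1) i|) / (C * ∑ i, X (r + 1) i ^ 2) := by
        have hveq : v (r + 1) ω = w (r + 1) +
            (∑ i, u r ω i * X (r + 1) i) / (C * ∑ i, X (r + 1) i ^ 2) := by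
          rw [hv (r + 1) ω]; simp [Nat.add_sub_cancel]
        rw [hveq]
        have : w (r + 1) - (w (r + 1) +
            (∑ i, u r ω i * X (r + 1) i) / (C * ∑ i, X (r + 1) i ^ 2)) =
            -((∑ i, u r ω i * X (r + 1) i) / (C * ∑ i, X (r + 1) i ^ 2)) := by ring
        rw [this, abs_neg, abs_div, abs_of_pos hCn]
        exact (div_le_div_iff_of_pos_right hCn).mpr hZ
      have hwq : |w (r + 1) - q (r + 1) ω| ≤
          R * (∑ i, |X (r + 1) i|) / (C * ∑ i, X (r + 1) i ^ 2) + 4 * K := by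
        calc |w (r + 1) - q (r + 1) ω|
            = |(w (r + 1) - v (r + 1) ω) - (q (r + 1) ω - v (r + 1) ω)| := by ring_nf
          _ ≤ |w (r + 1) - v (r + 1) ω| + |q (r + 1) ω - v (r + 1) ω| := abs_sub _ _
          _ ≤ R * (∑ i, |X (r + 1) i|) / (C * ∑ i, X (r + 1) i ^ 2) + 4 * K :=
              add_le_add hwv hqv
      have hXj : |X (r + 1) j| ≤ ∑ i, |X (r + 1) i| :=
        Finset.single_le_sum (f := fun i => |X (r + 1) i|) (fun i _ => abs_nonneg _)
          (Finset.mem_univ j)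
      calc |u (r + 1) ω j| ≤ |u r ω j| + |w (r + 1) - q (r + 1) ω| * |X (r + 1) j| := by
            rw [hust]
            refine (abs_add_le _ _).trans ?_
            rw [abs_mul]
          _ ≤ R + (R * (∑ i, |X (r + 1) i|) / (C * ∑ i, X (r + 1) i ^ 2) + 4 * K) *
              (∑ i, |X (r + 1) i|) := by
            exact add_le_add (hω j)
              (mul_le_mul hwq hXj (abs_nonneg _) (le_trans (abs_nonneg _) hwq))
  -- the mgf induction
  have hexp_int : ∀ f : Ω → ℝ, Measurable f → (∃ c, ∀ᵐ ω ∂μ, |f ω| ≤ c) →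
      Integrable (fun ω => exp (f ω)) μ := by
    rintro f hf ⟨c, hc⟩
    refine my_int_of_bdd (Real.measurable_exp.comp hf).aestronglyMeasurable (c := exp c) ?_
    filter_upwards [hc] with ω hω
    rw [abs_of_pos (exp_pos _), exp_le_exp]
    exact le_trans (le_abs_self _) hω
  have key : ∀ r, r ≤ N₀ → ∀ a : Fin m → ℝ,
      ∫ ω, exp (∑ j, u r ω j * a j) ∂μ ≤ exp (Bc r * (∑ j, a j ^ 2) / 2) := by
    intro r
    induction r with
    | zero =>
      intro _ a
      simp only [hu0, Pi.zero_apply, zero_mul, Finset.sum_const_zero, Real.exp_zero, hBc0,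
        zero_div]
      simp
    | succ r ih =>
      intro hr a
      have h1t : 1 ≤ r + 1 := by omega
      have htN : r + 1 ≤ N₀ := hr
      have hn : 0 < ∑ i, X (r + 1) i ^ 2 := hn2 _ h1t htN
      have hCn : (0:ℝ) < C * ∑ i, X (r + 1) i ^ 2 := by positivity
      set n : ℝ := ∑ i, X (r + 1) i ^ 2 with hndef
      set s : ℝ := ∑ i, X (r + 1) i * a i with hsdef
      set a' : Fin m → ℝ := fun i => a i - s / (C * n) * X (r + 1) i with ha'def
      set Y : Ω → ℝ := fun ω => q (r + 1) ω - v (r + 1) ω with hYdef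
      have hid : ∀ ω, ∑ j, u (r + 1) ω j * a j = (∑ j, u r ω j * a' j) + (-s) * Y ω := by
        intro ω
        have hut : ∀ j, u (r + 1) ω j = u r ω j + (w (r + 1) - q (r + 1) ω) * X (r + 1) j := by
          intro j; rw [hu (r + 1) h1t]; simp [Nat.add_sub_cancel]
        have hvt : v (r + 1) ω = w (r + 1) + (∑ j, u r ω j * X (r + 1) j) / (C * n) := by
          rw [hv (r + 1) ω]; simp [Nat.add_sub_cancel, hndef]
        have e1 : ∑ j, u (r + 1) ω j * a j
            = (∑ j, u r ω j * a j) + (w (r + 1) - q (r + 1) ω) * s := by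
          calc ∑ j, u (r + 1) ω j * a j
              = ∑ j, (u r ω j * a j + (w (r + 1) - q (r + 1) ω) * (X (r + 1) j * a j)) :=
                Finset.sum_congr rfl fun j _ => by rw [hut j]; ring
            _ = (∑ j, u r ω j * a j) + (w (r + 1) - q (r + 1) ω) * s := by
                rw [Finset.sum_add_distrib, ← Finset.mul_sum, ← hsdef]
        have e2 : ∑ j, u r ω j * a' j
            = (∑ j, u r ω j * a j) - s / (C * n) * ∑ j, u r ω j * X (r + 1) j := by
          calc ∑ j, u r ω j * a' j
              = ∑ j, (u r ω j * a j - s / (C * n) * (u r ω j * X (r + 1) j)) :=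
                Finset.sum_congr rfl fun j _ => by simp only [ha'def]; ring
            _ = (∑ j, u r ω j * a j) - s / (C * n) * ∑ j, u r ω j * X (r + 1) j := by
                rw [Finset.sum_sub_distrib, ← Finset.mul_sum]
        simp only [hYdef]
        rw [e1, e2, hvt]
        field_simp
        ring
      set F : Ω → ℝ := fun ω => exp (∑ j, u r ω j * a' j) with hFdef
      set G : Ω → ℝ := fun ω => exp (-s * Y ω) with hGdef
      obtain ⟨R, hR⟩ := hbdd_u r (by omega)
      obtain ⟨R', hR'⟩ := hbdd_u (r + 1) htN
      have hvm : Measurable (v (r + 1)) := by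
        have hveq : v (r + 1) = fun ω => w (r + 1) + (∑ j, u r ω j * X (r + 1) j) / (C * n) :=
          funext fun ω => by rw [hv (r + 1) ω]; simp [Nat.add_sub_cancel, hndef]
        rw [hveq]
        exact measurable_const.add
          ((Finset.measurable_sum _ fun j _ => (hum r j).mul_const _).div_const _)
      have hYm : Measurable Y := by rw [hYdef]; exact (hq (r + 1)).sub hvm
      have hYbd : ∀ᵐ ω ∂μ, |Y ω| ≤ 4 * K := by
        simpa only [hYdef] using hbdd (r + 1) h1t htN
      have hFm : Measurable F := by
        rw [hFdef]
        exact Real.measurable_exp.comp (Finset.measurable_sum _ fun j _ => (hum r j).mul_const _)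
      have hGm : Measurable G := by
        rw [hGdef]; exact Real.measurable_exp.comp (hYm.const_mul _)
      have hFpast : StronglyMeasurable[past (r + 1)] F := by
        rw [hFdef]
        exact (Real.measurable_exp.comp (Finset.measurable_sum _ fun j _ =>
          ((humpast r (r + 1) (by omega) j).mul_const _))).stronglyMeasurable
      have hFint : Integrable F μ := by
        rw [hFdef]
        refine hexp_int _ (Finset.measurable_sum _ fun j _ => (hum r j).mul_const _)
          ⟨R * ∑ j, |a' j|, ?_⟩
        filter_upwards [hR] with ω hω
        calc |∑ j, u r ω j * a' j| ≤ ∑ j, |u r ω j * a' j| := Finset.abs_sum_le_sum_abs _ _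
          _ ≤ ∑ j, R * |a' j| := Finset.sum_le_sum fun j _ => by
              rw [abs_mul]; exact mul_le_mul_of_nonneg_right (hω j) (abs_nonneg _)
          _ = R * ∑ j, |a' j| := by rw [Finset.mul_sum]
      have hGint : Integrable G μ := by
        rw [hGdef]
        refine hexp_int _ (hYm.const_mul _) ⟨|s| * (4 * K), ?_⟩
        filter_upwards [hYbd] with ω hω
        calc |-s * Y ω| = |s| * |Y ω| := by rw [abs_mul, abs_neg]
          _ ≤ |s| * (4 * K) := mul_le_mul_of_nonneg_left hω (abs_nonneg _)
      have hFG_eq : (fun ω => exp (∑ j, u (r + 1) ω j * a j)) = fun ω => F ω * G ω := by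
        funext ω
        rw [hid ω, Real.exp_add]
      have hFGint : Integrable (fun ω => F ω * G ω) μ := by
        rw [← hFG_eq]
        refine hexp_int _ (Finset.measurable_sum _ fun j _ => (hum (r + 1) j).mul_const _)
          ⟨R' * ∑ j, |a j|, ?_⟩
        filter_upwards [hR'] with ω hω
        calc |∑ j, u (r + 1) ω j * a j| ≤ ∑ j, |u (r + 1) ω j * a j| :=
              Finset.abs_sum_le_sum_abs _ _
          _ ≤ ∑ j, R' * |a j| := Finset.sum_le_sum fun j _ => by
              rw [abs_mul]; exact mul_le_mul_of_nonneg_right (hω j) (abs_nonneg _)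
          _ = R' * ∑ j, |a j| := by rw [Finset.mul_sum]
      have hmg := cond_hoeffding (μ := μ) (hpast_le (r + 1)) hYm.aestronglyMeasurable
        (show (0:ℝ) < 4 * K by positivity) hYbd
        (by simpa only [hYdef] using hmean (r + 1) h1t htN) (-s)
      have hGdef' : G = fun ω => exp (-s * Y ω) := hGdef
      have hpull : μ[fun ω => F ω * G ω|past (r + 1)] =ᵐ[μ] F * μ[G|past (r + 1)] :=
        condExp_mul_of_stronglyMeasurable_left hFpast hFGint hGint
      have hcondint : Integrable (F * μ[G|past (r + 1)]) μ := integrable_condExp.congr hpull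
      -- the key arithmetic inequality
      have hA' : ∑ j, a' j ^ 2
          = (∑ j, a j ^ 2) - 2 * (s / (C * n)) * s + (s / (C * n)) ^ 2 * n := by
        calc ∑ j, a' j ^ 2
            = ∑ j, (a j ^ 2 - 2 * (s / (C * n)) * (X (r + 1) j * a j)
                + (s / (C * n)) ^ 2 * X (r + 1) j ^ 2) :=
              Finset.sum_congr rfl fun j _ => by simp only [ha'def]; ring
          _ = (∑ j, a j ^ 2) - 2 * (s / (C * n)) * s + (s / (C * n)) ^ 2 * n := by
              rw [Finset.sum_add_distrib, Finset.sum_sub_distrib, ← Finset.mul_sum,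
                ← Finset.mul_sum, ← hsdef, ← hndef]
      have harith : Bc r * (∑ j, a' j ^ 2) / 2 + (-s) ^ 2 * (4 * K) ^ 2 / 2
          ≤ Bc (r + 1) * (∑ j, a j ^ 2) / 2 := by
        have hA'0 : (0:ℝ) ≤ ∑ j, a' j ^ 2 := Finset.sum_nonneg fun j _ => sq_nonneg _
        have hBrt : Bc r ≤ Bc (r + 1) := hBcmono r (r + 1) (by omega) h1t htN
        have hBtn : 8 * C * π * K ^ 2 * n ≤ Bc (r + 1) := hBcge (r + 1) h1t htN
        have hCn' : C * n ≠ 0 := ne_of_gt hCn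
        rw [hA'] at hA'0 ⊢
        exact my_key_arith hC hK hπ hn (div_mul_cancel₀ s hCn') hA'0 hBrt hBtn
      calc ∫ ω, exp (∑ j, u (r + 1) ω j * a j) ∂μ
          = ∫ ω, F ω * G ω ∂μ := by rw [hFG_eq]
        _ = ∫ ω, (μ[fun ω => F ω * G ω|past (r + 1)]) ω ∂μ :=
            (integral_condExp (hpast_le (r + 1))).symm
        _ = ∫ ω, (F * μ[G|past (r + 1)]) ω ∂μ := integral_congr_ae hpull
        _ ≤ ∫ ω, F ω * exp ((-s) ^ 2 * (4 * K) ^ 2 / 2) ∂μ := by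
            refine integral_mono_ae hcondint (hFint.mul_const _) ?_
            filter_upwards [hmg] with ω hω
            simp only [Pi.mul_apply]
            refine mul_le_mul_of_nonneg_left ?_ ?_
            · exact hω
            · simp only [hFdef]; exact (exp_pos _).le
        _ = (∫ ω, F ω ∂μ) * exp ((-s) ^ 2 * (4 * K) ^ 2 / 2) := integral_mul_const _ _
        _ ≤ exp (Bc r * (∑ j, a' j ^ 2) / 2) * exp ((-s) ^ 2 * (4 * K) ^ 2 / 2) := by
            refine mul_le_mul_of_nonneg_right ?_ (exp_pos _).le
            have := ih (by omega) a'
            simpa only [hFdef] using this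
        _ = exp (Bc r * (∑ j, a' j ^ 2) / 2 + (-s) ^ 2 * (4 * K) ^ 2 / 2) :=
            (Real.exp_add _ _).symm
        _ ≤ exp (Bc (r + 1) * (∑ j, a j ^ 2) / 2) := by
            rw [exp_le_exp]; exact harith
  -- a.e. inclusion of the bad quantizer events
  have hsub_t : ∀ t, 1 ≤ t → t ≤ N₀ → ∀ᵐ ω ∂μ, 2 * K < |q t ω| →
      C * K * (∑ j, X t j ^ 2) < |∑ j, u (t - 1) ω j * X t j| := by
    intro t h1 h2
    have hn := hn2 t h1 h2
    filter_upwards [hgrid t h1 h2, hbdd t h1 h2] with ω hg hb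
    intro hmem
    obtain ⟨k, hk⟩ := hg
    -- q t ω = 2K * o for an odd integer o
    obtain ⟨o, ho, hqo⟩ : ∃ o : ℤ, (o = 2 * k + 1 ∨ o = 2 * k - 1) ∧ q t ω = 2 * K * o := by
      rcases hk with hk | hk
      · exact ⟨2 * k + 1, Or.inl rfl, by rw [hk]; push_cast; ring⟩
      · exact ⟨2 * k - 1, Or.inr rfl, by rw [hk]; push_cast; ring⟩
    have hqabs : |q t ω| = 2 * K * |(o : ℝ)| := by
      rw [hqo, abs_mul, abs_of_pos (show (0:ℝ) < 2 * K by positivity)]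
    have h1o : (1:ℝ) < |(o : ℝ)| := by
      rw [hqabs] at hmem
      nlinarith
    have h3o : (3:ℝ) ≤ |(o : ℝ)| := by
      have h1o' : (1:ℤ) < |o| := by
        have h := h1o
        rw [← Int.cast_abs] at h
        exact_mod_cast h
      have h3o' : (3:ℤ) ≤ |o| := by
        rcases abs_cases o with ⟨he, _⟩ | ⟨he, _⟩ <;> rw [he] at h1o' ⊢ <;> omega
      rw [← Int.cast_abs]
      exact_mod_cast h3o'
    have hq6 : 6 * K ≤ |q t ω| := by
      rw [hqabs]; nlinarith
    have hv2 : 2 * K ≤ |v t ω| := by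
      have := abs_sub_abs_le_abs_sub (q t ω) (v t ω)
      linarith
    have hvw : K < |v t ω - w t| := by
      have h1' := abs_sub_abs_le_abs_sub (v t ω) (w t)
      have hwt := hw t h1 h2
      linarith
    have hveq : v t ω - w t = (∑ j, u (t - 1) ω j * X t j) / (C * ∑ j, X t j ^ 2) := by
      rw [hv t ω]; ring
    rw [hveq, abs_div, abs_of_pos (show (0:ℝ) < C * ∑ j, X t j ^ 2 by positivity)] at hvw
    rw [lt_div_iff₀ (show (0:ℝ) < C * ∑ j, X t j ^ 2 by positivity)] at hvw
    calc C * K * (∑ j, X t j ^ 2) = K * (C * ∑ j, X t j ^ 2) := by ring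
      _ < |∑ j, u (t - 1) ω j * X t j| := hvw
  -- per-column probability bound
  have hcol : ∀ t, 2 ≤ t → t ≤ N₀ → (μ {ω | 2 * K < |q t ω|}).toReal ≤
      Real.sqrt 2 * Real.exp (-(C * ∑ j, X t j ^ 2) / (32 * π * Mx (t - 1))) := by
    intro t h2t htN
    have h1t : 1 ≤ t := by omega
    have h1t' : 1 ≤ t - 1 := by omega
    have htN' : t - 1 ≤ N₀ := by omega
    have hn := hn2 t h1t htN
    have hBcp : 0 < Bc (t - 1) := hBcpos (t - 1) h1t' htN'
    have hMxp : 0 < Mx (t - 1) := hMxpos (t - 1) h1t' htN'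
    have hmono : μ {ω | 2 * K < |q t ω|} ≤
        μ {ω | C * K * (∑ j, X t j ^ 2) < |∑ j, u (t - 1) ω j * X t j|} := by
      apply measure_mono_ae
      filter_upwards [hsub_t t h1t htN] with ω h hmem
      exact h hmem
    obtain ⟨R, hR⟩ := hbdd_u (t - 1) htN'
    have hZm : Measurable fun ω => ∑ j, u (t - 1) ω j * X t j :=
      Finset.measurable_sum _ fun j _ => (hum (t - 1) j).mul_const _
    have hZbd : ∀ᵐ ω ∂μ, |∑ j, u (t - 1) ω j * X t j| ≤ R * ∑ j, |X t j| := by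
      filter_upwards [hR] with ω hω
      calc |∑ j, u (t - 1) ω j * X t j| ≤ ∑ j, |u (t - 1) ω j * X t j| :=
            Finset.abs_sum_le_sum_abs _ _
        _ ≤ ∑ j, R * |X t j| := Finset.sum_le_sum fun j _ => by
            rw [abs_mul]; exact mul_le_mul_of_nonneg_right (hω j) (abs_nonneg _)
        _ = R * ∑ j, |X t j| := by rw [Finset.mul_sum]
    have hmgf : ∀ θ : ℝ, ∫ ω, exp (θ * ∑ j, u (t - 1) ω j * X t j) ∂μ ≤
        exp (θ ^ 2 * (Bc (t - 1) * ∑ j, X t j ^ 2) / 2) := by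
      intro θ
      have hk := key (t - 1) htN' (fun i => θ * X t i)
      have he1 : ∀ ω, ∑ j, u (t - 1) ω j * (θ * X t j) = θ * ∑ j, u (t - 1) ω j * X t j := by
        intro ω; rw [Finset.mul_sum]; exact Finset.sum_congr rfl fun j _ => by ring
      have he2 : (∑ j, (θ * X t j) ^ 2) = θ ^ 2 * ∑ j, X t j ^ 2 := by
        rw [Finset.mul_sum]; exact Finset.sum_congr rfl fun j _ => by ring
      calc ∫ ω, exp (θ * ∑ j, u (t - 1) ω j * X t j) ∂μ
          = ∫ ω, exp (∑ j, u (t - 1) ω j * (θ * X t j)) ∂μ := by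
            refine integral_congr_ae (Filter.Eventually.of_forall fun ω => ?_)
            dsimp only
            rw [he1 ω]
        _ ≤ exp (Bc (t - 1) * (∑ j, (θ * X t j) ^ 2) / 2) := hk
        _ = exp (θ ^ 2 * (Bc (t - 1) * ∑ j, X t j ^ 2) / 2) := by rw [he2]; ring_nf
    have hchern := chernoff_abs hZm.aestronglyMeasurable hZbd
      (show 0 < Bc (t - 1) * ∑ j, X t j ^ 2 by positivity)
      (show 0 ≤ C * K * ∑ j, X t j ^ 2 by positivity) hmgf
    have hexpeq : -(C * K * (∑ j, X t j ^ 2)) ^ 2 / (4 * (Bc (t - 1) * ∑ j, X t j ^ 2))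
        = -(C * ∑ j, X t j ^ 2) / (32 * π * Mx (t - 1)) := by
      rw [hBceq (t - 1) h1t']
      field_simp
      ring
    calc (μ {ω | 2 * K < |q t ω|}).toReal
        ≤ (μ {ω | C * K * (∑ j, X t j ^ 2) < |∑ j, u (t - 1) ω j * X t j|}).toReal :=
          ENNReal.toReal_mono (measure_ne_top μ _) hmono
      _ ≤ Real.sqrt 2 *
          exp (-(C * K * (∑ j, X t j ^ 2)) ^ 2 / (4 * (Bc (t - 1) * ∑ j, X t j ^ 2))) := hchern
      _ = _ := by rw [hexpeq]
  -- first column: almost surely fine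
  have hcol1 : (μ {ω | 2 * K < |q 1 ω|}).toReal = 0 := by
    have hn := hn2 1 le_rfl hN₀
    have hmono : μ {ω | 2 * K < |q 1 ω|} ≤
        μ {ω | C * K * (∑ j, X 1 j ^ 2) < |∑ j, u (1 - 1) ω j * X 1 j|} := by
      apply measure_mono_ae
      filter_upwards [hsub_t 1 le_rfl hN₀] with ω h hmem
      exact h hmem
    have hempty : {ω | C * K * (∑ j, X 1 j ^ 2) < |∑ j, u (1 - 1) ω j * X 1 j|} = ∅ := by
      ext ω
      simp only [Set.mem_setOf_eq, Set.mem_empty_iff_false, iff_false, not_lt]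
      have hz : ∑ j, u (1 - 1) ω j * X 1 j = 0 := by
        simp [show (1:ℕ) - 1 = 0 from rfl, hu0]
      rw [hz, abs_zero]
      positivity
    rw [hempty, measure_empty] at hmono
    have := le_zero_iff.mp hmono
    simp [this]
  -- per-coordinate probability bound
  set Bd : ℝ := 4 * K * Real.sqrt (2 * π * C * p * Real.log N₀) * Real.sqrt (Mx N₀) with hBddef
  have hBd0 : 0 ≤ Bd := by positivity
  have hcoord : ∀ j : Fin m, (μ {ω | Bd < |u N₀ ω j|}).toReal ≤
      Real.sqrt 2 * (N₀ : ℝ) ^ (-p) := by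
    intro j
    obtain ⟨R, hR⟩ := hbdd_u N₀ le_rfl
    have hBcp : 0 < Bc N₀ := hBcpos N₀ hN₀ le_rfl
    have hMxp : 0 < Mx N₀ := hMxpos N₀ hN₀ le_rfl
    have hZm : Measurable fun ω => u N₀ ω j := hum N₀ j
    have hZbd : ∀ᵐ ω ∂μ, |u N₀ ω j| ≤ R := by filter_upwards [hR] with ω hω; exact hω j
    have hmgf : ∀ θ : ℝ, ∫ ω, exp (θ * u N₀ ω j) ∂μ ≤ exp (θ ^ 2 * Bc N₀ / 2) := by
      intro θ
      have hk := key N₀ le_rfl (fun i => if i = j then θ else 0)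
      have he1 : ∀ ω, (∑ i, u N₀ ω i * (if i = j then θ else 0)) = θ * u N₀ ω j := by
        intro ω
        rw [Finset.sum_eq_single j]
        · simp [mul_comm]
        · intro i _ hij; simp [hij]
        · intro h; exact absurd (Finset.mem_univ j) h
      have he2 : (∑ i, (if i = j then θ else 0) ^ 2) = θ ^ 2 := by
        rw [Finset.sum_eq_single j]
        · simp
        · intro i _ hij; simp [hij]
        · intro h; exact absurd (Finset.mem_univ j) h
      calc ∫ ω, exp (θ * u N₀ ω j) ∂μ
          = ∫ ω, exp (∑ i, u N₀ ω i * (if i = j then θ else 0)) ∂μ := by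
            refine integral_congr_ae (Filter.Eventually.of_forall fun ω => ?_)
            dsimp only
            rw [he1 ω]
        _ ≤ exp (Bc N₀ * (∑ i, (if i = j then θ else 0) ^ 2) / 2) := hk
        _ = exp (θ ^ 2 * Bc N₀ / 2) := by rw [he2]; ring_nf
    have hchern := chernoff_abs hZm.aestronglyMeasurable hZbd hBcp hBd0 hmgf
    have hL0 : 0 ≤ 2 * π * C * p * Real.log N₀ := mul_nonneg (by positivity) hlog0
    have hexpeq : -Bd ^ 2 / (4 * Bc N₀) = -(p * Real.log N₀) := by
      rw [hBddef, hBceq N₀ hN₀, mul_pow, mul_pow, Real.sq_sqrt hL0, Real.sq_sqrt hMxp.le]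
      field_simp
      ring
    have hrp : (N₀ : ℝ) ^ (-p) = exp (-(p * Real.log N₀)) := by
      rw [Real.rpow_def_of_pos hN₀R]; ring_nf
    calc (μ {ω | Bd < |u N₀ ω j|}).toReal
        ≤ Real.sqrt 2 * exp (-Bd ^ 2 / (4 * Bc N₀)) := hchern
      _ = Real.sqrt 2 * (N₀ : ℝ) ^ (-p) := by rw [hexpeq, hrp]
  -- assembling the union bound
  have humN : Measurable (u N₀) := measurable_pi_lambda _ fun j => hum N₀ j
  have hnormm : Measurable fun ω => ‖u N₀ ω‖ := humN.norm
  set Ev : Set Ω := {ω | ‖u N₀ ω‖ ≤ Bd ∧ ∀ t, 1 ≤ t → t ≤ N₀ → |q t ω| ≤ 2 * K} with hEvdef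
  have hB : MeasurableSet {ω | ∀ t, 1 ≤ t → t ≤ N₀ → |q t ω| ≤ 2 * K} := by
    have heq : {ω | ∀ t, 1 ≤ t → t ≤ N₀ → |q t ω| ≤ 2 * K} =
        ⋂ t, ⋂ (_ : 1 ≤ t), ⋂ (_ : t ≤ N₀), {ω | |q t ω| ≤ 2 * K} := by
      ext ω; simp only [Set.mem_iInter, Set.mem_setOf_eq]
    rw [heq]
    exact MeasurableSet.iInter fun t => MeasurableSet.iInter fun _ =>
      MeasurableSet.iInter fun _ => measurableSet_le (hq t).abs measurable_const
  have hEv : MeasurableSet Ev := by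
    rw [hEvdef, Set.setOf_and]
    exact (measurableSet_le hnormm measurable_const).inter hB
  have hsubc : Evᶜ ⊆ (⋃ t ∈ Finset.Icc 1 N₀, {ω | 2 * K < |q t ω|}) ∪
      ⋃ j : Fin m, {ω | Bd < |u N₀ ω j|} := by
    intro ω hω
    simp only [hEvdef, Set.mem_compl_iff, Set.mem_setOf_eq] at hω
    rcases Classical.em (∀ t, 1 ≤ t → t ≤ N₀ → |q t ω| ≤ 2 * K) with hQ | hQ
    · have hP : ¬ ‖u N₀ ω‖ ≤ Bd := fun hP => hω ⟨hP, hQ⟩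
      have hex : ∃ j, Bd < |u N₀ ω j| := by
        by_contra hno
        push_neg at hno
        exact hP ((pi_norm_le_iff_of_nonneg hBd0).mpr fun i => by
          rw [Real.norm_eq_abs]; exact hno i)
      obtain ⟨j, hj⟩ := hex
      exact Or.inr (Set.mem_iUnion.mpr ⟨j, hj⟩)
    · push_neg at hQ
      obtain ⟨t, h1, h2, h3⟩ := hQ
      exact Or.inl (Set.mem_iUnion₂.mpr ⟨t, Finset.mem_Icc.mpr ⟨h1, h2⟩, h3⟩)
  have hEc : (μ Evᶜ).toReal ≤
      (∑ t ∈ Finset.Icc 1 N₀, (μ {ω | 2 * K < |q t ω|}).toReal) +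
      ∑ j : Fin m, (μ {ω | Bd < |u N₀ ω j|}).toReal := by
    have h1 : μ Evᶜ ≤ (∑ t ∈ Finset.Icc 1 N₀, μ {ω | 2 * K < |q t ω|}) +
        ∑ j : Fin m, μ {ω | Bd < |u N₀ ω j|} := by
      refine le_trans (measure_mono hsubc) (le_trans (measure_union_le _ _) ?_)
      gcongr
      · exact measure_biUnion_finset_le _ _
      · exact le_trans (measure_iUnion_le _) (by rw [tsum_fintype])
    have hfin1 : (∑ t ∈ Finset.Icc 1 N₀, μ {ω | 2 * K < |q t ω|}) ≠ ⊤ :=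
      (ENNReal.sum_lt_top.mpr fun _ _ => measure_lt_top μ _).ne
    have hfin2 : (∑ j : Fin m, μ {ω | Bd < |u N₀ ω j|}) ≠ ⊤ :=
      (ENNReal.sum_lt_top.mpr fun _ _ => measure_lt_top μ _).ne
    refine le_trans (ENNReal.toReal_mono (ENNReal.add_ne_top.mpr ⟨hfin1, hfin2⟩) h1) ?_
    rw [ENNReal.toReal_add hfin1 hfin2,
      ENNReal.toReal_sum (fun _ _ => measure_ne_top μ _),
      ENNReal.toReal_sum (fun _ _ => measure_ne_top μ _)]
  have hIccsplit : Finset.Icc 1 N₀ = insert 1 (Finset.Icc 2 N₀) := by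
    ext x; simp only [Finset.mem_Icc, Finset.mem_insert]; omega
  have hsum1 : (∑ t ∈ Finset.Icc 1 N₀, (μ {ω | 2 * K < |q t ω|}).toReal) ≤
      ∑ t ∈ Finset.Icc 2 N₀,
        Real.sqrt 2 * Real.exp (-(C * ∑ j, X t j ^ 2) / (32 * π * Mx (t - 1))) := by
    rw [hIccsplit, Finset.sum_insert (by simp), hcol1, zero_add]
    exact Finset.sum_le_sum fun t ht => by
      rw [Finset.mem_Icc] at ht
      exact hcol t ht.1 ht.2
  have hsum2 : (∑ j : Fin m, (μ {ω | Bd < |u N₀ ω j|}).toReal) ≤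
      Real.sqrt 2 * m * (N₀ : ℝ) ^ (-p) := by
    calc ∑ j : Fin m, (μ {ω | Bd < |u N₀ ω j|}).toReal
        ≤ ∑ _j : Fin m, Real.sqrt 2 * (N₀ : ℝ) ^ (-p) :=
          Finset.sum_le_sum fun j _ => hcoord j
      _ = m * (Real.sqrt 2 * (N₀ : ℝ) ^ (-p)) := by
          rw [Finset.sum_const, Finset.card_univ, Fintype.card_fin, nsmul_eq_mul]
      _ = Real.sqrt 2 * m * (N₀ : ℝ) ^ (-p) := by ring
  have htot : (μ Ev).toReal + (μ Evᶜ).toReal = 1 := by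
    have h := congrArg ENNReal.toReal (measure_add_measure_compl (μ := μ) hEv)
    rwa [ENNReal.toReal_add (measure_ne_top μ _) (measure_ne_top μ _), measure_univ,
      ENNReal.toReal_one] at h
  have hfinal := le_trans hEc (add_le_add hsum1 hsum2)
  linarith [hfinal, htot]
end
end

section
/- (Single-neuron pruning error bound.) Let C ≥ 1, p ≥ 1, K > 0, w ∈ ℝ^{N₀} with ‖w‖_∞ ≤ K, and X ∈ ℝ^{m×N₀} with nonzero columns. Run the stochastic path-following algorithm with the unbiased pruning operator S satisfying |S(v) − v| ≤ K: u₀ = 0, q_t = S(w_t + ⟨u_{t−1}, X_t⟩/(C‖X_t‖²)), u_t = u_{t−1} + (w_t − q_t)X_t. Then P(‖Xw − Xq‖_∞ ≤ K√(2Cπp log N₀)·max_{1≤i≤N₀}‖X_i‖) ≥ 1 − √2·m·N₀^{−p}. -/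
open MeasureTheory ProbabilityTheory Real

noncomputable section

private lemma chord_exp {K x : ℝ} (s : ℝ) (hK : 0 < K) (hx : |x| ≤ K) :
    Real.exp (s * x) ≤ Real.cosh (s * K) + (Real.sinh (s * K) / K) * x := by
  obtain ⟨hx1, hx2⟩ := abs_le.mp hx
  have hK' : K ≠ 0 := hK.ne'
  have ha : 0 ≤ (K - x) / (2 * K) := div_nonneg (by linarith) (by linarith)
  have hb : 0 ≤ (K + x) / (2 * K) := div_nonneg (by linarith) (by linarith)
  have hab : (K - x) / (2 * K) + (K + x) / (2 * K) = 1 := by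
    field_simp; ring
  have h := convexOn_exp.2 (Set.mem_univ (-(s * K))) (Set.mem_univ (s * K)) ha hb hab
  have hxe : ((K - x) / (2 * K)) • (-(s * K)) + ((K + x) / (2 * K)) • (s * K) = s * x := by
    simp only [smul_eq_mul]
    rw [mul_comm ((K - x) / (2 * K)) _, mul_comm ((K + x) / (2 * K)) _,
      mul_div_assoc', mul_div_assoc', ← add_div, div_eq_iff (by positivity : (2:ℝ) * K ≠ 0)]
    ring
  rw [hxe] at h
  refine h.trans (le_of_eq ?_)
  simp only [smul_eq_mul]
  rw [Real.cosh_eq, Real.sinh_eq]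
  field_simp
  ring
set_option maxHeartbeats 2000000 in
/-- Single-neuron pruning error bound. Running the stochastic path-following
algorithm with an unbiased stochastic pruning operator `S` satisfying
`|S(v) − v| ≤ K` a.s. (`u₀ = 0`, `q_t = S(w_t + ⟨u_{t−1}, X_t⟩/(C‖X_t‖²))`,
`u_t = u_{t−1} + (w_t − q_t) X_t`), we have
`P(‖Xw − Xq‖_∞ = ‖u_{N₀}‖_∞ ≤ K√(2Cπp log N₀)·max_{1≤i≤N₀}‖X_i‖) ≥ 1 − √2·m·N₀^{−p}`. -/
theorem pruning_error_bound {m N₀ : ℕ} {Ω : Type*} [MeasurableSpace Ω]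
    (μ : Measure Ω) [IsProbabilityMeasure μ]
    (hN₀ : 1 ≤ N₀) (C p K : ℝ) (hC : 1 ≤ C) (hp : 1 ≤ p) (hK : 0 < K)
    (w : ℕ → ℝ) (hw : ∀ t, 1 ≤ t → t ≤ N₀ → |w t| ≤ K)
    (X : ℕ → Fin m → ℝ) (hX : ∀ t, 1 ≤ t → t ≤ N₀ → X t ≠ 0)
    (q : ℕ → Ω → ℝ) (hq : ∀ t, Measurable (q t))
    (u : ℕ → Ω → Fin m → ℝ) (hu0 : u 0 = 0)
    (v : ℕ → Ω → ℝ)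
    (hv : ∀ t ω, v t ω =
      w t + (∑ j, u (t - 1) ω j * X t j) / (C * ∑ j, X t j ^ 2))
    (hu : ∀ t, 1 ≤ t → u t = fun ω => u (t - 1) ω + (w t - q t ω) • X t)
    (hbdd : ∀ t, 1 ≤ t → t ≤ N₀ → ∀ᵐ ω ∂μ, |q t ω - v t ω| ≤ K)
    (past : ℕ → MeasurableSpace Ω)
    (hpast : ∀ t, past t = ⨆ s ∈ Set.Ico 1 t,
      MeasurableSpace.comap (q s) (inferInstance : MeasurableSpace ℝ))
    (hmean : ∀ t, 1 ≤ t → t ≤ N₀ →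
      μ[(fun ω => q t ω - v t ω) | past t] =ᵐ[μ] 0)
    (Mx : ℕ → ℝ)
    (hMx : ∀ t (ht : 1 ≤ t), Mx t =
      (Finset.Icc 1 t).sup' (Finset.nonempty_Icc.mpr ht) (fun i => ∑ j, X i j ^ 2)) :
    1 - Real.sqrt 2 * m * (N₀ : ℝ) ^ (-p) ≤
    (μ {ω | ‖u N₀ ω‖ ≤ K * Real.sqrt (2 * C * π * p * Real.log N₀) *
              Real.sqrt (Mx N₀)}).toReal := by
  classical
  have hm0 : 0 < m := by
    rcases Nat.eq_zero_or_pos m with h | h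
    · subst h; exact absurd (funext fun j => j.elim0) (hX 1 le_rfl hN₀)
    · exact h
  rcases le_or_gt (1 - Real.sqrt 2 * m * (N₀ : ℝ) ^ (-p)) 0 with htriv | hposlhs
  · exact htriv.trans ENNReal.toReal_nonneg
  have hsq2 : (1:ℝ) ≤ Real.sqrt 2 := by
    rw [show (1:ℝ) = Real.sqrt 1 by simp]
    exact Real.sqrt_le_sqrt one_le_two
  have hm1 : (1:ℝ) ≤ m := by exact_mod_cast hm0
  have hN₀2 : 2 ≤ N₀ := by
    by_contra h
    push_neg at h
    interval_cases N₀
    · rw [Nat.cast_one, Real.one_rpow] at hposlhs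
      nlinarith
  have hC0 : 0 < C := lt_of_lt_of_le one_pos hC
  have h2C1 : 0 < 2 * C - 1 := by linarith
  have hSX : ∀ t, 1 ≤ t → t ≤ N₀ → 0 < ∑ j, X t j ^ 2 := by
    intro t h1 h2
    have hne := hX t h1 h2
    have hex : ∃ j, X t j ≠ 0 := by
      by_contra hall; push_neg at hall; exact hne (funext hall)
    obtain ⟨j, hj⟩ := hex
    exact Finset.sum_pos' (fun i _ => sq_nonneg _) ⟨j, Finset.mem_univ j, by positivity⟩
  have hMxN : ∀ t, 1 ≤ t → t ≤ N₀ → ∑ j, X t j ^ 2 ≤ Mx N₀ := by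
    intro t h1 h2
    rw [hMx N₀ hN₀]
    exact Finset.le_sup' (fun i => ∑ j, X i j ^ 2) (Finset.mem_Icc.mpr ⟨h1, h2⟩)
  have hMx0 : 0 < Mx N₀ := lt_of_lt_of_le (hSX 1 le_rfl hN₀) (hMxN 1 le_rfl hN₀)
  set β : ℝ := K ^ 2 * C ^ 2 / (2 * C - 1) * Mx N₀ with hβ
  have hβ0 : 0 < β := by
    apply mul_pos (div_pos (by positivity) h2C1) hMx0
  -- measurability of u
  have humeas : ∀ t, Measurable (u t) := by
    intro t
    induction t with
    | zero => rw [hu0]; exact measurable_const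
    | succ n ih =>
      rw [hu (n + 1) n.succ_pos]
      simp only [Nat.add_sub_cancel]
      refine measurable_pi_lambda _ fun j => ?_
      simp only [Pi.add_apply, Pi.smul_apply, smul_eq_mul]
      exact ((measurable_pi_apply j).comp ih).add
        ((measurable_const.sub (hq (n + 1))).mul measurable_const)
  have hvmeas : ∀ t, Measurable (v t) := by
    intro t
    have hvt : v t = fun ω => w t + (∑ j, u (t - 1) ω j * X t j) / (C * ∑ j, X t j ^ 2) :=
      funext fun ω => hv t ω
    rw [hvt]
    refine measurable_const.add (Measurable.div ?_ measurable_const)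
    exact Finset.measurable_sum _ fun j _ =>
      ((measurable_pi_apply j).comp (humeas (t - 1))).mul measurable_const
  -- integrability from a.e. bound
  have integ_of_bound : ∀ (f : Ω → ℝ) (B : ℝ), Measurable f → (∀ᵐ ω ∂μ, |f ω| ≤ B) →
      Integrable f μ := fun f B hf hB =>
    (integrable_const B).mono' hf.aestronglyMeasurable (by simpa using hB)
  -- a.s. boundedness of u t
  have hbound : ∀ t, t ≤ N₀ → ∃ B : ℝ, 0 ≤ B ∧ ∀ᵐ ω ∂μ, ∀ j, |u t ω j| ≤ B := by
    intro t
    induction t with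
    | zero => exact fun _ => ⟨0, le_rfl, ae_of_all _ (by simp [hu0])⟩
    | succ n ih =>
      intro hn
      obtain ⟨B, hB0, hBae⟩ := ih (le_trans (Nat.le_succ n) hn)
      have h1t : 1 ≤ n + 1 := n.succ_pos
      have hSXt := hSX (n + 1) h1t hn
      set A : ℝ := ∑ j, |X (n + 1) j| with hA
      have hA0 : 0 ≤ A := Finset.sum_nonneg fun j _ => abs_nonneg _
      refine ⟨B + (2 * K + B * A / (C * ∑ j, X (n + 1) j ^ 2) + K) * A, by positivity, ?_⟩
      filter_upwards [hbdd (n + 1) h1t hn, hBae] with ω hqv hBj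
      intro j
      have hut : u (n + 1) ω j = u n ω j + (w (n + 1) - q (n + 1) ω) * X (n + 1) j := by
        rw [hu (n + 1) h1t]
        simp [Nat.add_sub_cancel]
      have hP : |∑ i, u n ω i * X (n + 1) i| ≤ B * A := by
        calc |∑ i, u n ω i * X (n + 1) i| ≤ ∑ i, |u n ω i * X (n + 1) i| :=
              Finset.abs_sum_le_sum_abs _ _
          _ ≤ ∑ i, B * |X (n + 1) i| := Finset.sum_le_sum fun i _ => by
              rw [abs_mul]; exact mul_le_mul_of_nonneg_right (hBj i) (abs_nonneg _)
          _ = B * A := by rw [hA, Finset.mul_sum]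
      have hvb : |v (n + 1) ω| ≤ K + B * A / (C * ∑ i, X (n + 1) i ^ 2) := by
        rw [hv (n + 1) ω]
        simp only [Nat.add_sub_cancel]
        refine (abs_add_le _ _).trans (add_le_add (hw (n + 1) h1t hn) ?_)
        rw [abs_div, abs_of_pos (mul_pos hC0 hSXt)]
        exact (div_le_div_iff_of_pos_right (mul_pos hC0 hSXt)).mpr hP
      have hXjA : |X (n + 1) j| ≤ A :=
        Finset.single_le_sum (fun i _ => abs_nonneg (X (n + 1) i)) (Finset.mem_univ j)
      have hwq : |w (n + 1) - q (n + 1) ω| ≤ 2 * K + B * A / (C * ∑ i, X (n + 1) i ^ 2) + K := by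
        have e1 : w (n + 1) - q (n + 1) ω = (w (n + 1) - v (n + 1) ω) - (q (n + 1) ω - v (n + 1) ω) := by
          ring
        rw [e1]
        refine (abs_sub _ _).trans ?_
        have h2 : |w (n + 1) - v (n + 1) ω| ≤ |w (n + 1)| + |v (n + 1) ω| := abs_sub _ _
        have h3 := hw (n + 1) h1t hn
        linarith
      rw [hut]
      refine (abs_add_le _ _).trans ?_
      have h4 : |(w (n + 1) - q (n + 1) ω) * X (n + 1) j| ≤
          (2 * K + B * A / (C * ∑ i, X (n + 1) i ^ 2) + K) * A := by
        rw [abs_mul]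
        have hnn : (0:ℝ) ≤ 2 * K + B * A / (C * ∑ i, X (n + 1) i ^ 2) + K := by
          have : (0:ℝ) ≤ B * A / (C * ∑ i, X (n + 1) i ^ 2) :=
            div_nonneg (mul_nonneg hB0 hA0) (mul_pos hC0 hSXt).le
          linarith
        exact mul_le_mul hwq hXjA (abs_nonneg _) hnn
      have := hBj j
      linarith
  -- past σ-algebras
  have hpast_le : ∀ t, past t ≤ (inferInstance : MeasurableSpace Ω) := by
    intro t; rw [hpast t]
    exact iSup₂_le fun s _ => (hq s).comap_le
  have hq_past : ∀ s t, 1 ≤ s → s < t → Measurable[past t] (q s) := by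
    intro s t h1 h2
    rw [hpast t]
    refine measurable_iff_comap_le.mpr ?_
    exact le_iSup₂ (f := fun (s : ℕ) (_ : s ∈ Set.Ico 1 t) =>
      MeasurableSpace.comap (q s) inferInstance) s ⟨h1, h2⟩
  have hu_past : ∀ t s, s < t → Measurable[past t] (u s) := by
    intro t s
    induction s with
    | zero => intro _; rw [hu0]; exact measurable_const
    | succ n ih =>
      intro hlt
      rw [hu (n + 1) n.succ_pos]
      simp only [Nat.add_sub_cancel]
      refine (@measurable_pi_iff Ω (Fin m) (fun _ => ℝ) (past t) _ _).mpr fun j => ?_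
      simp only [Pi.add_apply, Pi.smul_apply, smul_eq_mul]
      refine Measurable.add ?_ ?_
      · exact (measurable_pi_apply j).comp (ih (lt_trans (Nat.lt_succ_self n) hlt))
      · refine Measurable.mul (Measurable.sub ?_ (hq_past (n + 1) t n.succ_pos hlt)) ?_
        · exact measurable_const
        · exact measurable_const
  -- integrability of exponentials
  have hexp_meas : ∀ (r : ℕ) (φ : Fin m → ℝ),
      Measurable (fun ω => Real.exp (∑ j, φ j * u r ω j)) := by
    intro r φ
    exact Real.measurable_exp.comp (Finset.measurable_sum _ fun j _ =>
      ((measurable_pi_apply j).comp (humeas r)).const_mul (φ j))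
  have hexp_int : ∀ (r : ℕ), r ≤ N₀ → ∀ (φ : Fin m → ℝ),
      Integrable (fun ω => Real.exp (∑ j, φ j * u r ω j)) μ := by
    intro r hr φ
    obtain ⟨B, hB0, hBae⟩ := hbound r hr
    refine integ_of_bound _ (Real.exp ((∑ j, |φ j|) * B)) (hexp_meas r φ) ?_
    filter_upwards [hBae] with ω hB'
    rw [abs_of_pos (Real.exp_pos _), Real.exp_le_exp]
    calc ∑ j, φ j * u r ω j ≤ ∑ j, |φ j * u r ω j| :=
          Finset.sum_le_sum fun j _ => le_abs_self _
      _ ≤ ∑ j, |φ j| * B := Finset.sum_le_sum fun j _ => by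
          rw [abs_mul]; exact mul_le_mul_of_nonneg_left (hB' j) (abs_nonneg _)
      _ = (∑ j, |φ j|) * B := (Finset.sum_mul _ _ _).symm
  -- the key sub-Gaussian MGF bound
  have key : ∀ t, t ≤ N₀ → ∀ θ : Fin m → ℝ,
      ∫ ω, Real.exp (∑ j, θ j * u t ω j) ∂μ ≤ Real.exp (β / 2 * ∑ j, (θ j) ^ 2) := by
    intro t
    induction t with
    | zero =>
      intro _ θ
      simp only [hu0, Pi.zero_apply, mul_zero, Finset.sum_const_zero, Real.exp_zero]
      rw [integral_const, probReal_univ, smul_eq_mul, mul_one]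
      refine Real.one_le_exp ?_
      exact mul_nonneg (by linarith) (Finset.sum_nonneg fun j _ => sq_nonneg _)
    | succ n ih =>
      intro hn θ
      have h1t : 1 ≤ n + 1 := n.succ_pos
      have hnN : n ≤ N₀ := le_trans (Nat.le_succ n) hn
      have hSXt := hSX (n + 1) h1t hn
      have hMxt := hMxN (n + 1) h1t hn
      set SX : ℝ := ∑ j, X (n + 1) j ^ 2 with hSXdef
      set s : ℝ := ∑ j, θ j * X (n + 1) j with hsdef
      set c : ℝ := s / (C * SX) with hcdef
      set θ' : Fin m → ℝ := fun j => θ j - c * X (n + 1) j with hθ'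
      have hCSX : C * SX ≠ 0 := (mul_pos hC0 hSXt).ne'
      -- pointwise decomposition
      have hdecomp : ∀ ω, ∑ j, θ j * u (n + 1) ω j
          = (∑ j, θ' j * u n ω j) + s * (v (n + 1) ω - q (n + 1) ω) := by
        intro ω
        have hut : ∀ j, u (n + 1) ω j = u n ω j + (w (n + 1) - q (n + 1) ω) * X (n + 1) j := by
          intro j; rw [hu (n + 1) h1t]; simp [Nat.add_sub_cancel]
        have e1 : ∑ j, θ j * u (n + 1) ω j
            = (∑ j, θ j * u n ω j) + (w (n + 1) - q (n + 1) ω) * s := by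
          rw [hsdef, Finset.mul_sum, ← Finset.sum_add_distrib]
          exact Finset.sum_congr rfl fun j _ => by rw [hut j]; ring
        have e2 : ∑ j, θ' j * u n ω j
            = (∑ j, θ j * u n ω j) - c * (∑ j, u n ω j * X (n + 1) j) := by
          rw [Finset.mul_sum, ← Finset.sum_sub_distrib]
          exact Finset.sum_congr rfl fun j _ => by simp only [hθ']; ring
        rw [e1, e2, hv (n + 1) ω]
        simp only [Nat.add_sub_cancel, ← hSXdef]
        rw [hcdef]
        field_simp
        ring
      set g : Ω → ℝ := fun ω => Real.exp (∑ j, θ' j * u n ω j) with hgdef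
      set e : Ω → ℝ := fun ω => v (n + 1) ω - q (n + 1) ω with hedef
      obtain ⟨B, hB0, hBae⟩ := hbound n hnN
      set Bg : ℝ := Real.exp ((∑ j, |θ' j|) * B) with hBg
      have hgmeas : Measurable g := hexp_meas n θ'
      have hgB : ∀ᵐ ω ∂μ, |g ω| ≤ Bg := by
        filter_upwards [hBae] with ω hB'
        rw [hgdef, hBg, abs_of_pos (Real.exp_pos _), Real.exp_le_exp]
        calc ∑ j, θ' j * u n ω j ≤ ∑ j, |θ' j * u n ω j| :=
              Finset.sum_le_sum fun j _ => le_abs_self _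
          _ ≤ ∑ j, |θ' j| * B := Finset.sum_le_sum fun j _ => by
              rw [abs_mul]; exact mul_le_mul_of_nonneg_left (hB' j) (abs_nonneg _)
          _ = (∑ j, |θ' j|) * B := (Finset.sum_mul _ _ _).symm
      have hgint : Integrable g μ := integ_of_bound g Bg hgmeas hgB
      have hg0 : ∀ ω, 0 ≤ g ω := fun ω => (Real.exp_pos _).le
      have hemeas : Measurable e := (hvmeas (n + 1)).sub (hq (n + 1))
      have heK : ∀ᵐ ω ∂μ, |e ω| ≤ K := by
        filter_upwards [hbdd (n + 1) h1t hn] with ω h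
        rw [hedef]
        calc |v (n + 1) ω - q (n + 1) ω| = |q (n + 1) ω - v (n + 1) ω| := abs_sub_comm _ _
          _ ≤ K := h
      have heint : Integrable e μ := integ_of_bound e K hemeas heK
      have hemean : μ[e | past (n + 1)] =ᵐ[μ] 0 := by
        have h1 : e = -(fun ω => q (n + 1) ω - v (n + 1) ω) := by
          funext ω; simp [hedef]
        rw [h1]
        refine (condExp_neg _ _).trans ?_
        filter_upwards [hmean (n + 1) h1t hn] with ω h
        simp [h]
      have hge_int : Integrable (fun ω => g ω * e ω) μ := by
        refine integ_of_bound _ (Bg * K) (hgmeas.mul hemeas) ?_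
        filter_upwards [hgB, heK] with ω h1 h2
        rw [abs_mul]
        exact mul_le_mul h1 h2 (abs_nonneg _) (Real.exp_pos _).le
      -- ∫ g·e = 0 via conditional expectation
      have hzero : ∫ ω, g ω * e ω ∂μ = 0 := by
        haveI : SigmaFinite (μ.trim (hpast_le (n + 1))) := by
          have : IsFiniteMeasure (μ.trim (hpast_le (n + 1))) := isFiniteMeasure_trim _
          infer_instance
        have hu_past' : Measurable[past (n + 1)] (u n) := hu_past (n + 1) n (Nat.lt_succ_self n)
        have hgmeas' : Measurable[past (n + 1)] g := by
          have hsum : Measurable[past (n + 1)] fun ω => ∑ j, θ' j * u n ω j := by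
            refine Finset.measurable_sum _ fun j _ => ?_
            exact Measurable.const_mul (Measurable.comp (measurable_pi_apply j) hu_past') (θ' j)
          exact Real.measurable_exp.comp hsum
        have hpull := condExp_stronglyMeasurable_mul_of_bound (hpast_le (n + 1))
          hgmeas'.stronglyMeasurable heint Bg (by simpa using hgB)
        have e0 : ∫ ω, g ω * e ω ∂μ = ∫ ω, (μ[g * e | past (n + 1)]) ω ∂μ :=
          (integral_condExp (hpast_le (n + 1))).symm
        rw [e0, integral_congr_ae hpull]
        have hz : ∀ᵐ ω ∂μ, (g * μ[e | past (n + 1)]) ω = 0 := by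
          filter_upwards [hemean] with ω h
          simp [Pi.mul_apply, h]
        rw [integral_congr_ae hz, integral_zero]
      -- chord bound and assembly
      have hInt_t : Integrable (fun ω => g ω * Real.exp (s * e ω)) μ := by
        refine (hexp_int (n + 1) hn θ).congr (ae_of_all _ fun ω => ?_)
        show Real.exp (∑ j, θ j * u (n + 1) ω j) = g ω * Real.exp (s * e ω)
        rw [hdecomp ω, Real.exp_add]
      have hIntRHS : Integrable
          (fun ω => Real.cosh (s * K) * g ω + (Real.sinh (s * K) / K) * (g ω * e ω)) μ :=
        (hgint.const_mul _).add (hge_int.const_mul _)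
      have step2 : ∫ ω, g ω * Real.exp (s * e ω) ∂μ
          ≤ ∫ ω, (Real.cosh (s * K) * g ω + (Real.sinh (s * K) / K) * (g ω * e ω)) ∂μ := by
        refine integral_mono_ae hInt_t hIntRHS ?_
        filter_upwards [heK] with ω hKe
        have hch := chord_exp s hK hKe
        have h2 := mul_le_mul_of_nonneg_left hch (hg0 ω)
        calc g ω * Real.exp (s * e ω)
            ≤ g ω * (Real.cosh (s * K) + Real.sinh (s * K) / K * e ω) := h2
          _ = Real.cosh (s * K) * g ω + (Real.sinh (s * K) / K) * (g ω * e ω) := by ring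
      have step3 : ∫ ω, (Real.cosh (s * K) * g ω + (Real.sinh (s * K) / K) * (g ω * e ω)) ∂μ
          = Real.cosh (s * K) * ∫ ω, g ω ∂μ := by
        rw [integral_add (hgint.const_mul _) (hge_int.const_mul _), integral_const_mul,
          integral_const_mul, hzero, mul_zero, add_zero]
      have hIg0 : 0 ≤ ∫ ω, g ω ∂μ := integral_nonneg hg0
      have step4 : ∫ ω, Real.exp (∑ j, θ j * u (n + 1) ω j) ∂μ
          ≤ Real.exp ((s * K) ^ 2 / 2 + β / 2 * ∑ j, (θ' j) ^ 2) := by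
        have e1 : ∫ ω, Real.exp (∑ j, θ j * u (n + 1) ω j) ∂μ
            = ∫ ω, g ω * Real.exp (s * e ω) ∂μ := by
          refine integral_congr_ae (ae_of_all _ fun ω => ?_)
          show Real.exp (∑ j, θ j * u (n + 1) ω j) = g ω * Real.exp (s * e ω)
          rw [hdecomp ω, Real.exp_add]
        rw [e1, Real.exp_add]
        refine (step2.trans (le_of_eq step3)).trans ?_
        exact mul_le_mul (Real.cosh_le_exp_half_sq _) (ih hnN θ') hIg0 (Real.exp_pos _).le
      refine step4.trans (Real.exp_le_exp.mpr ?_)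
      -- final algebra
      have hθ'sum : ∑ j, (θ' j) ^ 2
          = (∑ j, (θ j) ^ 2) - (2 * C - 1) * s ^ 2 / (C ^ 2 * SX) := by
        have hterm : ∀ j, (θ' j) ^ 2
            = (θ j) ^ 2 - 2 * c * (θ j * X (n + 1) j) + c ^ 2 * (X (n + 1) j) ^ 2 := by
          intro j; simp only [hθ']; ring
        rw [Finset.sum_congr rfl fun j _ => hterm j]
        rw [Finset.sum_add_distrib, Finset.sum_sub_distrib, ← Finset.mul_sum, ← Finset.mul_sum,
          ← hsdef, ← hSXdef, hcdef]
        field_simp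
        ring
      rw [hθ'sum]
      have hβSX : K ^ 2 * s ^ 2 ≤ β * ((2 * C - 1) * s ^ 2 / (C ^ 2 * SX)) := by
        have h1 : β * ((2 * C - 1) * s ^ 2 / (C ^ 2 * SX))
            = K ^ 2 * s ^ 2 * (Mx N₀ / SX) := by
          rw [hβ]; field_simp; rw [div_eq_iff (by linarith)]; ring
        rw [h1]
        have h2 : 1 ≤ Mx N₀ / SX := (one_le_div hSXt).mpr hMxt
        nlinarith [sq_nonneg (K * s), sq_nonneg K, sq_nonneg s]
      nlinarith [hβSX]
  -- Chernoff bound per coordinate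
  set lam : ℝ := K * Real.sqrt (2 * C * π * p * Real.log N₀) * Real.sqrt (Mx N₀) with hlam
  have hlog0 : (0:ℝ) ≤ Real.log N₀ := Real.log_nonneg (by exact_mod_cast hN₀)
  have hpi0 : (0:ℝ) < π := Real.pi_pos
  have hp0 : (0:ℝ) < p := lt_of_lt_of_le one_pos hp
  have harg0 : (0:ℝ) ≤ 2 * C * π * p * Real.log N₀ := by positivity
  have hlam0 : (0:ℝ) ≤ lam := by
    rw [hlam]; positivity
  have hlamsq : lam ^ 2 = K ^ 2 * (2 * C * π * p * Real.log N₀) * Mx N₀ := by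
    rw [hlam, mul_pow, mul_pow, Real.sq_sqrt harg0, Real.sq_sqrt hMx0.le]
  set s0 : ℝ := lam / β with hs0
  have hs00 : 0 ≤ s0 := div_nonneg hlam0 hβ0.le
  have tail : ∀ Y : Ω → ℝ, Integrable (fun ω => Real.exp (s0 * Y ω)) μ →
      (∫ ω, Real.exp (s0 * Y ω) ∂μ ≤ Real.exp (β / 2 * s0 ^ 2)) →
      (μ {ω | lam ≤ Y ω}).toReal ≤ Real.exp (-(lam ^ 2) / (2 * β)) := by
    intro Y hint hbnd
    refine (ProbabilityTheory.measure_ge_le_exp_mul_mgf lam hs00 hint).trans ?_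
    have hmgf : ProbabilityTheory.mgf Y μ s0 = ∫ ω, Real.exp (s0 * Y ω) ∂μ := rfl
    rw [hmgf]
    calc Real.exp (-s0 * lam) * ∫ ω, Real.exp (s0 * Y ω) ∂μ
        ≤ Real.exp (-s0 * lam) * Real.exp (β / 2 * s0 ^ 2) :=
          mul_le_mul_of_nonneg_left hbnd (Real.exp_pos _).le
      _ = Real.exp (-s0 * lam + β / 2 * s0 ^ 2) := (Real.exp_add _ _).symm
      _ = Real.exp (-(lam ^ 2) / (2 * β)) := by
          congr 1
          rw [hs0]
          field_simp
          ring
  have coordTail : ∀ (j : Fin m) (sgn : ℝ), sgn = 1 ∨ sgn = -1 →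
      (μ {ω | lam ≤ sgn * u N₀ ω j}).toReal ≤ Real.exp (-(lam ^ 2) / (2 * β)) := by
    intro j sgn hsgn
    set θ : Fin m → ℝ := fun i => if i = j then sgn * s0 else 0 with hθdef
    have hsgn2 : sgn ^ 2 = 1 := by rcases hsgn with h | h <;> rw [h] <;> norm_num
    have hsum : ∀ ω, ∑ i, θ i * u N₀ ω i = s0 * (sgn * u N₀ ω j) := by
      intro ω
      rw [hθdef, Finset.sum_eq_single j]
      · beta_reduce; rw [if_pos rfl]; ring
      · intro i _ hij; simp [hij]
      · intro h; exact absurd (Finset.mem_univ j) h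
    have hsq : ∑ i, (θ i) ^ 2 = s0 ^ 2 := by
      rw [hθdef, Finset.sum_eq_single j]
      · beta_reduce; rw [if_pos rfl, mul_pow, hsgn2, one_mul]
      · intro i _ hij; simp [hij]
      · intro h; exact absurd (Finset.mem_univ j) h
    have hint : Integrable (fun ω => Real.exp (s0 * (sgn * u N₀ ω j))) μ := by
      refine (hexp_int N₀ le_rfl θ).congr (ae_of_all _ fun ω => ?_)
      show Real.exp (∑ i, θ i * u N₀ ω i) = Real.exp (s0 * (sgn * u N₀ ω j))
      rw [hsum ω]
    have hb : ∫ ω, Real.exp (s0 * (sgn * u N₀ ω j)) ∂μ ≤ Real.exp (β / 2 * s0 ^ 2) := by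
      have := key N₀ le_rfl θ
      rw [hsq] at this
      refine le_trans (le_of_eq ?_) this
      refine integral_congr_ae (ae_of_all _ fun ω => ?_)
      show Real.exp (s0 * (sgn * u N₀ ω j)) = Real.exp (∑ i, θ i * u N₀ ω i)
      rw [hsum ω]
    exact tail (fun ω => sgn * u N₀ ω j) hint hb
  -- union bound
  set Good : Set Ω := {ω | ‖u N₀ ω‖ ≤ lam} with hGoodDef
  have hGoodMeas : MeasurableSet Good := measurableSet_le ((humeas N₀).norm) measurable_const
  set A1 : Fin m → Set Ω := fun j => {ω | lam ≤ 1 * u N₀ ω j} with hA1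
  set A2 : Fin m → Set Ω := fun j => {ω | lam ≤ (-1) * u N₀ ω j} with hA2
  have hsubset : Goodᶜ ⊆ ⋃ j, (A1 j ∪ A2 j) := by
    intro ω hω
    have hω' : ¬ ‖u N₀ ω‖ ≤ lam := hω
    have hex : ¬ ∀ j, ‖u N₀ ω j‖ ≤ lam := fun h => hω' ((pi_norm_le_iff_of_nonneg hlam0).mpr h)
    push_neg at hex
    obtain ⟨j, hj⟩ := hex
    rw [Real.norm_eq_abs] at hj
    refine Set.mem_iUnion.mpr ⟨j, ?_⟩
    rcases lt_abs.mp hj with h | h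
    · exact Or.inl (by show lam ≤ 1 * u N₀ ω j; rw [one_mul]; exact h.le)
    · exact Or.inr (by show lam ≤ (-1) * u N₀ ω j; linarith)
  have hAe : ∀ j, (μ (A1 j ∪ A2 j)).toReal ≤ 2 * Real.exp (-(lam ^ 2) / (2 * β)) := by
    intro j
    have h1 := coordTail j 1 (Or.inl rfl)
    have h2 := coordTail j (-1) (Or.inr rfl)
    have hle : μ (A1 j ∪ A2 j) ≤ μ (A1 j) + μ (A2 j) := measure_union_le _ _
    have h3 := ENNReal.toReal_mono
      (by exact ENNReal.add_ne_top.mpr ⟨measure_ne_top _ _, measure_ne_top _ _⟩) hle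
    rw [ENNReal.toReal_add (measure_ne_top _ _) (measure_ne_top _ _)] at h3
    calc (μ (A1 j ∪ A2 j)).toReal ≤ (μ (A1 j)).toReal + (μ (A2 j)).toReal := h3
      _ ≤ 2 * Real.exp (-(lam ^ 2) / (2 * β)) := by rw [two_mul]; exact add_le_add h1 h2
  have hBad : (μ Goodᶜ).toReal ≤ 2 * m * Real.exp (-(lam ^ 2) / (2 * β)) := by
    have h1 : μ Goodᶜ ≤ ∑ j : Fin m, μ (A1 j ∪ A2 j) :=
      (measure_mono hsubset).trans (measure_iUnion_fintype_le _ _)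
    have hne : (∑ j : Fin m, μ (A1 j ∪ A2 j)) ≠ ⊤ := by
      refine ne_of_lt ?_
      refine ENNReal.sum_lt_top.mpr fun j _ => measure_lt_top _ _
    have h2 : (μ Goodᶜ).toReal ≤ ∑ j : Fin m, (μ (A1 j ∪ A2 j)).toReal := by
      calc (μ Goodᶜ).toReal ≤ (∑ j : Fin m, μ (A1 j ∪ A2 j)).toReal := ENNReal.toReal_mono hne h1
        _ = ∑ j : Fin m, (μ (A1 j ∪ A2 j)).toReal :=
          ENNReal.toReal_sum fun j _ => measure_ne_top _ _
    refine h2.trans ?_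
    calc ∑ j : Fin m, (μ (A1 j ∪ A2 j)).toReal
        ≤ ∑ _j : Fin m, 2 * Real.exp (-(lam ^ 2) / (2 * β)) := Finset.sum_le_sum fun j _ => hAe j
      _ = m * (2 * Real.exp (-(lam ^ 2) / (2 * β))) := by
          rw [Finset.sum_const, Finset.card_univ, Fintype.card_fin, nsmul_eq_mul]
      _ = 2 * m * Real.exp (-(lam ^ 2) / (2 * β)) := by ring
  have hsplitGB : (μ Good).toReal + (μ Goodᶜ).toReal = 1 := by
    rw [← ENNReal.toReal_add (measure_ne_top _ _) (measure_ne_top _ _),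
      measure_add_measure_compl hGoodMeas, measure_univ, ENNReal.toReal_one]
  -- numerics
  have hNpos : (0:ℝ) < (N₀:ℝ) := by positivity
  have hq1 : lam ^ 2 / (2 * β) = π * p * Real.log N₀ * ((2 * C - 1) / C) := by
    rw [hlamsq, hβ]; field_simp
  have hr1 : 1 ≤ (2 * C - 1) / C := by rw [le_div_iff₀ hC0]; linarith
  have hq2 : π * p * Real.log N₀ ≤ lam ^ 2 / (2 * β) := by
    rw [hq1]
    exact le_mul_of_one_le_right (by positivity) hr1
  have hexp1 : Real.exp (-(lam ^ 2) / (2 * β)) ≤ (N₀ : ℝ) ^ (-(π * p)) := by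
    rw [Real.rpow_def_of_pos hNpos, neg_div]
    refine Real.exp_le_exp.mpr ?_
    have e2 : Real.log N₀ * (-(π * p)) = -(π * p * Real.log N₀) := by ring
    rw [e2]
    linarith [hq2]
  have hfin : 2 * m * (N₀:ℝ) ^ (-(π * p)) ≤ Real.sqrt 2 * m * (N₀:ℝ) ^ (-p) := by
    have hsplit2 : (N₀:ℝ) ^ (-(π * p)) = (N₀:ℝ) ^ (-p) * (N₀:ℝ) ^ (-((π - 1) * p)) := by
      rw [← Real.rpow_add hNpos]; ring_nf
    have hbase : (2:ℝ) ≤ (N₀:ℝ) := by exact_mod_cast hN₀2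
    have hexpge : (1:ℝ) ≤ (π - 1) * p := by nlinarith [Real.pi_gt_three]
    have h2N : (2:ℝ) ≤ (N₀:ℝ) ^ ((π - 1) * p) := by
      calc (2:ℝ) = (2:ℝ) ^ (1:ℝ) := (Real.rpow_one 2).symm
        _ ≤ (2:ℝ) ^ ((π - 1) * p) := Real.rpow_le_rpow_of_exponent_le one_le_two hexpge
        _ ≤ (N₀:ℝ) ^ ((π - 1) * p) := Real.rpow_le_rpow (by norm_num) hbase (by linarith)
    have hinv : (N₀:ℝ) ^ (-((π - 1) * p)) ≤ 1 / 2 := by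
      rw [Real.rpow_neg hNpos.le]
      calc ((N₀:ℝ) ^ ((π - 1) * p))⁻¹ ≤ (2:ℝ)⁻¹ := by
            apply inv_anti₀ (by norm_num) h2N
        _ = 1 / 2 := by norm_num
    have hrp0 : (0:ℝ) ≤ (N₀:ℝ) ^ (-p) := (Real.rpow_pos_of_pos hNpos _).le
    rw [hsplit2]
    calc 2 * m * ((N₀:ℝ) ^ (-p) * (N₀:ℝ) ^ (-((π - 1) * p)))
        ≤ 2 * m * ((N₀:ℝ) ^ (-p) * (1 / 2)) := by
          refine mul_le_mul_of_nonneg_left (mul_le_mul_of_nonneg_left hinv hrp0) (by positivity)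
      _ = m * (N₀:ℝ) ^ (-p) := by ring
      _ ≤ Real.sqrt 2 * m * (N₀:ℝ) ^ (-p) := by
          nlinarith [mul_nonneg (mul_nonneg (by linarith : (0:ℝ) ≤ Real.sqrt 2 - 1)
            (by linarith : (0:ℝ) ≤ (m:ℝ))) hrp0]
  have hfinal : (μ Goodᶜ).toReal ≤ Real.sqrt 2 * m * (N₀:ℝ) ^ (-p) := by
    refine hBad.trans ?_
    exact (mul_le_mul_of_nonneg_left hexp1 (by positivity : (0:ℝ) ≤ 2 * m)).trans hfin
  linarith [hsplitGB, hfinal]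
end
end

section
/- (Layer-level pruning bound with 1-Lipschitz activation.) Let ρ : ℝ → ℝ be 1-Lipschitz, C ≥ 1, p ≥ 1, K > 0, W ∈ ℝ^{N₀×N₁} with all entries bounded by K in absolute value, and X ∈ ℝ^{m×N₀} with nonzero columns. Apply the stochastic path-following algorithm with an unbiased stochastic pruning operator S (|S(v) − v| ≤ K) independently to each column of W, producing Q ∈ ℝ^{N₀×N₁}. Then with probability at least 1 − √2·m·N₁·N₀^{−p}, max_{i,j} |ρ((XW)_{ij}) − ρ((XQ)_{ij})| ≤ K√(2Cπp log N₀)·max_{1≤i≤N₀}‖X_i‖. -/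
set_option maxHeartbeats 1000000


open MeasureTheory ProbabilityTheory Real

noncomputable section




lemma integrable_of_ae_bound {Ω : Type*} [MeasurableSpace Ω] {μ : Measure Ω}
    [IsProbabilityMeasure μ] {f : Ω → ℝ} (hf : Measurable f) {B : ℝ}
    (hB : ∀ᵐ ω ∂μ, ‖f ω‖ ≤ B) : Integrable f μ :=
  (integrable_const B).mono' hf.aestronglyMeasurable hB

lemma exp_le_cosh_add {x κ : ℝ} (hx : |x| ≤ κ) (hκ : 0 < κ) (t : ℝ) :
    exp (t * x) ≤ cosh (t * κ) + (sinh (t * κ) / κ) * x := by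
  have h1 : -κ ≤ x := (abs_le.mp hx).1
  have h2 : x ≤ κ := (abs_le.mp hx).2
  have hθ0 : 0 ≤ (κ - x) / (2 * κ) := div_nonneg (by linarith) (by linarith)
  have hθ1 : 0 ≤ (κ + x) / (2 * κ) := div_nonneg (by linarith) (by linarith)
  have hsum : (κ - x) / (2 * κ) + (κ + x) / (2 * κ) = 1 := by
    field_simp
    ring
  have hcvx := convexOn_exp.2 (Set.mem_univ (-(t * κ))) (Set.mem_univ (t * κ)) hθ0 hθ1 hsum
  have harg : ((κ - x) / (2 * κ)) • (-(t * κ)) + ((κ + x) / (2 * κ)) • (t * κ) = t * x := by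
    rw [smul_eq_mul, smul_eq_mul]
    have hκ' : (κ:ℝ) ≠ 0 := ne_of_gt hκ
    field_simp
    ring
  rw [harg] at hcvx
  refine hcvx.trans (le_of_eq ?_)
  rw [smul_eq_mul, smul_eq_mul, Real.cosh_eq, Real.sinh_eq]
  have hκ' : (κ:ℝ) ≠ 0 := ne_of_gt hκ
  field_simp
  ring

/-- Conditional Hoeffding-type bound for a bounded, conditionally centered variable. -/
lemma condexp_exp_le {Ω : Type*} [m0 : MeasurableSpace Ω] {μ : Measure Ω}
    [IsProbabilityMeasure μ] {m : MeasurableSpace Ω} (hm : m ≤ m0)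
    {Z : Ω → ℝ} (hZ : Measurable[m0] Z) {κ : ℝ} (hκ : 0 ≤ κ)
    (hb : ∀ᵐ ω ∂μ, |Z ω| ≤ κ) (hmean : μ[Z|m] =ᵐ[μ] 0) (t : ℝ) :
    μ[fun ω => exp (t * Z ω)|m] ≤ᵐ[μ] fun _ => exp (t ^ 2 * κ ^ 2 / 2) := by
  rcases eq_or_lt_of_le hκ with hκ0 | hκpos
  · -- κ = 0 : Z = 0 a.e.
    have hZ0 : (fun ω => exp (t * Z ω)) =ᵐ[μ] fun _ => (1 : ℝ) := by
      filter_upwards [hb] with ω hω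
      have : Z ω = 0 := by rw [← hκ0] at hω; exact abs_eq_zero.mp (le_antisymm hω (abs_nonneg _))
      simp [this]
    calc μ[fun ω => exp (t * Z ω)|m] =ᵐ[μ] μ[fun _ => (1:ℝ)|m] := condExp_congr_ae hZ0
      _ =ᵐ[μ] fun _ => (1:ℝ) := Filter.EventuallyEq.of_eq (condExp_const hm (1:ℝ))
      _ ≤ᵐ[μ] fun _ => exp (t ^ 2 * κ ^ 2 / 2) := by
          refine Filter.Eventually.of_forall fun ω => ?_
          rw [show (1:ℝ) = exp 0 by simp]
          exact exp_le_exp.mpr (by positivity)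
  · -- κ > 0
    have hZint : Integrable Z μ :=
      (integrable_const κ).mono' hZ.aestronglyMeasurable (by simpa using hb)
    have hint1 : Integrable (fun ω => exp (t * Z ω)) μ := by
      refine (integrable_const (exp (|t| * κ))).mono'
        ((measurable_const.mul hZ).exp).aestronglyMeasurable ?_
      filter_upwards [hb] with ω hω
      rw [Real.norm_eq_abs, abs_exp]
      refine exp_le_exp.mpr ((le_abs_self _).trans ((abs_mul t (Z ω)).le.trans ?_))
      exact mul_le_mul_of_nonneg_left hω (abs_nonneg t)
    have hint2 : Integrable (fun ω => cosh (t * κ) + (sinh (t * κ) / κ) * Z ω) μ :=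
      (integrable_const _).add (hZint.const_mul _)
    have hptwise : (fun ω => exp (t * Z ω)) ≤ᵐ[μ]
        fun ω => cosh (t * κ) + (sinh (t * κ) / κ) * Z ω := by
      filter_upwards [hb] with ω hω
      exact exp_le_cosh_add hω hκpos t
    calc μ[fun ω => exp (t * Z ω)|m]
        ≤ᵐ[μ] μ[fun ω => cosh (t * κ) + (sinh (t * κ) / κ) * Z ω|m] :=
          condExp_mono hint1 hint2 hptwise
      _ =ᵐ[μ] fun _ => cosh (t * κ) := by
          have h1 : (fun ω => cosh (t * κ) + (sinh (t * κ) / κ) * Z ω)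
              = (fun _ => cosh (t * κ)) + (sinh (t * κ) / κ) • Z := by
            funext ω; simp [smul_eq_mul]
          rw [h1]
          calc μ[(fun _ => cosh (t * κ)) + (sinh (t * κ) / κ) • Z|m]
              =ᵐ[μ] μ[fun _ => cosh (t * κ)|m] + μ[(sinh (t * κ) / κ) • Z|m] :=
                condExp_add (integrable_const _) (hZint.smul _) m
            _ =ᵐ[μ] (fun _ => cosh (t * κ)) + (sinh (t * κ) / κ) • μ[Z|m] :=
                Filter.EventuallyEq.add (Filter.EventuallyEq.of_eq (condExp_const hm _))
                  (condExp_smul _ _ m)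
            _ =ᵐ[μ] fun _ => cosh (t * κ) := by
                filter_upwards [hmean] with ω hω
                simp [hω]
      _ ≤ᵐ[μ] fun _ => exp (t ^ 2 * κ ^ 2 / 2) := by
          refine Filter.Eventually.of_forall fun ω => ?_
          refine (Real.cosh_le_exp_half_sq (t * κ)).trans (exp_le_exp.mpr (le_of_eq ?_))
          ring
/-- MGF bound for a sum of bounded conditionally-centered increments. -/
lemma mgf_sum_le {Ω : Type*} [m0 : MeasurableSpace Ω] {μ : Measure Ω}
    [IsProbabilityMeasure μ] (N : ℕ) (Z : ℕ → Ω → ℝ) (κ : ℕ → ℝ)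
    (F : ℕ → MeasurableSpace Ω) (hF : ∀ n, F n ≤ m0)
    (hZmeas : ∀ n, Measurable[m0] (Z n))
    (hκ : ∀ n, 0 ≤ κ n)
    (hZbd : ∀ n, 1 ≤ n → n ≤ N → ∀ᵐ ω ∂μ, |Z n ω| ≤ κ n)
    (hZmean : ∀ n, 1 ≤ n → n ≤ N → μ[Z n|F n] =ᵐ[μ] 0)
    (hSmeas : ∀ n, 1 ≤ n → n ≤ N →
      Measurable[F n] (fun ω => ∑ s ∈ Finset.Icc 1 (n - 1), Z s ω)) :
    ∀ n, n ≤ N → ∀ t : ℝ,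
      ∫ ω, exp (t * ∑ s ∈ Finset.Icc 1 n, Z s ω) ∂μ ≤
        exp (t ^ 2 * (∑ s ∈ Finset.Icc 1 n, κ s ^ 2) / 2) := by
  -- a.e. all the bounds hold
  have hball : ∀ᵐ ω ∂μ, ∀ s, 1 ≤ s → s ≤ N → |Z s ω| ≤ κ s := by
    rw [ae_all_iff]
    intro s
    by_cases hs : 1 ≤ s ∧ s ≤ N
    · filter_upwards [hZbd s hs.1 hs.2] with ω h h1 h2; exact h
    · filter_upwards with ω h1 h2; exact absurd ⟨h1, h2⟩ hs
  -- partial sums are a.e. bounded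
  have hSbd : ∀ n, n ≤ N → ∀ᵐ ω ∂μ,
      |∑ s ∈ Finset.Icc 1 n, Z s ω| ≤ ∑ s ∈ Finset.Icc 1 n, κ s := by
    intro n hn
    filter_upwards [hball] with ω hω
    refine (Finset.abs_sum_le_sum_abs _ _).trans (Finset.sum_le_sum fun s hs => ?_)
    obtain ⟨h1, h2⟩ := Finset.mem_Icc.mp hs
    exact hω s h1 (h2.trans hn)
  have hexpint : ∀ n, n ≤ N → ∀ t : ℝ,
      Integrable (fun ω => exp (t * ∑ s ∈ Finset.Icc 1 n, Z s ω)) μ := by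
    intro n hn t
    refine (integrable_const (exp (|t| * ∑ s ∈ Finset.Icc 1 n, κ s))).mono'
      ((measurable_const.mul (Finset.measurable_sum _ fun s _ => hZmeas s)).exp).aestronglyMeasurable ?_
    filter_upwards [hSbd n hn] with ω hω
    rw [Real.norm_eq_abs, abs_exp]
    refine exp_le_exp.mpr ((le_abs_self _).trans ((abs_mul _ _).le.trans ?_))
    exact mul_le_mul_of_nonneg_left hω (abs_nonneg t)
  intro n
  induction n with
  | zero => intro _ t; simp
  | succ n ih =>
    intro hn t
    have hn' : n ≤ N := (Nat.le_succ n).trans hn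
    have h1n : 1 ≤ n + 1 := Nat.succ_le_succ (Nat.zero_le n)
    -- split the sum
    have hsplit : ∀ ω : Ω, ∑ s ∈ Finset.Icc 1 (n + 1), Z s ω
        = (∑ s ∈ Finset.Icc 1 n, Z s ω) + Z (n + 1) ω := fun ω =>
      Finset.sum_Icc_succ_top h1n _
    set f : Ω → ℝ := fun ω => exp (t * ∑ s ∈ Finset.Icc 1 n, Z s ω) with hf
    set g : Ω → ℝ := fun ω => exp (t * Z (n + 1) ω) with hg
    have hfg : (fun ω => exp (t * ∑ s ∈ Finset.Icc 1 (n + 1), Z s ω)) = f * g := by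
      funext ω
      simp only [hf, hg, Pi.mul_apply, hsplit ω, mul_add, exp_add]
    have hfmeas : Measurable[F (n + 1)] f := by
      have := hSmeas (n + 1) h1n hn
      simp only [Nat.add_sub_cancel] at this
      exact Measurable.exp (measurable_const.mul this)
    have hgint : Integrable g μ := by
      refine (integrable_const (exp (|t| * κ (n+1)))).mono'
        ((measurable_const.mul (hZmeas (n+1))).exp).aestronglyMeasurable ?_
      filter_upwards [hZbd (n+1) h1n hn] with ω hω
      rw [Real.norm_eq_abs, abs_exp]
      refine exp_le_exp.mpr ((le_abs_self _).trans ((abs_mul _ _).le.trans ?_))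
      exact mul_le_mul_of_nonneg_left hω (abs_nonneg t)
    have hfgint : Integrable (f * g) μ := by
      rw [← hfg]; exact hexpint (n+1) hn t
    have hfint : Integrable f μ := hexpint n hn' t
    -- conditional expectation step
    have step1 : ∫ ω, (f * g) ω ∂μ = ∫ ω, (f * μ[g|F (n+1)]) ω ∂μ := by
      rw [← integral_condExp (hF (n+1)) (f := f * g)]
      exact integral_congr_ae (condExp_mul_of_stronglyMeasurable_left hfmeas.stronglyMeasurable hfgint hgint)
    have hcond := condexp_exp_le (hF (n+1)) (hZmeas (n+1)) (hκ (n+1))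
      (hZbd (n+1) h1n hn) (hZmean (n+1) h1n hn) t
    have step2 : ∫ ω, (f * μ[g|F (n+1)]) ω ∂μ ≤
        ∫ ω, f ω * exp (t ^ 2 * κ (n+1) ^ 2 / 2) ∂μ := by
      refine integral_mono_of_nonneg ?_ (hfint.mul_const _) ?_
      · have hgnn : 0 ≤ᵐ[μ] g := Filter.Eventually.of_forall fun ω => (exp_pos _).le
        filter_upwards [condExp_nonneg hgnn (m := F (n+1))] with ω hω
        exact mul_nonneg (exp_pos _).le hω
      · filter_upwards [hcond] with ω hω
        exact mul_le_mul_of_nonneg_left hω (exp_pos _).le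
    calc ∫ ω, exp (t * ∑ s ∈ Finset.Icc 1 (n + 1), Z s ω) ∂μ
        = ∫ ω, (f * g) ω ∂μ := by rw [hfg]
      _ = ∫ ω, (f * μ[g|F (n+1)]) ω ∂μ := step1
      _ ≤ ∫ ω, f ω * exp (t ^ 2 * κ (n+1) ^ 2 / 2) ∂μ := step2
      _ = (∫ ω, f ω ∂μ) * exp (t ^ 2 * κ (n+1) ^ 2 / 2) := integral_mul_const _ _
      _ ≤ exp (t ^ 2 * (∑ s ∈ Finset.Icc 1 n, κ s ^ 2) / 2)
            * exp (t ^ 2 * κ (n+1) ^ 2 / 2) := by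
          refine mul_le_mul_of_nonneg_right (ih hn' t) (exp_pos _).le
      _ = exp (t ^ 2 * (∑ s ∈ Finset.Icc 1 (n+1), κ s ^ 2) / 2) := by
          rw [← exp_add, Finset.sum_Icc_succ_top h1n]
          congr 1
          ring


/-- Two-sided Chernoff bound from a sub-Gaussian MGF estimate. -/
lemma two_sided_chernoff {Ω : Type*} [m0 : MeasurableSpace Ω] {μ : Measure Ω}
    [IsProbabilityMeasure μ] {Y : Ω → ℝ} (hY : Measurable Y)
    {σ2 : ℝ} (hσ : 0 < σ2)
    (hint : ∀ t : ℝ, Integrable (fun ω => exp (t * Y ω)) μ)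
    (hmgf : ∀ t : ℝ, ∫ ω, exp (t * Y ω) ∂μ ≤ exp (t ^ 2 * σ2 / 2))
    {η : ℝ} (hη : 0 ≤ η) :
    (μ {ω | η < |Y ω|}).toReal ≤ 2 * exp (-η ^ 2 / (2 * σ2)) := by
  set t := η / σ2 with ht
  have ht0 : 0 ≤ t := div_nonneg hη hσ.le
  have key : ∀ (X : Ω → ℝ), Measurable X → (∀ s : ℝ, Integrable (fun ω => exp (s * X ω)) μ) →
      (∀ s : ℝ, ∫ ω, exp (s * X ω) ∂μ ≤ exp (s ^ 2 * σ2 / 2)) →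
      (μ {ω | η ≤ X ω}).toReal ≤ exp (-η ^ 2 / (2 * σ2)) := by
    intro X hXm hXint hXmgf
    have h := measure_ge_le_exp_mul_mgf (μ := μ) (X := X) (t := t) η ht0 (hXint t)
    refine h.trans ?_
    have hmgf' : mgf X μ t ≤ exp (t ^ 2 * σ2 / 2) := hXmgf t
    calc exp (-t * η) * mgf X μ t ≤ exp (-t * η) * exp (t ^ 2 * σ2 / 2) :=
          mul_le_mul_of_nonneg_left hmgf' (exp_pos _).le
      _ = exp (-t * η + t ^ 2 * σ2 / 2) := (exp_add _ _).symm
      _ = exp (-η ^ 2 / (2 * σ2)) := by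
          congr 1
          rw [ht]
          field_simp
          ring
  have h1 : (μ {ω | η ≤ Y ω}).toReal ≤ exp (-η ^ 2 / (2 * σ2)) :=
    key Y hY hint hmgf
  have h2 : (μ {ω | η ≤ -Y ω}).toReal ≤ exp (-η ^ 2 / (2 * σ2)) := by
    refine key (fun ω => -Y ω) hY.neg (fun s => ?_) (fun s => ?_)
    · simpa [mul_comm, neg_mul, mul_neg] using hint (-s)
    · have := hmgf (-s)
      simp only [neg_mul, mul_neg, neg_neg] at this ⊢
      calc ∫ ω, exp (-(s * Y ω)) ∂μ = ∫ ω, exp (-s * Y ω) ∂μ := by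
            congr 1; funext ω; ring_nf
        _ ≤ exp ((-s) ^ 2 * σ2 / 2) := hmgf (-s)
        _ = exp (s ^ 2 * σ2 / 2) := by congr 1; ring
  have hsub : {ω | η < |Y ω|} ⊆ {ω | η ≤ Y ω} ∪ {ω | η ≤ -Y ω} := by
    intro ω hω
    simp only [Set.mem_setOf_eq, Set.mem_union]
    rcases abs_cases (Y ω) with ⟨h, _⟩ | ⟨h, _⟩
    · left; rw [← h]; exact le_of_lt hω
    · right; rw [← h]; exact le_of_lt hω
  have hm1 : MeasurableSet {ω | η ≤ Y ω} := measurableSet_le measurable_const hY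
  have hm2 : MeasurableSet {ω | η ≤ -Y ω} := measurableSet_le measurable_const hY.neg
  calc (μ {ω | η < |Y ω|}).toReal
      ≤ (μ ({ω | η ≤ Y ω} ∪ {ω | η ≤ -Y ω})).toReal := by
        refine ENNReal.toReal_mono (measure_ne_top _ _) (measure_mono hsub)
    _ ≤ (μ {ω | η ≤ Y ω}).toReal + (μ {ω | η ≤ -Y ω}).toReal := by
        rw [← ENNReal.toReal_add (measure_ne_top _ _) (measure_ne_top _ _)]
        exact ENNReal.toReal_mono (by
          exact ENNReal.add_ne_top.mpr ⟨measure_ne_top _ _, measure_ne_top _ _⟩)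
          (measure_union_le _ _)
    _ ≤ 2 * exp (-η ^ 2 / (2 * σ2)) := by linarith


/-- One backward step of the direction sequence. -/
def pstep {m : ℕ} (C : ℝ) (X : ℕ → Fin m → ℝ) (t : ℕ) (w : Fin m → ℝ) : Fin m → ℝ :=
  w - ((∑ i', X t i' * w i') / (C * ∑ i', X t i' ^ 2)) • X t

/-- Backward direction sequence started from a standard basis vector. -/
def pdir {m : ℕ} (C : ℝ) (X : ℕ → Fin m → ℝ) (N₀ : ℕ) (i : Fin m) : ℕ → (Fin m → ℝ)
  | 0 => fun k => if k = i then 1 else 0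
  | (k + 1) => pstep C X (N₀ - k) (pdir C X N₀ i k)



/-- Layer-level pruning bound with a 1-Lipschitz activation `ρ`. The stochastic
path-following algorithm with an unbiased pruning operator (a.s. error at most `K`)
is applied independently to each of the `N₁` columns of `W` (entries bounded by `K`),
producing `Q`. Then with probability at least `1 − √2·m·N₁·N₀^{−p}`,
`max_{i,j} |ρ((XW)_{ij}) − ρ((XQ)_{ij})| ≤ K√(2Cπp log N₀)·max_{1≤i≤N₀}‖X_i‖`. -/
theorem layer_pruning_error_bound {m N₀ N₁ : ℕ} {Ω : Type*} [MeasurableSpace Ω]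
    (μ : Measure Ω) [IsProbabilityMeasure μ]
    (hN₀ : 1 ≤ N₀) (hN₁ : 1 ≤ N₁)
    (ρ : ℝ → ℝ) (hρ : LipschitzWith 1 ρ)
    (C p K : ℝ) (hC : 1 ≤ C) (hp : 1 ≤ p) (hK : 0 < K)
    (W : ℕ → ℕ → ℝ) (hW : ∀ t j, 1 ≤ t → t ≤ N₀ → 1 ≤ j → j ≤ N₁ → |W t j| ≤ K)
    (X : ℕ → Fin m → ℝ) (hX : ∀ t, 1 ≤ t → t ≤ N₀ → X t ≠ 0)
    -- `q t j` is the pruned weight in row `t`, column `j`; `u · j` the accumulated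
    -- error of column `j`
    (q : ℕ → ℕ → Ω → ℝ) (hq : ∀ t j, Measurable (q t j))
    (u : ℕ → ℕ → Ω → Fin m → ℝ) (hu0 : ∀ j, u 0 j = 0)
    (v : ℕ → ℕ → Ω → ℝ)
    (hv : ∀ t j ω, v t j ω =
      W t j + (∑ i, u (t - 1) j ω i * X t i) / (C * ∑ i, X t i ^ 2))
    (hu : ∀ t j, 1 ≤ t →
      u t j = fun ω => u (t - 1) j ω + (W t j - q t j ω) • X t)
    (hbdd : ∀ t j, 1 ≤ t → t ≤ N₀ → 1 ≤ j → j ≤ N₁ →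
      ∀ᵐ ω ∂μ, |q t j ω - v t j ω| ≤ K)
    (past : ℕ → ℕ → MeasurableSpace Ω)
    (hpast : ∀ t j, past t j = ⨆ s ∈ Set.Ico 1 t,
      MeasurableSpace.comap (q s j) (inferInstance : MeasurableSpace ℝ))
    (hmean : ∀ t j, 1 ≤ t → t ≤ N₀ → 1 ≤ j → j ≤ N₁ →
      μ[(fun ω => q t j ω - v t j ω) | past t j] =ᵐ[μ] 0)
    (Mx : ℕ → ℝ)
    (hMx : ∀ t (ht : 1 ≤ t), Mx t =
      (Finset.Icc 1 t).sup' (Finset.nonempty_Icc.mpr ht) (fun i => ∑ j, X i j ^ 2)) :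
    1 - Real.sqrt 2 * m * N₁ * (N₀ : ℝ) ^ (-p) ≤
    (μ {ω | ∀ j, 1 ≤ j → j ≤ N₁ → ∀ i : Fin m,
        |ρ (∑ t ∈ Finset.Icc 1 N₀, X t i * W t j)
          - ρ (∑ t ∈ Finset.Icc 1 N₀, X t i * q t j ω)| ≤
        K * Real.sqrt (2 * C * π * p * Real.log N₀) * Real.sqrt (Mx N₀)}).toReal := by
  classical
  -- abbreviations
  set θ : ℝ := K * Real.sqrt (2 * C * π * p * Real.log N₀) * Real.sqrt (Mx N₀) with hθ
  set E : Set Ω := {ω | ∀ j, 1 ≤ j → j ≤ N₁ → ∀ i : Fin m,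
      |ρ (∑ t ∈ Finset.Icc 1 N₀, X t i * W t j)
        - ρ (∑ t ∈ Finset.Icc 1 N₀, X t i * q t j ω)| ≤ θ} with hE
  -- the bad sets
  set B : ℕ → Fin m → Set Ω := fun j i => {ω | θ <
      |(∑ t ∈ Finset.Icc 1 N₀, X t i * W t j)
        - ∑ t ∈ Finset.Icc 1 N₀, X t i * q t j ω|} with hB
  have hBmeas : ∀ j i, MeasurableSet (B j i) := by
    intro j i
    have hmeasf : Measurable (fun ω => (∑ t ∈ Finset.Icc 1 N₀, X t i * W t j)
        - ∑ t ∈ Finset.Icc 1 N₀, X t i * q t j ω) := by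
      exact measurable_const.sub (Finset.measurable_sum _ fun t _ => (hq t j).const_mul _)
    exact measurableSet_lt measurable_const hmeasf.abs
  have hEmeas : MeasurableSet E := by
    have : E = ⋂ j, ⋂ (_ : 1 ≤ j), ⋂ (_ : j ≤ N₁), ⋂ i : Fin m,
        {ω | |ρ (∑ t ∈ Finset.Icc 1 N₀, X t i * W t j)
          - ρ (∑ t ∈ Finset.Icc 1 N₀, X t i * q t j ω)| ≤ θ} := by
      ext ω; simp [hE, Set.mem_iInter]
    rw [this]
    refine MeasurableSet.iInter fun j => MeasurableSet.iInter fun _ =>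
      MeasurableSet.iInter fun _ => MeasurableSet.iInter fun i => ?_
    have hmeasf : Measurable (fun ω => |ρ (∑ t ∈ Finset.Icc 1 N₀, X t i * W t j)
        - ρ (∑ t ∈ Finset.Icc 1 N₀, X t i * q t j ω)|) := by
      exact (measurable_const.sub (hρ.continuous.measurable.comp
        (Finset.measurable_sum _ fun t _ => (hq t j).const_mul _))).abs
    exact measurableSet_le hmeasf measurable_const
  -- complement is contained in union of bad sets
  have hEc : Eᶜ ⊆ ⋃ j ∈ Finset.Icc 1 N₁, ⋃ i : Fin m, B j i := by
    intro ω hω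
    simp only [hE, Set.mem_compl_iff, Set.mem_setOf_eq, not_forall] at hω
    obtain ⟨j, h1, h2, i, hi⟩ := hω
    push_neg at hi
    simp only [Set.mem_iUnion]
    refine ⟨j, Finset.mem_Icc.mpr ⟨h1, h2⟩, i, ?_⟩
    simp only [hB, Set.mem_setOf_eq]
    refine lt_of_lt_of_le hi ?_
    have := hρ.dist_le_mul (∑ t ∈ Finset.Icc 1 N₀, X t i * W t j)
      (∑ t ∈ Finset.Icc 1 N₀, X t i * q t j ω)
    simpa [Real.dist_eq] using this
  -- per-pair tail bound
  have tail : ∀ j, 1 ≤ j → j ≤ N₁ → ∀ i : Fin m,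
      (μ (B j i)).toReal ≤ Real.sqrt 2 * (N₀ : ℝ) ^ (-p) := by
    -- shared positivity facts
    intro j h1j h2j i
    have hm0 : 0 < m := by
      rcases Nat.eq_zero_or_pos m with hm | hm
      · exfalso
        apply hX 1 le_rfl hN₀
        funext i0
        exact absurd i0.isLt (by omega)
      · exact hm
    have hnX : ∀ t, 1 ≤ t → t ≤ N₀ → 0 < ∑ i', X t i' ^ 2 := by
      intro t ht1 ht2
      obtain ⟨a, ha⟩ := Function.ne_iff.mp (hX t ht1 ht2)
      refine Finset.sum_pos' (fun _ _ => sq_nonneg _) ⟨a, Finset.mem_univ a, ?_⟩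
      have : X t a ≠ 0 := by simpa using ha
      positivity
    have hMle : ∀ t, 1 ≤ t → t ≤ N₀ → (∑ i', X t i' ^ 2) ≤ Mx N₀ := by
      intro t ht1 ht2
      rw [hMx N₀ hN₀]
      exact Finset.le_sup' (f := fun t' => ∑ j' : Fin m, X t' j' ^ 2) (Finset.mem_Icc.mpr ⟨ht1, ht2⟩)
    have hM2pos : 0 < Mx N₀ := lt_of_lt_of_le (hnX 1 le_rfl hN₀) (hMle 1 le_rfl hN₀)
    have hlog0 : 0 ≤ Real.log N₀ := Real.log_nonneg (by exact_mod_cast hN₀)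
    -- filtration facts
    have hpast_le : ∀ n, past n j ≤ (inferInstance : MeasurableSpace Ω) := by
      intro n
      rw [hpast]
      exact iSup₂_le fun s _ => measurable_iff_comap_le.mp (hq s j)
    have hqpast : ∀ n s, 1 ≤ s → s < n → Measurable[past n j] (q s j) := by
      intro n s hs1 hsn
      rw [measurable_iff_comap_le, hpast n j]
      exact le_iSup₂ (f := fun s' (_ : s' ∈ Set.Ico 1 n) =>
        MeasurableSpace.comap (q s' j) inferInstance) s ⟨hs1, hsn⟩
    -- representation of the error vector
    have hurep : ∀ n ω, u n j ω = fun i' => ∑ s ∈ Finset.Icc 1 n, (W s j - q s j ω) * X s i' := by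
      intro n
      induction n with
      | zero => intro ω; rw [hu0 j]; funext i'; simp
      | succ n ih =>
        intro ω
        rw [hu (n + 1) j (Nat.succ_le_succ (Nat.zero_le n))]
        funext i'
        simp only [Nat.add_sub_cancel, Pi.add_apply, Pi.smul_apply, smul_eq_mul]
        rw [ih ω, Finset.sum_Icc_succ_top (Nat.succ_le_succ (Nat.zero_le n))]
    have humeas : ∀ n i', Measurable (fun ω => u n j ω i') := by
      intro n i'
      have h0 : (fun ω => u n j ω i')
          = fun ω => ∑ s ∈ Finset.Icc 1 n, (W s j - q s j ω) * X s i' := by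
        funext ω; rw [hurep n ω]
      rw [h0]
      exact Finset.measurable_sum _ fun s _ => (measurable_const.sub (hq s j)).mul_const _
    have hvmeas : ∀ s, Measurable (v s j) := by
      intro s
      have h0 : v s j = fun ω => W s j
          + (∑ i', u (s - 1) j ω i' * X s i') / (C * ∑ i', X s i' ^ 2) :=
        funext fun ω => hv s j ω
      rw [h0]
      exact measurable_const.add ((Finset.measurable_sum _ fun i' _ =>
        (humeas (s - 1) i').mul_const _).div_const _)
    have hupast : ∀ n k, k < n → ∀ i', Measurable[past n j] (fun ω => u k j ω i') := by
      intro n k hk i'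
      have h0 : (fun ω => u k j ω i')
          = fun ω => ∑ s ∈ Finset.Icc 1 k, (W s j - q s j ω) * X s i' := by
        funext ω; rw [hurep k ω]
      rw [h0]
      refine Finset.measurable_sum _ fun s hs => ?_
      obtain ⟨hs1, hs2⟩ := Finset.mem_Icc.mp hs
      exact (measurable_const.sub (hqpast n s hs1 (lt_of_le_of_lt hs2 hk))).mul_const _
    -- the backward direction sequence and increments
    obtain ⟨z, hzdef⟩ : ∃ z : ℕ → Fin m → ℝ, z = fun t => pdir C X N₀ i (N₀ - t) := ⟨_, rfl⟩
    obtain ⟨c, hcdef⟩ : ∃ c : ℕ → ℝ, c = fun t => ∑ i', X t i' * z t i' := ⟨_, rfl⟩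
    obtain ⟨Z, hZdef⟩ : ∃ Z : ℕ → Ω → ℝ, Z = fun s ω => (v s j ω - q s j ω) * c s := ⟨_, rfl⟩
    obtain ⟨κ, hκdef⟩ : ∃ κ : ℕ → ℝ, κ = fun s => K * |c s| := ⟨_, rfl⟩
    have hz : ∀ t, 1 ≤ t → t ≤ N₀ → z (t - 1) = pstep C X t (z t) := by
      intro t h1 h2
      simp only [hzdef]
      rw [show N₀ - (t - 1) = (N₀ - t) + 1 from by omega]
      show pstep C X (N₀ - (N₀ - t)) _ = _
      rw [show N₀ - (N₀ - t) = t from by omega]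
    have hzi : ∀ t, 1 ≤ t → t ≤ N₀ → ∀ i', z (t - 1) i'
        = z t i' - (c t / (C * ∑ i'', X t i'' ^ 2)) * X t i' := by
      intro t h1 h2 i'
      rw [hz t h1 h2]
      simp only [pstep, Pi.sub_apply, Pi.smul_apply, smul_eq_mul, hcdef]
    have hzN : z N₀ = fun k => if k = i then (1 : ℝ) else 0 := by
      simp only [hzdef, Nat.sub_self]
      rfl
    -- key identity : ⟨u n, z n⟩ = partial sum of increments
    have hsum_rep : ∀ n, n ≤ N₀ → ∀ ω,
        (∑ i', u n j ω i' * z n i') = ∑ s ∈ Finset.Icc 1 n, Z s ω := by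
      intro n
      induction n with
      | zero => intro _ ω; rw [hu0 j]; simp
      | succ n ih =>
        intro hn ω
        have hn' : n ≤ N₀ := by omega
        have h1 : 1 ≤ n + 1 := by omega
        have hvω := hv (n + 1) j ω
        simp only [Nat.add_sub_cancel] at hvω
        have hzrec := hzi (n + 1) h1 hn
        simp only [Nat.add_sub_cancel] at hzrec
        rw [hu (n + 1) j h1]
        simp only [Nat.add_sub_cancel, Pi.add_apply, Pi.smul_apply, smul_eq_mul]
        rw [Finset.sum_Icc_succ_top h1, ← ih hn' ω]
        have hL : (∑ i', (u n j ω i' + (W (n + 1) j - q (n + 1) j ω) * X (n + 1) i')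
              * z (n + 1) i')
            = (∑ i', u n j ω i' * z (n + 1) i')
              + (W (n + 1) j - q (n + 1) j ω) * c (n + 1) := by
          rw [hcdef]
          simp only []
          rw [Finset.mul_sum, ← Finset.sum_add_distrib]
          exact Finset.sum_congr rfl fun i' _ => by ring
        have hR : (∑ i', u n j ω i' * z n i')
            = (∑ i', u n j ω i' * z (n + 1) i')
              - (c (n + 1) / (C * ∑ i'', X (n + 1) i'' ^ 2))
                * (∑ i', u n j ω i' * X (n + 1) i') := by
          rw [Finset.mul_sum, ← Finset.sum_sub_distrib]
          exact Finset.sum_congr rfl fun i' _ => by rw [hzrec i']; ring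
        rw [hL, hR]
        simp only [hZdef]
        rw [hvω]
        ring
    -- conditional centering, boundedness, measurability of increments
    have hZmeas : ∀ s, Measurable (Z s) := by
      intro s
      simp only [hZdef]
      exact ((hvmeas s).sub (hq s j)).mul_const _
    have hκ0 : ∀ s, 0 ≤ κ s := by
      intro s; simp only [hκdef]; positivity
    have hZbd : ∀ s, 1 ≤ s → s ≤ N₀ → ∀ᵐ ω ∂μ, |Z s ω| ≤ κ s := by
      intro s hs1 hs2
      filter_upwards [hbdd s j hs1 hs2 h1j h2j] with ω hω
      simp only [hZdef, hκdef]
      rw [abs_mul, abs_sub_comm]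
      exact mul_le_mul_of_nonneg_right hω (abs_nonneg _)
    have hZmean : ∀ s, 1 ≤ s → s ≤ N₀ → μ[Z s|past s j] =ᵐ[μ] 0 := by
      intro s hs1 hs2
      have h0 : Z s = (-(c s)) • (fun ω => q s j ω - v s j ω) := by
        funext ω
        simp only [hZdef, Pi.smul_apply, smul_eq_mul]
        ring
      rw [h0]
      calc μ[(-(c s)) • (fun ω => q s j ω - v s j ω)|past s j]
          =ᵐ[μ] (-(c s)) • μ[(fun ω => q s j ω - v s j ω)|past s j] := condExp_smul _ _ _
        _ =ᵐ[μ] 0 := by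
            filter_upwards [hmean s j hs1 hs2 h1j h2j] with ω hω
            simp only [Pi.smul_apply, smul_eq_mul, hω, Pi.zero_apply, mul_zero]
    have hSmeas : ∀ n, 1 ≤ n → n ≤ N₀ →
        Measurable[past n j] (fun ω => ∑ s ∈ Finset.Icc 1 (n - 1), Z s ω) := by
      intro n hn1 hn2
      refine Finset.measurable_sum _ fun s hs => ?_
      obtain ⟨hs1, hs2⟩ := Finset.mem_Icc.mp hs
      have hsn : s < n := by omega
      have hvp : Measurable[past n j] (v s j) := by
        have h0 : v s j = fun ω => W s j
            + (∑ i', u (s - 1) j ω i' * X s i') / (C * ∑ i', X s i' ^ 2) :=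
          funext fun ω => hv s j ω
        rw [h0]
        refine measurable_const.add (Measurable.div_const ?_ _)
        exact Finset.measurable_sum _ fun i' _ => (hupast n (s - 1) (by omega) i').mul_const _
      simp only [hZdef]
      exact (hvp.sub (hqpast n s hs1 hsn)).mul_const _
    -- variance budget
    have hstep : ∀ s, 1 ≤ s → s ≤ N₀ →
        c s ^ 2 ≤ C * Mx N₀ * ((∑ i', z s i' ^ 2) - (∑ i', z (s - 1) i' ^ 2)) := by
      intro s hs1 hs2
      have hnXs : 0 < ∑ i'', X s i'' ^ 2 := hnX s hs1 hs2
      have hC0 : (0:ℝ) < C := by linarith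
      have hdiff : (∑ i', z s i' ^ 2) - (∑ i', z (s - 1) i' ^ 2)
          = 2 * (c s / (C * ∑ i'', X s i'' ^ 2)) * c s
            - (c s / (C * ∑ i'', X s i'' ^ 2)) ^ 2 * (∑ i'', X s i'' ^ 2) := by
        rw [← Finset.sum_sub_distrib]
        have h0 : ∀ i', z s i' ^ 2 - z (s - 1) i' ^ 2
            = 2 * (c s / (C * ∑ i'', X s i'' ^ 2)) * (X s i' * z s i')
              - (c s / (C * ∑ i'', X s i'' ^ 2)) ^ 2 * (X s i' ^ 2) := by
          intro i'
          rw [hzi s hs1 hs2 i']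
          ring
        rw [Finset.sum_congr rfl fun i' _ => h0 i', Finset.sum_sub_distrib,
          ← Finset.mul_sum, ← Finset.mul_sum]
        simp only [hcdef]
      have hd1 : c s ^ 2 / (C * ∑ i'', X s i'' ^ 2)
          ≤ (∑ i', z s i' ^ 2) - (∑ i', z (s - 1) i' ^ 2) := by
        rw [hdiff]
        have h1 : 2 * (c s / (C * ∑ i'', X s i'' ^ 2)) * c s
            - (c s / (C * ∑ i'', X s i'' ^ 2)) ^ 2 * (∑ i'', X s i'' ^ 2)
            = c s ^ 2 / (C * ∑ i'', X s i'' ^ 2) * (2 - 1 / C) := by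
          field_simp
        rw [h1]
        have h2 : (1:ℝ) ≤ 2 - 1 / C := by
          have : 1 / C ≤ 1 := by
            rw [div_le_one hC0]; exact hC
          linarith
        nlinarith [sq_nonneg (c s), le_of_lt hnXs, div_nonneg (sq_nonneg (c s))
          (le_of_lt (mul_pos hC0 hnXs))]
      have hdiff0 : 0 ≤ (∑ i', z s i' ^ 2) - (∑ i', z (s - 1) i' ^ 2) :=
        le_trans (div_nonneg (sq_nonneg _) (le_of_lt (mul_pos hC0 hnXs))) hd1
      have h3 : c s ^ 2 ≤ C * (∑ i'', X s i'' ^ 2)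
          * ((∑ i', z s i' ^ 2) - (∑ i', z (s - 1) i' ^ 2)) := by
        rw [div_le_iff₀ (mul_pos hC0 hnXs)] at hd1
        linarith [hd1]
      refine h3.trans ?_
      exact mul_le_mul_of_nonneg_right
        (mul_le_mul_of_nonneg_left (hMle s hs1 hs2) hC0.le) hdiff0
    have htel : (∑ s ∈ Finset.Icc 1 N₀, ((∑ i', z s i' ^ 2) - (∑ i', z (s - 1) i' ^ 2)))
        = (∑ i', z N₀ i' ^ 2) - (∑ i', z 0 i' ^ 2) := by
      rw [← Finset.Ico_add_one_right_eq_Icc, Finset.sum_Ico_eq_sum_range]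
      simp only [Nat.add_sub_cancel, Nat.add_sub_cancel_left]
      have h0 : ∀ k, 1 + k = k + 1 := fun k => Nat.add_comm 1 k
      rw [Finset.sum_congr rfl fun k _ => by rw [h0 k]]
      exact Finset.sum_range_sub (fun k => ∑ i', z k i' ^ 2) N₀
    have hzN1 : (∑ i', z N₀ i' ^ 2) = 1 := by
      rw [hzN]
      rw [Finset.sum_congr rfl fun i' _ => (by
        by_cases h : i' = i <;> simp [h] : (if i' = i then (1:ℝ) else 0) ^ 2
          = if i' = i then (1:ℝ) else 0)]
      simp
    have hz00 : 0 ≤ ∑ i', z 0 i' ^ 2 := Finset.sum_nonneg fun _ _ => sq_nonneg _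
    have hbudget : (∑ s ∈ Finset.Icc 1 N₀, κ s ^ 2) ≤ C * K ^ 2 * Mx N₀ := by
      have h1 : ∀ s ∈ Finset.Icc 1 N₀, κ s ^ 2
          ≤ K ^ 2 * (C * Mx N₀ * ((∑ i', z s i' ^ 2) - (∑ i', z (s - 1) i' ^ 2))) := by
        intro s hs
        obtain ⟨hs1, hs2⟩ := Finset.mem_Icc.mp hs
        have : κ s ^ 2 = K ^ 2 * c s ^ 2 := by
          simp only [hκdef]
          rw [mul_pow, sq_abs]
        rw [this]
        exact mul_le_mul_of_nonneg_left (hstep s hs1 hs2) (sq_nonneg K)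
      calc (∑ s ∈ Finset.Icc 1 N₀, κ s ^ 2)
          ≤ ∑ s ∈ Finset.Icc 1 N₀,
              K ^ 2 * (C * Mx N₀ * ((∑ i', z s i' ^ 2) - (∑ i', z (s - 1) i' ^ 2))) :=
            Finset.sum_le_sum h1
        _ = K ^ 2 * (C * Mx N₀) * ((∑ i', z N₀ i' ^ 2) - (∑ i', z 0 i' ^ 2)) := by
            rw [← Finset.mul_sum]
            rw [show (∑ s ∈ Finset.Icc 1 N₀, C * Mx N₀
                * ((∑ i', z s i' ^ 2) - (∑ i', z (s - 1) i' ^ 2)))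
              = C * Mx N₀ * ∑ s ∈ Finset.Icc 1 N₀,
                ((∑ i', z s i' ^ 2) - (∑ i', z (s - 1) i' ^ 2)) from by rw [Finset.mul_sum]]
            rw [htel]
            ring
        _ ≤ C * K ^ 2 * Mx N₀ := by
            rw [hzN1]
            nlinarith [mul_nonneg (mul_nonneg (sq_nonneg K)
              (mul_nonneg (show (0:ℝ) ≤ C by linarith) hM2pos.le)) hz00]
    -- MGF bound
    have hmgf0 := mgf_sum_le (μ := μ) N₀ Z κ (fun n => past n j) hpast_le hZmeas hκ0
      hZbd hZmean hSmeas N₀ le_rfl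
    -- integrability of the exponential moments
    have hball : ∀ᵐ ω ∂μ, ∀ s, 1 ≤ s → s ≤ N₀ → |Z s ω| ≤ κ s := by
      rw [ae_all_iff]
      intro s
      by_cases hs : 1 ≤ s ∧ s ≤ N₀
      · filter_upwards [hZbd s hs.1 hs.2] with ω h h1 h2; exact h
      · filter_upwards with ω h1 h2; exact absurd ⟨h1, h2⟩ hs
    have hYbd : ∀ᵐ ω ∂μ, |∑ s ∈ Finset.Icc 1 N₀, Z s ω| ≤ ∑ s ∈ Finset.Icc 1 N₀, κ s := by
      filter_upwards [hball] with ω hω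
      refine (Finset.abs_sum_le_sum_abs _ _).trans (Finset.sum_le_sum fun s hs => ?_)
      obtain ⟨hs1, hs2⟩ := Finset.mem_Icc.mp hs
      exact hω s hs1 hs2
    have hYmeas : Measurable (fun ω => ∑ s ∈ Finset.Icc 1 N₀, Z s ω) :=
      Finset.measurable_sum _ fun s _ => hZmeas s
    have hint : ∀ t : ℝ,
        Integrable (fun ω => exp (t * ∑ s ∈ Finset.Icc 1 N₀, Z s ω)) μ := by
      intro t
      refine (integrable_const (exp (|t| * ∑ s ∈ Finset.Icc 1 N₀, κ s))).mono'
        ((measurable_const.mul hYmeas).exp).aestronglyMeasurable ?_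
      filter_upwards [hYbd] with ω hω
      rw [Real.norm_eq_abs, abs_exp]
      refine exp_le_exp.mpr ((le_abs_self _).trans ((abs_mul _ _).le.trans ?_))
      exact mul_le_mul_of_nonneg_left hω (abs_nonneg t)
    have hσpos : (0:ℝ) < C * K ^ 2 * Mx N₀ := by
      have : (0:ℝ) < C := by linarith
      positivity
    have hmgf : ∀ t : ℝ, ∫ ω, exp (t * ∑ s ∈ Finset.Icc 1 N₀, Z s ω) ∂μ
        ≤ exp (t ^ 2 * (C * K ^ 2 * Mx N₀) / 2) := by
      intro t
      refine (hmgf0 t).trans (exp_le_exp.mpr ?_)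
      gcongr
    have hθ0 : 0 ≤ θ := by
      rw [hθ]
      positivity
    have hchern := two_sided_chernoff (μ := μ) hYmeas hσpos hint hmgf hθ0
    -- identify the bad set
    have hBeq : B j i = {ω | θ < |∑ s ∈ Finset.Icc 1 N₀, Z s ω|} := by
      ext ω
      simp only [hB, Set.mem_setOf_eq]
      have hval : (∑ t ∈ Finset.Icc 1 N₀, X t i * W t j)
          - ∑ t ∈ Finset.Icc 1 N₀, X t i * q t j ω = ∑ s ∈ Finset.Icc 1 N₀, Z s ω := by
        rw [← hsum_rep N₀ le_rfl ω]
        have h1 : (∑ t ∈ Finset.Icc 1 N₀, X t i * W t j)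
            - ∑ t ∈ Finset.Icc 1 N₀, X t i * q t j ω
            = ∑ t ∈ Finset.Icc 1 N₀, (W t j - q t j ω) * X t i := by
          rw [← Finset.sum_sub_distrib]
          exact Finset.sum_congr rfl fun t _ => by ring
        have h2 : u N₀ j ω i = ∑ t ∈ Finset.Icc 1 N₀, (W t j - q t j ω) * X t i :=
          congrFun (hurep N₀ ω) i
        have h3 : (∑ i', u N₀ j ω i' * z N₀ i') = u N₀ j ω i := by
          rw [hzN]
          rw [Finset.sum_congr rfl fun i' _ => (by
            by_cases h : i' = i <;> simp [h] : u N₀ j ω i'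
              * (if i' = i then (1:ℝ) else 0)
              = if i' = i then u N₀ j ω i' else 0)]
          simp
        rw [h1, h3, h2]
      rw [hval]
    rw [hBeq]
    rcases eq_or_lt_of_le hN₀ with hN1 | hN2
    · -- N₀ = 1 : the bound is trivial since √2 ≥ 1
      have h1 : (μ {ω | θ < |∑ s ∈ Finset.Icc 1 N₀, Z s ω|}).toReal ≤ 1 := by
        rw [show (1:ℝ) = (μ Set.univ).toReal from by simp]
        exact ENNReal.toReal_mono (measure_ne_top _ _) (measure_mono (Set.subset_univ _))
      refine h1.trans ?_
      rw [← hN1]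
      have hs2 : (1:ℝ) ≤ Real.sqrt 2 := by
        nlinarith [Real.sq_sqrt (by norm_num : (0:ℝ) ≤ 2), Real.sqrt_nonneg 2]
      simp only [Nat.cast_one, Real.one_rpow]
      linarith
    · -- N₀ ≥ 2 : use the Chernoff bound
      refine hchern.trans ?_
      have hCpos : (0:ℝ) < C := by linarith
      have hN0R : (0:ℝ) < N₀ := by positivity
      have h2N : (2:ℝ) ≤ N₀ := by exact_mod_cast hN2
      have hargs : 0 ≤ 2 * C * π * p * Real.log N₀ :=
        mul_nonneg (mul_nonneg (mul_nonneg (by linarith : (0:ℝ) ≤ 2 * C) Real.pi_pos.le)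
          (by linarith : (0:ℝ) ≤ p)) hlog0
      have hθsq : θ ^ 2 = K ^ 2 * (2 * C * π * p * Real.log N₀) * Mx N₀ := by
        rw [hθ, mul_pow, mul_pow, Real.sq_sqrt hargs, Real.sq_sqrt hM2pos.le]
      have hexp_eq : -θ ^ 2 / (2 * (C * K ^ 2 * Mx N₀)) = -(π * p * Real.log N₀) := by
        rw [hθsq]
        have hK0 : K ≠ 0 := ne_of_gt hK
        have hC0 : C ≠ 0 := ne_of_gt hCpos
        have hM0 : Mx N₀ ≠ 0 := ne_of_gt hM2pos
        field_simp
      rw [hexp_eq, Real.rpow_def_of_pos hN0R]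
      have hL2 : Real.log 2 ≤ Real.log N₀ := Real.log_le_log (by norm_num) h2N
      have hlog2 : 0 < Real.log 2 := Real.log_pos (by norm_num)
      have hπ : 3 < π := Real.pi_gt_three
      have h2e : (2:ℝ) = exp (Real.log 2) := (Real.exp_log (by norm_num)).symm
      have hs2 : Real.sqrt 2 = exp (Real.log 2 / 2) := by
        rw [show Real.log 2 / 2 = Real.log (Real.sqrt 2) from (Real.log_sqrt (by norm_num)).symm]
        exact (Real.exp_log (Real.sqrt_pos.mpr (by norm_num))).symm
      calc 2 * exp (-(π * p * Real.log N₀))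
          = exp (Real.log 2 + -(π * p * Real.log N₀)) := by
            rw [Real.exp_add, ← h2e]
        _ ≤ exp (Real.log 2 / 2 + Real.log N₀ * (-p)) := by
            rw [Real.exp_le_exp]
            have hpL : Real.log 2 ≤ p * Real.log N₀ :=
              hL2.trans (le_mul_of_one_le_left hlog0 hp)
            have h5 : 2 * (p * Real.log N₀) ≤ (π - 1) * (p * Real.log N₀) :=
              mul_le_mul_of_nonneg_right (by linarith) (le_trans hlog2.le hpL)
            nlinarith [hpL, h5, hlog2]
        _ = Real.sqrt 2 * exp (Real.log N₀ * (-p)) := by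
            rw [Real.exp_add, ← hs2]

  -- union bound
  have hEcbound : (μ Eᶜ).toReal ≤ Real.sqrt 2 * m * N₁ * (N₀ : ℝ) ^ (-p) := by
    have h1 : μ Eᶜ ≤ ∑ j ∈ Finset.Icc 1 N₁, ∑ i : Fin m, μ (B j i) := by
      refine (measure_mono hEc).trans ?_
      refine (measure_biUnion_finset_le _ _).trans ?_
      exact Finset.sum_le_sum fun j _ => measure_iUnion_fintype_le _ _
    have hne' : ∀ j ∈ Finset.Icc 1 N₁, (∑ i : Fin m, μ (B j i)) < ⊤ := by
      intro j _
      exact ENNReal.sum_lt_top.mpr fun i _ => measure_lt_top μ _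
    have hne : ∀ j ∈ Finset.Icc 1 N₁, (∑ i : Fin m, μ (B j i)) ≠ ⊤ :=
      fun j hj => (hne' j hj).ne
    have h2 : (μ Eᶜ).toReal ≤ ∑ j ∈ Finset.Icc 1 N₁, ∑ i : Fin m, (μ (B j i)).toReal := by
      refine (ENNReal.toReal_mono ((ENNReal.sum_lt_top.mpr hne').ne) h1).trans ?_
      rw [ENNReal.toReal_sum hne]
      refine le_of_eq (Finset.sum_congr rfl fun j hj => ?_)
      exact ENNReal.toReal_sum fun i _ => (measure_lt_top μ _).ne
    refine h2.trans ?_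
    have h3 : ∀ j ∈ Finset.Icc 1 N₁, ∑ i : Fin m, (μ (B j i)).toReal ≤
        m * (Real.sqrt 2 * (N₀ : ℝ) ^ (-p)) := by
      intro j hj
      obtain ⟨h1j, h2j⟩ := Finset.mem_Icc.mp hj
      calc ∑ i : Fin m, (μ (B j i)).toReal
          ≤ ∑ _i : Fin m, Real.sqrt 2 * (N₀ : ℝ) ^ (-p) :=
            Finset.sum_le_sum fun i _ => tail j h1j h2j i
        _ = m * (Real.sqrt 2 * (N₀ : ℝ) ^ (-p)) := by
            rw [Finset.sum_const, Finset.card_univ, Fintype.card_fin, nsmul_eq_mul]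
    calc ∑ j ∈ Finset.Icc 1 N₁, ∑ i : Fin m, (μ (B j i)).toReal
        ≤ ∑ _j ∈ Finset.Icc 1 N₁, (m : ℝ) * (Real.sqrt 2 * (N₀ : ℝ) ^ (-p)) :=
          Finset.sum_le_sum h3
      _ = N₁ * ((m : ℝ) * (Real.sqrt 2 * (N₀ : ℝ) ^ (-p))) := by
          rw [Finset.sum_const, Nat.card_Icc, nsmul_eq_mul]
          norm_num
      _ = Real.sqrt 2 * m * N₁ * (N₀ : ℝ) ^ (-p) := by ring
  -- conclude
  have hadd : (μ E).toReal + (μ Eᶜ).toReal = 1 := by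
    have := measure_add_measure_compl hEmeas (μ := μ)
    have h := congrArg ENNReal.toReal this
    rwa [ENNReal.toReal_add (measure_ne_top _ _) (measure_ne_top _ _), measure_univ,
      ENNReal.toReal_one] at h
  have : 1 - Real.sqrt 2 * m * N₁ * (N₀ : ℝ) ^ (-p) ≤ (μ E).toReal := by linarith
  exact this
end
end
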